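/- arXiv:1311.7238 — 8 statements merged into one kernel-verified Lean document; each statement's English description precedes it below -/
import Mathlib

section
/- Let T be a tree with vertex set V = {1,2,…,N} (N ≥ 1). For every real number t, the determinant of the N×N matrix A(t) = (t^{d_{ij}})_{i,j∈V} equals (1 − t²)^{N−1}. -/
set_option linter.unusedSectionVars false

namespace YanYehAux

open SimpleGraph Finset

variable {V : Type} [Fintype V] [DecidableEq V] {T : SimpleGraph V}

lemma exists_leaf [DecidableRel T.Adj] (hT : T.IsTree) (h2 : 2 ≤ Fintype.card V) :
    ∃ v, T.degree v = 1 := by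
  by_contra hc
  push_neg at hc
  have hdeg : ∀ v : V, 2 ≤ T.degree v := by
    intro v
    have hpos : 0 < T.degree v := by
      rw [T.degree_pos_iff_exists_adj]
      obtain ⟨w, hw⟩ := Fintype.exists_ne_of_one_lt_card h2 v
      obtain ⟨p⟩ := hT.isConnected v w
      obtain ⟨x, hadj, q, rfl⟩ := SimpleGraph.Walk.exists_eq_cons_of_ne (Ne.symm hw) p
      exact ⟨x, hadj⟩
    have := hc v
    omega
  have hsum := T.sum_degrees_eq_twice_card_edges
  have hcard := hT.card_edgeFinset
  have : 2 * Fintype.card V ≤ ∑ v : V, T.degree v := by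
    calc 2 * Fintype.card V = ∑ _v : V, 2 := by simp [mul_comm]
    _ ≤ ∑ v : V, T.degree v := Finset.sum_le_sum fun v _ => hdeg v
  omega

section Leaf
variable {v u : V} (hT : T.IsTree)

-- v is a leaf with unique neighbor u
variable (hadj : T.Adj v u) (huniq : ∀ w, T.Adj v w → w = u)

include hT hadj huniq

lemma dist_leaf {j : V} (hj : j ≠ v) : T.dist v j = T.dist u j + 1 := by
  have hconn := hT.isConnected
  have h1 : T.dist v u = 1 := SimpleGraph.dist_eq_one_iff_adj.mpr hadj
  have hle : T.dist v j ≤ T.dist u j + 1 := by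
    have := hconn.dist_triangle (u := v) (v := u) (w := j)
    omega
  have hge : T.dist u j + 1 ≤ T.dist v j := by
    obtain ⟨p, hp⟩ := hconn.exists_walk_length_eq_dist v j
    obtain ⟨x, hx, q, rfl⟩ := SimpleGraph.Walk.exists_eq_cons_of_ne (Ne.symm hj) p
    have hxu : u = x := (huniq x hx).symm
    subst hxu
    have := T.dist_le q
    simp [SimpleGraph.Walk.length_cons] at hp
    omega
  omega

lemma shortest_walk_avoids {a b : V} (ha : a ≠ v) (hb : b ≠ v)
    (p : T.Walk a b) (hp : p.length = T.dist a b) : v ∉ p.support := by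
  intro hv
  have hq := p.take_spec hv
  set q := p.takeUntil v hv with hqdef
  set r := p.dropUntil v hv with hrdef
  have hlen : q.length + r.length = p.length := by
    rw [← hq, SimpleGraph.Walk.length_append]
  -- decompose q.reverse : v → a
  obtain ⟨x, hx, q', hq'⟩ := SimpleGraph.Walk.exists_eq_cons_of_ne (Ne.symm ha) q.reverse
  have hxu : u = x := (huniq x hx).symm
  subst hxu
  obtain ⟨y, hy, r', hr'⟩ := SimpleGraph.Walk.exists_eq_cons_of_ne (Ne.symm hb) r
  have hyu : u = y := (huniq y hy).symm
  subst hyu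
  have hql : q.length = q'.length + 1 := by
    have := congrArg SimpleGraph.Walk.length hq'
    simpa using this
  have hrl : r.length = r'.length + 1 := by
    have := congrArg SimpleGraph.Walk.length hr'
    simpa using this
  have hshort := T.dist_le (q'.reverse.append r')
  simp [SimpleGraph.Walk.length_append] at hshort
  omega

end Leaf

section Induced
variable {v : V}

local notation "V'" => {w : V // w ≠ v}
local notation "T'" => T.comap (Subtype.val : {w : V // w ≠ v} → V)

lemma walk_lift : ∀ {a b : V} (p : T.Walk a b) (_ : v ∉ p.support)
    (ha : a ≠ v) (hb : b ≠ v),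
    ∃ q : SimpleGraph.Walk T' ⟨a, ha⟩ ⟨b, hb⟩, q.length = p.length := by
  intro a b p
  induction p with
  | nil => intro _ ha hb; exact ⟨SimpleGraph.Walk.nil, rfl⟩
  | @cons a c b h p ih =>
    intro hv ha hb
    simp only [SimpleGraph.Walk.support_cons, List.mem_cons] at hv
    push_neg at hv
    have hc : c ≠ v := fun hcv => hv.2 (hcv ▸ p.start_mem_support)
    obtain ⟨q, hq⟩ := ih hv.2 hc hb
    exact ⟨SimpleGraph.Walk.cons (by exact h : SimpleGraph.Adj T' ⟨a, ha⟩ ⟨c, hc⟩) q,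
      by exact congrArg (· + 1) hq⟩

lemma walk_proj {a b : V'} (q : SimpleGraph.Walk T' a b) :
    ∃ p : T.Walk a.1 b.1, p.length = q.length := by
  exact ⟨q.map (SimpleGraph.Hom.comap Subtype.val T), SimpleGraph.Walk.length_map _ _⟩

variable {u : V} (hT : T.IsTree) (hadj : T.Adj v u) (huniq : ∀ w, T.Adj v w → w = u)
include hT hadj huniq

lemma shortwalk_lift (a b : V') :
    ∃ q : SimpleGraph.Walk T' a b, q.length = T.dist a.1 b.1 := by
  obtain ⟨p, hp⟩ := hT.isConnected.exists_walk_length_eq_dist a.1 b.1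
  have hav := shortest_walk_avoids hT hadj huniq a.2 b.2 p hp
  obtain ⟨q, hq⟩ := walk_lift p hav a.2 b.2
  exact ⟨q.copy (Subtype.ext rfl) (Subtype.ext rfl), by simpa [hq] using hp⟩

lemma connected_induced : SimpleGraph.Connected T' := by
  rw [SimpleGraph.connected_iff]
  constructor
  · intro a b
    obtain ⟨q, _⟩ := shortwalk_lift hT hadj huniq a b
    exact ⟨q⟩
  · exact ⟨⟨u, fun h => T.irrefl (h ▸ hadj)⟩⟩

lemma dist_induced (a b : V') :
    SimpleGraph.dist T' a b = T.dist a.1 b.1 := by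
  refine le_antisymm ?_ ?_
  · obtain ⟨q, hq⟩ := shortwalk_lift hT hadj huniq a b
    simpa [hq] using SimpleGraph.dist_le q
  · obtain ⟨p, hp⟩ := walk_proj ((connected_induced hT hadj huniq).exists_walk_length_eq_dist a b).choose
    have h2 := ((connected_induced hT hadj huniq).exists_walk_length_eq_dist a b).choose_spec
    have := T.dist_le p
    omega

lemma acyclic_induced : SimpleGraph.IsAcyclic T' := by
  intro a c hc
  have hinj : Function.Injective (Subtype.val : V' → V) := Subtype.val_injective
  have := (SimpleGraph.Walk.map_isCycle_iff_of_injective (f := SimpleGraph.Hom.comap Subtype.val T) (p := c) hinj).mpr hc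
  exact hT.IsAcyclic _ this

lemma tree_induced : SimpleGraph.IsTree T' :=
  ⟨connected_induced hT hadj huniq, acyclic_induced hT hadj huniq⟩

end Induced

lemma tree_det : ∀ (n : ℕ) (V : Type) [Fintype V] [DecidableEq V] (T : SimpleGraph V),
    Fintype.card V = n → T.IsTree → ∀ t : ℝ,
    (Matrix.of fun i j : V => t ^ T.dist i j).det = (1 - t ^ 2) ^ (n - 1) := by
  intro n
  induction n using Nat.strong_induction_on with
  | _ n ih =>
    intro V _ _ T hcard hT t
    classical
    rcases Nat.lt_or_ge n 2 with hn | hn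
    · -- n = 0 or 1
      interval_cases n
      · exact absurd (Fintype.card_eq_zero_iff.mp hcard).elim' hT.isConnected.nonempty.elim
      · have : Subsingleton V := Fintype.card_le_one_iff_subsingleton.mp (le_of_eq hcard)
        have hu : Unique V := ⟨⟨hT.isConnected.nonempty.some⟩, fun a => Subsingleton.elim a _⟩
        rw [Matrix.det_unique]
        simp [SimpleGraph.dist_self]
    · -- main case
      obtain ⟨m, rfl⟩ : ∃ m, n = m + 1 := ⟨n - 1, by omega⟩
      obtain ⟨v, hv⟩ := exists_leaf hT (hcard ▸ hn)
      obtain ⟨u, hu⟩ := Finset.card_eq_one.mp ((T.card_neighborFinset_eq_degree v).trans hv)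
      have hadj : T.Adj v u := by
        rw [← SimpleGraph.mem_neighborFinset, hu]; exact Finset.mem_singleton_self u
      have huniq : ∀ w, T.Adj v w → w = u := fun w hw => by
        have := (SimpleGraph.mem_neighborFinset T v w).mpr hw
        rw [hu] at this; exact Finset.mem_singleton.mp this
      have hvu : v ≠ u := hadj.ne
      set e : Fin (m + 1) ≃ V :=
        (Fintype.equivFinOfCardEq hcard).symm.trans (Equiv.swap ((Fintype.equivFinOfCardEq hcard).symm 0) v) with he
      have he0 : e 0 = v := by simp [he]
      set M : Matrix V V ℝ := Matrix.of fun i j : V => t ^ T.dist i j with hM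
      have hdetM : M.det = (M.submatrix e e).det := (Matrix.det_submatrix_equiv_self e M).symm
      set A := M.submatrix e e with hA
      set i0 := e.symm u with hi0def
      have hi0 : i0 ≠ 0 := by
        intro h
        apply hvu
        rw [← he0, ← h, hi0def, Equiv.apply_symm_apply]
      set B := A.updateRow 0 (A 0 + (-t) • A i0) with hB
      have hdetB : B.det = A.det := Matrix.det_updateRow_add_smul_self A (Ne.symm hi0) (-t)
      have hB00 : B 0 0 = 1 - t ^ 2 := by
        rw [hB, Matrix.updateRow_self]
        have h1 : T.dist v v = 0 := by simp
        have h2 : T.dist u v = 1 := SimpleGraph.dist_eq_one_iff_adj.mpr hadj.symm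
        simp [hA, hM, he0, hi0def, h1, h2]
        ring
      have hB0j : ∀ j : Fin (m + 1), j ≠ 0 → B 0 j = 0 := by
        intro j hj
        rw [hB, Matrix.updateRow_self]
        have hejv : e j ≠ v := by
          rw [← he0]; exact fun h => hj (e.injective h)
        have hd := dist_leaf hT hadj huniq hejv
        simp [hA, hM, he0, hi0def, hd]
        ring
      have hBrow : ∀ (i : Fin m) (j : Fin (m + 1)), B i.succ j = A i.succ j := by
        intro i j
        rw [hB, Matrix.updateRow_ne (Fin.succ_ne_zero i)]
      -- expand along row 0
      rw [hdetM, ← hdetB, Matrix.det_succ_row_zero]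
      rw [Finset.sum_eq_single 0]
      rotate_left
      · intro j _ hj
        rw [hB0j j hj]; ring
      · intro h; exact absurd (Finset.mem_univ 0) h
      rw [hB00]
      simp only [Fin.val_zero, pow_zero, one_mul, Fin.succAbove_zero]
      -- identify the minor with the induced tree matrix
      have hcard' : Fintype.card {w : V // w ≠ v} = m := by
        have := Fintype.card_subtype_compl (· = v) (α := V)
        simp only [Fintype.card_subtype_eq] at this
        have h2 : Fintype.card {w : V // w ≠ v} = Fintype.card { x : V // ¬x = v } := rfl
        omega
      set T' := T.comap (Subtype.val : {w : V // w ≠ v} → V) with hT'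
      have htree' := tree_induced hT hadj huniq
      have hIH := ih m (by omega) {w : V // w ≠ v} T' hcard' htree' t
      have hf : ∀ i : Fin m, e i.succ ≠ v := by
        intro i h
        rw [← he0] at h
        exact Fin.succ_ne_zero i (e.injective h)
      set f0 : Fin m → {w : V // w ≠ v} := fun i => ⟨e i.succ, hf i⟩ with hf0
      have hinj : Function.Injective f0 := by
        intro a b hab
        have := e.injective (congrArg Subtype.val hab)
        exact Fin.succ_injective _ this
      have hbij : Function.Bijective f0 :=
        (Fintype.bijective_iff_injective_and_card f0).mpr ⟨hinj, by simp [hcard']⟩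
      set f : Fin m ≃ {w : V // w ≠ v} := Equiv.ofBijective f0 hbij with hfdef
      set M' : Matrix {w : V // w ≠ v} {w : V // w ≠ v} ℝ :=
        Matrix.of fun a b => t ^ SimpleGraph.dist T' a b with hM'
      have hminor : B.submatrix Fin.succ Fin.succ = M'.submatrix f f := by
        ext i j
        rw [Matrix.submatrix_apply, hBrow, Matrix.submatrix_apply]
        have hd : SimpleGraph.dist T' ⟨e i.succ, hf i⟩ ⟨e j.succ, hf j⟩
            = T.dist (e i.succ) (e j.succ) :=
          dist_induced hT hadj huniq ⟨e i.succ, hf i⟩ ⟨e j.succ, hf j⟩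
        simp [hA, hM, hM', hfdef, Equiv.ofBijective_apply, hf0, hd]
      rw [hminor, Matrix.det_submatrix_equiv_self, hIH]
      rw [← pow_succ']
      congr 1
      omega

end YanYehAux

/-- **Yan–Yeh.** For a tree `T` on vertex set `{1,…,N}` (`N ≥ 1`) with graph
distance `d i j`, the determinant of the matrix `(t ^ d i j)` equals
`(1 - t²) ^ (N - 1)`. -/
theorem yan_yeh_det (N : ℕ) (hN : 1 ≤ N) (T : SimpleGraph (Fin N)) (hT : T.IsTree) (t : ℝ) :
    (Matrix.of fun i j : Fin N => t ^ T.dist i j).det = (1 - t ^ 2) ^ (N - 1) :=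
  YanYehAux.tree_det N (Fin N) T (Fintype.card_fin N) hT t
end

section
/- Let T be a tree with vertex set V = {1,2,…,N} and let X ⊆ V be nonempty. There exists a real number t₀ such that for every real t > t₀, the real symmetric matrix A(t)[X] has exactly one positive eigenvalue and exactly |X| − 1 negative eigenvalues (counted with multiplicity); in particular A(t)[X] is nonsingular. -/
open scoped Classical
open SimpleGraph Matrix

variable {V : Type*} {T : SimpleGraph V}

lemma tree_path_length_eq_dist (hT : T.IsTree) {u v : V} (P : T.Walk u v) (hP : P.IsPath) :
    P.length = T.dist u v := by
  obtain ⟨Q, hQ, hQl⟩ := (hT.isConnected u v).exists_path_of_dist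
  have : (⟨P, hP⟩ : T.Path u v) = ⟨Q, hQ⟩ := hT.IsAcyclic.path_unique _ _
  rw [← hQl]
  exact congrArg Walk.length (congrArg Subtype.val this)

lemma tree_step (hT : T.IsTree) {u v w : V} (h : T.Adj u v) :
    T.dist w v = T.dist w u + 1 ∨ T.dist w v + 1 = T.dist w u := by
  obtain ⟨P, hP, hPl⟩ := (hT.isConnected w u).exists_path_of_dist
  by_cases hv : v ∈ P.support
  · right
    have hlen : (P.takeUntil v hv).length + (P.dropUntil v hv).length = P.length := by
      have := congrArg Walk.length (P.take_spec hv)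
      rwa [Walk.length_append] at this
    have h1 : (P.dropUntil v hv).length = T.dist v u :=
      tree_path_length_eq_dist hT _ (hP.dropUntil hv)
    have h2 : T.dist v u = 1 := dist_eq_one_iff_adj.mpr h.symm
    have h3 : (P.takeUntil v hv).length = T.dist w v :=
      tree_path_length_eq_dist hT _ (hP.takeUntil hv)
    omega
  · left
    have hP' : (P.concat h).IsPath := by
      rw [Walk.isPath_def, Walk.support_concat]
      simp only [List.concat_eq_append, List.nodup_append, List.nodup_cons, List.not_mem_nil,
        not_false_iff, List.nodup_nil, and_true, List.disjoint_singleton]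
      exact ⟨hP.support_nodup, by simp, by rintro a ha b hb rfl; simp at hb; subst hb; exact hv ha⟩
    have := tree_path_length_eq_dist hT _ hP'
    rw [Walk.length_concat] at this
    omega

/-- `j` lies "below" `i` seen from root `r`: `i` is on the geodesic from `r` to `j`. -/
def TBelow (T : SimpleGraph V) (r i j : V) : Prop :=
  T.dist r j = T.dist r i + T.dist i j

lemma tree_below_parent (hT : T.IsTree) {r i j q : V} (hadj : T.Adj i q)
    (hq : T.dist r q + 1 = T.dist r i) (hb : TBelow T r i j) :
    T.dist q j = T.dist i j + 1 := by
  have t1 : T.dist r j ≤ T.dist r q + T.dist q j := hT.isConnected.dist_triangle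
  have t2 : T.dist q j ≤ T.dist q i + T.dist i j := hT.isConnected.dist_triangle
  have hqi : T.dist q i = 1 := dist_eq_one_iff_adj.mpr hadj.symm
  unfold TBelow at hb
  omega

lemma tree_not_below_parent (hT : T.IsTree) {r i j q : V} (hadj : T.Adj i q)
    (hq : T.dist r q + 1 = T.dist r i) (hnb : ¬ TBelow T r i j) :
    T.dist q j + 1 = T.dist i j := by
  obtain ⟨Q, hQ, hQl⟩ := (hT.isConnected i j).exists_path_of_dist
  by_cases hmem : q ∈ Q.support
  · have hlen : (Q.takeUntil q hmem).length + (Q.dropUntil q hmem).length = Q.length := by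
      have := congrArg Walk.length (Q.take_spec hmem)
      rwa [Walk.length_append] at this
    have h1 : (Q.takeUntil q hmem).length = T.dist i q :=
      tree_path_length_eq_dist hT _ (hQ.takeUntil hmem)
    have h2 : (Q.dropUntil q hmem).length = T.dist q j :=
      tree_path_length_eq_dist hT _ (hQ.dropUntil hmem)
    have h3 : T.dist i q = 1 := dist_eq_one_iff_adj.mpr hadj
    omega
  · exfalso
    apply hnb
    obtain ⟨R, hR, hRl⟩ := (hT.isConnected r q).exists_path_of_dist
    have hiR : i ∉ R.support := by
      intro hi
      have h1 : (R.takeUntil i hi).length = T.dist r i :=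
        tree_path_length_eq_dist hT _ (hR.takeUntil hi)
      have h2 := R.length_takeUntil_le hi
      omega
    have hdisj : ∀ k, k ∈ R.support → k ∈ Q.support → False := by
      intro k hkR hkQ
      have hP1 : (Walk.cons hadj (R.dropUntil k hkR).reverse).IsPath := by
        refine Walk.IsPath.cons ((hR.dropUntil hkR).reverse) ?_
        rw [Walk.support_reverse]
        intro hi
        exact hiR (Walk.support_dropUntil_subset _ _ (List.mem_reverse.mp hi))
      have hP2 : (Q.takeUntil k hkQ).IsPath := hQ.takeUntil hkQ
      have heq : (⟨_, hP1⟩ : T.Path i k) = ⟨_, hP2⟩ := hT.IsAcyclic.path_unique _ _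
      have hqP1 : q ∈ (Walk.cons hadj (R.dropUntil k hkR).reverse).support := by
        rw [Walk.support_cons]
        exact List.mem_cons_of_mem _ (Walk.start_mem_support _)
      have heq' : Walk.cons hadj (R.dropUntil k hkR).reverse = Q.takeUntil k hkQ :=
        congrArg Subtype.val heq
      rw [heq'] at hqP1
      exact hmem (Walk.support_takeUntil_subset _ _ hqP1)
    have hW : ((R.concat hadj.symm).append Q).IsPath := by
      rw [Walk.isPath_def, Walk.support_append, Walk.support_concat]
      have hQnd : Q.support.Nodup := hQ.support_nodup
      have hQcons : Q.support = i :: Q.support.tail := Q.support_eq_cons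
      refine List.Nodup.append ?_ ?_ ?_
      · simp only [List.concat_eq_append, List.nodup_append, List.nodup_cons]
        exact ⟨hR.support_nodup, by simp, by rintro a ha b hb rfl; simp at hb; subst hb; exact hiR ha⟩
      · rw [hQcons] at hQnd
        exact (List.nodup_cons.mp hQnd).2
      · intro k hk hk'
        have hkQtail : k ∈ Q.support.tail := hk'
        have hknei : k ≠ i := by
          rw [hQcons] at hQnd
          intro h; subst h
          exact (List.nodup_cons.mp hQnd).1 hkQtail
        have hkQ : k ∈ Q.support := by rw [hQcons]; exact List.mem_cons_of_mem _ hkQtail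
        rcases (by simpa [List.concat_eq_append] using hk : k ∈ R.support ∨ k = i) with h | h
        · exact hdisj k h hkQ
        · exact hknei h
      
    have := tree_path_length_eq_dist hT _ hW
    rw [Walk.length_append, Walk.length_concat] at this
    unfold TBelow
    omega

lemma tb_self (hT : T.IsTree) (r i : V) : TBelow T r i i := by
  unfold TBelow; rw [SimpleGraph.dist_self]; ring

lemma tb_antisymm (hT : T.IsTree) {r i j : V} (h1 : TBelow T r i j) (h2 : TBelow T r j i) :
    i = j := by
  unfold TBelow at h1 h2
  have hc : T.dist i j = T.dist j i := SimpleGraph.dist_comm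
  have : T.dist i j = 0 := by omega
  exact (hT.isConnected.dist_eq_zero_iff).mp this

lemma tb_root (hT : T.IsTree) {r i : V} (h : TBelow T r i r) : i = r := by
  unfold TBelow at h
  rw [SimpleGraph.dist_self] at h
  have : T.dist r i = 0 := by
    have := SimpleGraph.dist_comm (G := T) (u := i) (v := r); omega
  exact ((hT.isConnected.dist_eq_zero_iff).mp this).symm

lemma tb_colA (hT : T.IsTree) {r i j s : V} (hadj : T.Adj j s)
    (hs : T.dist r s + 1 = T.dist r j) (hne : i ≠ j) (hb : TBelow T r i j) :
    TBelow T r i s ∧ T.dist i s + 1 = T.dist i j := by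
  have hx : T.dist s i + 1 = T.dist j i := by
    by_cases hb2 : TBelow T r j i
    · exact absurd (tb_antisymm hT hb2 hb) (Ne.symm hne)
    · exact tree_not_below_parent hT hadj hs hb2
  have hc1 : T.dist i s = T.dist s i := SimpleGraph.dist_comm
  have hc2 : T.dist i j = T.dist j i := SimpleGraph.dist_comm
  unfold TBelow at hb ⊢
  constructor <;> omega

lemma tb_colB (hT : T.IsTree) {r i j s : V} (hadj : T.Adj j s)
    (hs : T.dist r s + 1 = T.dist r j) (hnb : ¬ TBelow T r i j) :
    ¬ TBelow T r i s := by
  intro hbs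
  apply hnb
  have t1 : T.dist r j ≤ T.dist r i + T.dist i j := hT.isConnected.dist_triangle
  have t2 : T.dist i j ≤ T.dist i s + T.dist s j := hT.isConnected.dist_triangle
  have hsj : T.dist s j = 1 := dist_eq_one_iff_adj.mpr hadj.symm
  unfold TBelow at hbs ⊢
  omega

lemma tb_colC (hT : T.IsTree) {r i q : V} (hadj : T.Adj i q)
    (hq : T.dist r q + 1 = T.dist r i) : ¬ TBelow T r i q := by
  intro h
  unfold TBelow at h
  have : T.dist i q = 1 := dist_eq_one_iff_adj.mpr hadj
  omega

lemma exists_parent (hT : T.IsTree) (r : V) {i : V} (hi : i ≠ r) :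
    ∃ q, T.Adj i q ∧ T.dist r q + 1 = T.dist r i := by
  obtain ⟨P, hP, hPl⟩ := (hT.isConnected i r).exists_path_of_dist
  have hpos : 0 < T.dist i r := hT.isConnected.pos_dist_of_ne hi
  cases P with
  | nil => simp at hpos
  | cons h Q =>
    rename_i b
    refine ⟨b, h, ?_⟩
    have hQ : Q.length = T.dist b r := tree_path_length_eq_dist hT _ hP.of_cons
    have hlen : Q.length + 1 = T.dist i r := by
      simpa [Walk.length_cons] using hPl
    have hc1 : T.dist r b = T.dist b r := SimpleGraph.dist_comm
    have hc2 : T.dist r i = T.dist i r := SimpleGraph.dist_comm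
    omega

section Matrices

variable {N : ℕ}

noncomputable def Lmat (r : Fin N) (p : Fin N → Fin N) (t : ℝ) : Matrix (Fin N) (Fin N) ℝ :=
  Matrix.of fun i l => (if l = i then (1:ℝ) else 0) + (if i ≠ r ∧ l = p i then -t else 0)

noncomputable def Mmat (T : SimpleGraph (Fin N)) (t : ℝ) : Matrix (Fin N) (Fin N) ℝ :=
  Matrix.of fun i j => t ^ T.dist i j

noncomputable def Dmat (r : Fin N) (t : ℝ) : Matrix (Fin N) (Fin N) ℝ :=
  Matrix.diagonal (fun i => if i = r then (1:ℝ) else 1 - t^2)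

noncomputable def Bmat (T : SimpleGraph (Fin N)) (r : Fin N) (t : ℝ) :
    Matrix (Fin N) (Fin N) ℝ :=
  Matrix.of fun i k => if i = r then t ^ T.dist r k
    else if TBelow T r i k then (1 - t^2) * t ^ T.dist i k else 0

lemma Lmul (r : Fin N) (p : Fin N → Fin N) (t : ℝ) (A : Matrix (Fin N) (Fin N) ℝ)
    (i k : Fin N) :
    (Lmat r p t * A) i k = A i k + (if i = r then 0 else -t * A (p i) k) := by
  rw [Matrix.mul_apply]
  have : ∀ l, Lmat r p t i l * A l k
      = (if l = i then A l k else 0) + (if i ≠ r ∧ l = p i then -t * A l k else 0) := by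
    intro l
    simp only [Lmat, Matrix.of_apply, add_mul, ite_mul, one_mul, zero_mul]
  simp only [this, Finset.sum_add_distrib, Finset.sum_ite_eq', Finset.mem_univ, if_true]
  by_cases hi : i = r
  · simp [hi]
  · simp only [hi, if_false, ne_eq, not_false_eq_true, true_and]
    rw [Finset.sum_ite_eq' Finset.univ (p i) (fun l => -t * A l k)]
    simp

lemma mulL (r : Fin N) (p : Fin N → Fin N) (t : ℝ) (A : Matrix (Fin N) (Fin N) ℝ)
    (i j : Fin N) :
    (A * (Lmat r p t)ᵀ) i j = A i j + (if j = r then 0 else -t * A i (p j)) := by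
  rw [Matrix.mul_apply]
  have : ∀ k, A i k * (Lmat r p t)ᵀ k j
      = (if k = j then A i k else 0) + (if j ≠ r ∧ k = p j then A i k * -t else 0) := by
    intro k
    simp only [Lmat, Matrix.transpose_apply, Matrix.of_apply, mul_add, mul_ite, mul_one, mul_zero]
  simp only [this, Finset.sum_add_distrib, Finset.sum_ite_eq', Finset.mem_univ, if_true]
  by_cases hj : j = r
  · simp [hj]
  · simp only [hj, if_false, ne_eq, not_false_eq_true, true_and]
    rw [Finset.sum_ite_eq' Finset.univ (p j) (fun k => A i k * -t)]
    simp [mul_comm]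

end Matrices

section Congruence

variable {N : ℕ} {T : SimpleGraph (Fin N)} (hT : T.IsTree) (r : Fin N)
  (p : Fin N → Fin N)
  (hp : ∀ i, i ≠ r → T.Adj i (p i) ∧ T.dist r (p i) + 1 = T.dist r i) (t : ℝ)

include hT hp

lemma LM_eq_B : Lmat r p t * Mmat T t = Bmat T r t := by
  ext i k
  rw [Lmul]
  by_cases hi : i = r
  · simp [hi, Bmat, Mmat]
  · obtain ⟨hadj, hq⟩ := hp i hi
    simp only [Bmat, Mmat, Matrix.of_apply, hi, if_false]
    by_cases hb : TBelow T r i k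
    · have hd := tree_below_parent hT hadj hq hb
      rw [if_pos hb, hd]
      ring
    · have hd := tree_not_below_parent hT hadj hq hb
      rw [if_neg hb, ← hd]
      ring

lemma BL_eq_D : Bmat T r t * (Lmat r p t)ᵀ = Dmat r t := by
  ext i j
  rw [mulL]
  simp only [Bmat, Dmat, Matrix.of_apply, Matrix.diagonal_apply]
  by_cases hi : i = r
  · by_cases hj : j = r
    · subst hi; subst hj
      simp [SimpleGraph.dist_self]
    · obtain ⟨hadj, hq⟩ := hp j hj
      have hij : ¬ i = j := fun h => hj (h ▸ hi)
      subst hi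
      simp only [hj, if_false, if_true, hij]
      rw [← hq]
      ring
  · by_cases hj : j = r
    · have hij : ¬ i = j := fun h => hi (hj ▸ h)
      have hnb : ¬ TBelow T r i r := fun h => hi (tb_root hT h)
      subst hj
      simp [hi, hij, hnb]
    · obtain ⟨hadj, hq⟩ := hp j hj
      simp only [hi, hj, if_false]
      by_cases hij : i = j
      · subst hij
        have hnb : ¬ TBelow T r i (p i) := tb_colC hT hadj hq
        simp [tb_self hT r i, hnb, SimpleGraph.dist_self]
      · simp only [hij, if_false]
        by_cases hb : TBelow T r i j
        · obtain ⟨hb', hd⟩ := tb_colA hT hadj hq hij hb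
          rw [if_pos hb, if_pos hb', ← hd]
          ring
        · have hnb' := tb_colB hT hadj hq hb
          simp [hb, hnb']

lemma congruenceLML : Lmat r p t * Mmat T t * (Lmat r p t)ᵀ = Dmat r t := by
  rw [LM_eq_B hT r p hp t, BL_eq_D hT r p hp t]

lemma Lmat_bt : ((Lmat r p t)ᵀ).BlockTriangular (fun i => T.dist r i) := by
  intro i j hlt
  simp only [Matrix.transpose_apply, Lmat, Matrix.of_apply]
  have h1 : ¬ i = j := by rintro rfl; exact absurd hlt (lt_irrefl _)
  have h2 : ¬ (j ≠ r ∧ i = p j) := by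
    rintro ⟨hjr, rfl⟩
    have := (hp j hjr).2
    simp only at hlt
    omega
  rw [if_neg h1, if_neg h2, add_zero]

lemma det_Lmat : (Lmat r p t).det = 1 := by
  rw [← Matrix.det_transpose]
  rw [(Lmat_bt hT r p hp t).det]
  refine Finset.prod_eq_one ?_
  intro a _
  have : ((Lmat r p t)ᵀ.toSquareBlock (fun i => T.dist r i) a) = 1 := by
    ext i j
    simp only [Matrix.toSquareBlock_def, Matrix.transpose_apply, Lmat, Matrix.of_apply,
      Matrix.one_apply]
    have hbi : T.dist r (i : Fin N) = a := i.2
    have hbj : T.dist r (j : Fin N) = a := j.2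
    have h2 : ¬ ((j : Fin N) ≠ r ∧ (i : Fin N) = p (j : Fin N)) := by
      rintro ⟨hjr, hip⟩
      have := (hp j hjr).2
      rw [← hip] at this
      omega
    rw [if_neg h2, add_zero]
    by_cases hij : i = j
    · subst hij; simp
    · rw [if_neg (fun h => hij (Subtype.ext h)), if_neg hij]
  rw [this, Matrix.det_one]

end Congruence

section Eigen

variable {m : Type*} [Fintype m] [DecidableEq m]

lemma quadform_eq_sum_eigen (A : Matrix m m ℝ) (hA : A.IsHermitian) (x : m → ℝ) :
    x ⬝ᵥ A *ᵥ x
      = ∑ i, hA.eigenvalues i * ((star (hA.eigenvectorUnitary : Matrix m m ℝ) *ᵥ x) i)^2 := by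
  conv_lhs => rw [hA.spectral_theorem]
  rw [Unitary.conjStarAlgAut_apply]
  set U : Matrix m m ℝ := (hA.eigenvectorUnitary : Matrix m m ℝ) with hU
  have hsU : star U = Uᵀ := by
    rw [Matrix.star_eq_conjTranspose, Matrix.conjTranspose_eq_transpose_of_trivial]
  rw [← Matrix.mulVec_mulVec, ← Matrix.mulVec_mulVec, Matrix.dotProduct_mulVec]
  have hxU : x ᵥ* U = star U *ᵥ x := by rw [hsU, Matrix.mulVec_transpose]
  rw [hxU]
  set y := star U *ᵥ x with hy
  rw [RCLike.ofReal_real_eq_id]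
  simp only [Function.id_comp]
  rw [dotProduct]
  refine Finset.sum_congr rfl ?_
  intro i _
  rw [Matrix.mulVec_diagonal]
  ring

lemma star_unitary_mulVec_ne_zero (A : Matrix m m ℝ) (hA : A.IsHermitian) {x : m → ℝ}
    (hx : x ≠ 0) : star (hA.eigenvectorUnitary : Matrix m m ℝ) *ᵥ x ≠ 0 := by
  intro h
  apply hx
  have hUU : (hA.eigenvectorUnitary : Matrix m m ℝ)
      * star (hA.eigenvectorUnitary : Matrix m m ℝ) = 1 :=
    Matrix.mem_unitaryGroup_iff.mp hA.eigenvectorUnitary.2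
  calc x = ((hA.eigenvectorUnitary : Matrix m m ℝ)
        * star (hA.eigenvectorUnitary : Matrix m m ℝ)) *ᵥ x := by rw [hUU, Matrix.one_mulVec]
    _ = (hA.eigenvectorUnitary : Matrix m m ℝ)
        *ᵥ (star (hA.eigenvectorUnitary : Matrix m m ℝ) *ᵥ x) := by rw [Matrix.mulVec_mulVec]
    _ = 0 := by rw [h, Matrix.mulVec_zero]

lemma card_neg_eigen_ge (A : Matrix m m ℝ) (hA : A.IsHermitian) (W : Submodule ℝ (m → ℝ))
    (hW : ∀ x ∈ W, x ≠ 0 → x ⬝ᵥ A *ᵥ x < 0) :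
    Module.finrank ℝ W ≤ (Finset.univ.filter fun i => hA.eigenvalues i < 0).card := by
  classical
  set S := (Finset.univ.filter fun i => hA.eigenvalues i < 0) with hS
  set U : Matrix m m ℝ := (hA.eigenvectorUnitary : Matrix m m ℝ) with hU
  let F : (m → ℝ) →ₗ[ℝ] ({i // i ∈ S} → ℝ) :=
    (LinearMap.funLeft ℝ ℝ (Subtype.val)).comp (Matrix.mulVecLin (star U))
  have hinj : Function.Injective (F.comp W.subtype) := by
    rw [← LinearMap.ker_eq_bot, LinearMap.ker_eq_bot']
    intro w hw
    by_contra hw0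
    have hwne : (w : m → ℝ) ≠ 0 := fun h => hw0 (Subtype.ext h)
    have hq : (w : m → ℝ) ⬝ᵥ A *ᵥ (w : m → ℝ) < 0 := hW _ w.2 hwne
    have hzero : ∀ i ∈ S, (star U *ᵥ (w : m → ℝ)) i = 0 := by
      intro i hi
      have := congrFun hw ⟨i, hi⟩
      simpa [F, LinearMap.funLeft_apply] using this
    have hq2 : (0:ℝ) ≤ (w : m → ℝ) ⬝ᵥ A *ᵥ (w : m → ℝ) := by
      rw [quadform_eq_sum_eigen A hA]
      refine Finset.sum_nonneg ?_
      intro i _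
      by_cases hi : i ∈ S
      · rw [hzero i hi]; simp
      · have : ¬ hA.eigenvalues i < 0 := by
          simpa [hS] using hi
        have h1 : 0 ≤ hA.eigenvalues i := le_of_not_gt this
        positivity
    linarith
  have h1 := LinearMap.finrank_le_finrank_of_injective hinj
  rwa [Module.finrank_fintype_fun_eq_card, Fintype.card_coe] at h1

lemma exists_pos_eigen (A : Matrix m m ℝ) (hA : A.IsHermitian) (x : m → ℝ)
    (hx : 0 < x ⬝ᵥ A *ᵥ x) : ∃ i, 0 < hA.eigenvalues i := by
  by_contra h
  push_neg at h
  have : x ⬝ᵥ A *ᵥ x ≤ 0 := by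
    rw [quadform_eq_sum_eigen A hA]
    refine Finset.sum_nonpos ?_
    intro i _
    have := h i
    have hsq : (0:ℝ) ≤ ((star (hA.eigenvectorUnitary : Matrix m m ℝ) *ᵥ x) i)^2 := sq_nonneg _
    nlinarith
  linarith

end Eigen

lemma congr_quadform {n : Type*} [Fintype n] (B M : Matrix n n ℝ) (z : n → ℝ) :
    z ⬝ᵥ ((B * M * Bᵀ) *ᵥ z) = (Bᵀ *ᵥ z) ⬝ᵥ (M *ᵥ (Bᵀ *ᵥ z)) := by
  have h1 : (B * M * Bᵀ) *ᵥ z = B *ᵥ (M *ᵥ (Bᵀ *ᵥ z)) := by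
    rw [Matrix.mulVec_mulVec, Matrix.mulVec_mulVec, Matrix.mul_assoc]
  rw [h1, Matrix.dotProduct_mulVec, ← Matrix.mulVec_transpose]

/-- **Signature of `A(t)[X]`.** For all sufficiently large real `t`, the
symmetric matrix `(t ^ d i j)_{i,j ∈ X}` has exactly one positive eigenvalue
and `|X| − 1` negative eigenvalues (with multiplicity); in particular it is
nonsingular. -/
theorem signature_principal_minor (N : ℕ) (T : SimpleGraph (Fin N)) (hT : T.IsTree)
    (X : Finset (Fin N)) (hX : X.Nonempty) :
    ∃ t₀ : ℝ, ∀ t : ℝ, t₀ < t →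
      ∃ hA : (Matrix.of fun i j : {x // x ∈ X} => t ^ T.dist i j).IsHermitian,
        (Finset.univ.filter fun i : {x // x ∈ X} => 0 < hA.eigenvalues i).card = 1 ∧
        (Finset.univ.filter fun i : {x // x ∈ X} => hA.eigenvalues i < 0).card = X.card - 1 ∧
        (Matrix.of fun i j : {x // x ∈ X} => t ^ T.dist i j).det ≠ 0 := by
  classical
  obtain ⟨x0, hx0⟩ := hX
  set r : Fin N := x0 with hr
  have hpar : ∀ i : Fin N, ∃ q, i ≠ r → T.Adj i q ∧ T.dist r q + 1 = T.dist r i := by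
    intro i
    by_cases hi : i = r
    · exact ⟨i, fun h => absurd hi h⟩
    · obtain ⟨q, h1, h2⟩ := exists_parent hT r hi
      exact ⟨q, fun _ => ⟨h1, h2⟩⟩
  choose p hp using hpar
  refine ⟨1, fun t ht => ?_⟩
  have hdetL : (Lmat r p t).det = 1 := det_Lmat hT r p hp t
  have hUnitLT : IsUnit ((Lmat r p t)ᵀ).det := by
    rw [Matrix.det_transpose, hdetL]; exact isUnit_one
  set A : Matrix {x // x ∈ X} {x // x ∈ X} ℝ :=
    Matrix.of (fun i j : {x // x ∈ X} => t ^ T.dist i j) with hAdef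
  have hA : A.IsHermitian := by
    rw [Matrix.IsHermitian, Matrix.conjTranspose_eq_transpose_of_trivial]
    ext i j
    simp only [Matrix.transpose_apply, hAdef, Matrix.of_apply]
    rw [SimpleGraph.dist_comm]
  -- the extension-by-zero linear map
  let E : ({x // x ∈ X} → ℝ) →ₗ[ℝ] (Fin N → ℝ) :=
    { toFun := fun v i => if h : i ∈ X then v ⟨i, h⟩ else 0
      map_add' := fun u v => by funext i; by_cases h : i ∈ X <;> simp [h]
      map_smul' := fun c v => by funext i; by_cases h : i ∈ X <;> simp [h] }
  let g : ({x // x ∈ X} → ℝ) →ₗ[ℝ] ℝ :=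
    (LinearMap.proj r).comp ((Matrix.mulVecLin (((Lmat r p t)ᵀ)⁻¹)).comp E)
  set W := LinearMap.ker g with hWdef
  have hrank : X.card - 1 ≤ Module.finrank ℝ W := by
    have h1 := LinearMap.finrank_range_add_finrank_ker g
    have h2 : Module.finrank ℝ (LinearMap.range g) ≤ 1 := by
      simpa using Submodule.finrank_le (LinearMap.range g)
    have h3 : Module.finrank ℝ ({x // x ∈ X} → ℝ) = X.card := by
      rw [Module.finrank_fintype_fun_eq_card, Fintype.card_coe]
    rw [hWdef]
    omega
  have keysum : ∀ (v : {x // x ∈ X} → ℝ) (f : Fin N → ℝ),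
      ∑ i, E v i * f i = ∑ i : {x // x ∈ X}, v i * f ↑i := by
    intro v f
    have step1 : ∑ i : Fin N, E v i * f i = ∑ i ∈ X, E v i * f i := by
      refine (Finset.sum_subset X.subset_univ ?_).symm
      intro x _ hx
      simp [E, hx]
    have step2 : ∑ i ∈ X, E v i * f i = ∑ i : {x // x ∈ X}, E v ↑i * f ↑i :=
      Finset.sum_subtype X (fun x => Iff.rfl) _
    rw [step1, step2]
    refine Finset.sum_congr rfl fun i _ => ?_
    congr 1
    simp [E]
  have hEapp : ∀ (v : {x // x ∈ X} → ℝ) (i : {x // x ∈ X}), E v ↑i = v i := by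
    intro v i
    simp [E]
  have hquad : ∀ v : {x // x ∈ X} → ℝ, v ⬝ᵥ A *ᵥ v = (E v) ⬝ᵥ (Mmat T t *ᵥ (E v)) := by
    intro v
    simp only [dotProduct, Matrix.mulVec]
    rw [keysum v (fun i => ∑ j, Mmat T t i j * E v j)]
    refine Finset.sum_congr rfl fun i _ => ?_
    congr 1
    have h1 : ∀ j, Mmat T t (↑i) j * E v j = E v j * Mmat T t (↑i) j := fun j => mul_comm _ _
    rw [Finset.sum_congr rfl fun j _ => h1 j, keysum v (fun j => Mmat T t (↑i) j)]
    refine Finset.sum_congr rfl fun j _ => ?_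
    rw [mul_comm]
    rfl
  have hneg : ∀ v ∈ W, v ≠ 0 → v ⬝ᵥ A *ᵥ v < 0 := by
    intro v hv hvne
    set x := E v with hxdef
    have hxne : x ≠ 0 := by
      obtain ⟨i0, hi0⟩ : ∃ i0, v i0 ≠ 0 := by
        by_contra h; push_neg at h; exact hvne (funext h)
      intro h0
      apply hi0
      have := congrFun h0 ↑i0
      rwa [hxdef, hEapp v i0] at this
    set z := ((Lmat r p t)ᵀ)⁻¹ *ᵥ x with hzdef
    have hzr : z r = 0 := by
      have := LinearMap.mem_ker.mp hv
      simpa [g, Matrix.mulVecLin_apply] using this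
    have hLz : (Lmat r p t)ᵀ *ᵥ z = x := by
      rw [hzdef, Matrix.mulVec_mulVec, Matrix.mul_nonsing_inv _ hUnitLT, Matrix.one_mulVec]
    have hzne : z ≠ 0 := by
      intro h; rw [h, Matrix.mulVec_zero] at hLz; exact hxne hLz.symm
    have hcong : x ⬝ᵥ (Mmat T t *ᵥ x) = z ⬝ᵥ (Dmat r t *ᵥ z) := by
      rw [← hLz, ← congr_quadform (Lmat r p t) (Mmat T t) z,
        congruenceLML hT r p hp t]
    have hfinal : z ⬝ᵥ (Dmat r t *ᵥ z) < 0 := by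
      obtain ⟨i0, hi0⟩ : ∃ i0, z i0 ≠ 0 := by
        by_contra h; push_neg at h; exact hzne (funext h)
      have hi0r : i0 ≠ r := fun h => hi0 (h ▸ hzr)
      have hterm : ∀ i, z i * (Dmat r t *ᵥ z) i
          = (if i = r then 1 else 1 - t^2) * z i^2 := by
        intro i
        rw [Dmat, Matrix.mulVec_diagonal]
        ring
      rw [dotProduct]
      rw [Finset.sum_congr rfl fun i _ => hterm i]
      have hneg1 : (1:ℝ) - t^2 < 0 := by nlinarith
      have hlt : ∑ i, (if i = r then (1:ℝ) else 1 - t^2) * z i ^ 2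
          < ∑ _i : Fin N, (0:ℝ) := by
        refine Finset.sum_lt_sum ?_ ⟨i0, Finset.mem_univ _, ?_⟩
        · intro i _
          by_cases h : i = r
          · simp [h, hzr]
          · simp only [h, if_false]
            nlinarith [sq_nonneg (z i)]
        · simp only [hi0r, if_false]
          have : 0 < z i0 ^ 2 := by positivity
          nlinarith
      simpa using hlt
    calc v ⬝ᵥ A *ᵥ v = x ⬝ᵥ (Mmat T t *ᵥ x) := hquad v
      _ = z ⬝ᵥ (Dmat r t *ᵥ z) := hcong
      _ < 0 := hfinal
  have hnegcount := card_neg_eigen_ge A hA W hneg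
  have hposcount : 1 ≤ (Finset.univ.filter fun i => 0 < hA.eigenvalues i).card := by
    obtain ⟨i0p, hi0p⟩ : ∃ i, 0 < hA.eigenvalues i := by
      apply exists_pos_eigen A hA (Pi.single ⟨x0, hx0⟩ 1)
      rw [Matrix.mulVec_single_one, single_dotProduct]
      have : A ⟨x0, hx0⟩ ⟨x0, hx0⟩ = 1 := by
        simp [hAdef, SimpleGraph.dist_self]
      simp only [mul_one, one_mul, Matrix.col_apply]
      rw [this]
      norm_num
    exact Finset.card_pos.mpr ⟨i0p, Finset.mem_filter.mpr ⟨Finset.mem_univ _, hi0p⟩⟩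
  set Pos := (Finset.univ.filter fun i : {x // x ∈ X} => 0 < hA.eigenvalues i) with hPosdef
  set Neg := (Finset.univ.filter fun i : {x // x ∈ X} => hA.eigenvalues i < 0) with hNegdef
  have hdisj : Disjoint Pos Neg := by
    rw [Finset.disjoint_left]
    intro a ha ha'
    rw [hPosdef, Finset.mem_filter] at ha
    rw [hNegdef, Finset.mem_filter] at ha'
    linarith [ha.2, ha'.2]
  have hcardm : (Finset.univ : Finset {x // x ∈ X}).card = X.card := by
    rw [Finset.card_univ, Fintype.card_coe]
  have hsum : Pos.card + Neg.card ≤ X.card := by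
    rw [← Finset.card_union_of_disjoint hdisj, ← hcardm]
    exact Finset.card_le_univ _
  have hX1 : 1 ≤ X.card := Finset.card_pos.mpr ⟨x0, hx0⟩
  have hPos1 : Pos.card = 1 := by omega
  have hNeg1 : Neg.card = X.card - 1 := by omega
  have hunion : Pos ∪ Neg = Finset.univ := by
    apply Finset.eq_univ_of_card
    rw [Finset.card_union_of_disjoint hdisj, Fintype.card_coe]
    omega
  have hdet : A.det ≠ 0 := by
    have hdeteq : A.det = ∏ i, hA.eigenvalues i := by
      simpa [RCLike.ofReal_real_eq_id] using hA.det_eq_prod_eigenvalues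
    rw [hdeteq]
    refine Finset.prod_ne_zero_iff.mpr fun i _ => ?_
    have hi : i ∈ Pos ∪ Neg := hunion ▸ Finset.mem_univ i
    rcases Finset.mem_union.mp hi with h | h
    · exact ne_of_gt (Finset.mem_filter.mp h).2
    · exact ne_of_lt (Finset.mem_filter.mp h).2
  exact ⟨hA, hPos1, hNeg1, hdet⟩
end

section
/- Let W = (w_{ij}) be a symmetric real n×n matrix. Then W satisfies the four-point condition [4PC] if and only if there exists a real number t₀ such that for every real t > t₀, the real symmetric matrix (t^{w_{ij}})_{1≤i,j≤n} has at most one positive eigenvalue (counted with multiplicity). -/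
open scoped Classical

open Matrix

section Helpers

lemma dot_sum {n : ℕ} (u : Fin n → ℝ) (f : Fin n → Fin n → ℝ) :
    u ⬝ᵥ (∑ m, f m) = ∑ m, u ⬝ᵥ f m := by
  simp only [dotProduct, Finset.sum_apply, Finset.mul_sum]
  exact Finset.sum_comm

theorem expand_sum (n : ℕ) (A : Matrix (Fin n) (Fin n) ℝ) (hA : A.IsHermitian) (u v : Fin n → ℝ) :
    u ⬝ᵥ (A *ᵥ v) = ∑ m, hA.eigenvalues m * (⇑(hA.eigenvectorBasis m) ⬝ᵥ u)
      * (⇑(hA.eigenvectorBasis m) ⬝ᵥ v) := by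
  set b := hA.eigenvectorBasis with hb
  have hrep : ∀ m, b.repr ((WithLp.equiv 2 _).symm v) m = ⇑(b m) ⬝ᵥ v := by
    intro m
    rw [b.repr_apply_apply]
    simp [PiLp.inner_apply, dotProduct, RCLike.inner_apply, mul_comm]
  have h := b.sum_repr ((WithLp.equiv 2 _).symm v)
  simp only [hrep] at h
  have hv : v = ∑ m, (⇑(b m) ⬝ᵥ v) • ⇑(b m) := by
    funext i
    have h2 : (∑ x : Fin n, (⇑(b x) ⬝ᵥ v) • b x) i = ((WithLp.equiv 2 (Fin n → ℝ)).symm v) i :=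
      congrFun (congrArg (fun (x : EuclideanSpace ℝ (Fin n)) => (WithLp.equiv 2 _) x) h) i
    change _ = v i at h2
    rw [← h2, Finset.sum_apply]
    simp
  conv_lhs => rw [hv]
  rw [show (A *ᵥ ∑ m, (⇑(b m) ⬝ᵥ v) • ⇑(b m)) = ∑ m, (⇑(b m) ⬝ᵥ v) • (A *ᵥ ⇑(b m)) by
    simp only [← Matrix.mulVecLin_apply, map_sum, _root_.map_smul]]
  simp only [hb, hA.mulVec_eigenvectorBasis]
  rw [dot_sum]
  apply Finset.sum_congr rfl
  intro m _
  rw [dotProduct_smul, dotProduct_smul, smul_eq_mul, smul_eq_mul, dotProduct_comm u]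
  ring

lemma basis_dot {n : ℕ} (b : OrthonormalBasis (Fin n) ℝ (EuclideanSpace ℝ (Fin n))) (i j : Fin n) :
    ⇑(b i) ⬝ᵥ ⇑(b j) = if i = j then (1:ℝ) else 0 := by
  have h := orthonormal_iff_ite.mp b.orthonormal i j
  rw [← h]
  simp [PiLp.inner_apply, dotProduct, RCLike.inner_apply]
  exact Finset.sum_congr rfl fun x _ => mul_comm _ _

/-- Lorentzian reverse Cauchy-Schwarz. -/
lemma lorentz_cs {n : ℕ} (A : Matrix (Fin n) (Fin n) ℝ) (hA : A.IsHermitian)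
    (hcard : (Finset.univ.filter fun i => 0 < hA.eigenvalues i).card ≤ 1)
    (u v : Fin n → ℝ) (hu : 0 < u ⬝ᵥ (A *ᵥ u)) (hv : 0 < v ⬝ᵥ (A *ᵥ v)) :
    (u ⬝ᵥ (A *ᵥ u)) * (v ⬝ᵥ (A *ᵥ v)) ≤ (u ⬝ᵥ (A *ᵥ v))^2 := by
  set lam := hA.eigenvalues with hlam
  set b := hA.eigenvectorBasis with hb
  set a : Fin n → ℝ := fun m => ⇑(b m) ⬝ᵥ u with ha
  set c : Fin n → ℝ := fun m => ⇑(b m) ⬝ᵥ v with hc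
  have hqu : u ⬝ᵥ (A *ᵥ u) = ∑ m, lam m * a m * a m := expand_sum n A hA u u
  have hqv : v ⬝ᵥ (A *ᵥ v) = ∑ m, lam m * c m * c m := expand_sum n A hA v v
  have hB : u ⬝ᵥ (A *ᵥ v) = ∑ m, lam m * a m * c m := expand_sum n A hA u v
  by_cases hex : ∃ m, 0 < lam m
  · obtain ⟨m, hm⟩ := hex
    have hneg : ∀ i, i ≠ m → lam i ≤ 0 := by
      intro i him
      by_contra hpos
      push_neg at hpos
      have h2 : 1 < (Finset.univ.filter fun i => 0 < lam i).card := by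
        apply Finset.one_lt_card.mpr
        exact ⟨i, by simp [hpos], m, by simp [hm], him⟩
      omega
    have hqu_le : u ⬝ᵥ (A *ᵥ u) ≤ lam m * a m * a m := by
      rw [hqu, ← Finset.add_sum_erase _ _ (Finset.mem_univ m)]
      have h3 : ∑ i ∈ Finset.univ.erase m, lam i * a i * a i ≤ 0 := by
        apply Finset.sum_nonpos
        intro i hi
        have := hneg i (Finset.mem_erase.mp hi).1
        nlinarith [sq_nonneg (a i)]
      linarith
    have ham : a m ≠ 0 := by
      intro h0
      rw [h0] at hqu_le
      simp at hqu_le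
      linarith
    set r : ℝ := c m / a m with hr
    have hkey : ∑ i, lam i * (c i - r * a i)^2 ≤ 0 := by
      apply Finset.sum_nonpos
      intro i _
      by_cases hi : i = m
      · subst hi
        rw [hr, div_mul_cancel₀ _ ham]
        simp
      · have := hneg i hi
        nlinarith [sq_nonneg (c i - r * a i)]
    have hid : v ⬝ᵥ (A *ᵥ v) - 2*r*(u ⬝ᵥ (A *ᵥ v)) + r^2*(u ⬝ᵥ (A *ᵥ u))
        = ∑ i, lam i * (c i - r * a i)^2 := by
      rw [hqu, hqv, hB, Finset.mul_sum, Finset.mul_sum, ← Finset.sum_sub_distrib,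
        ← Finset.sum_add_distrib]
      apply Finset.sum_congr rfl
      intro i _
      ring
    have hfin : v ⬝ᵥ (A *ᵥ v) - 2*r*(u ⬝ᵥ (A *ᵥ v)) + r^2*(u ⬝ᵥ (A *ᵥ u)) ≤ 0 := by
      rw [hid]; exact hkey
    nlinarith [sq_nonneg ((u ⬝ᵥ (A *ᵥ u)) * r - (u ⬝ᵥ (A *ᵥ v)))]
  · push_neg at hex
    have : u ⬝ᵥ (A *ᵥ u) ≤ 0 := by
      rw [hqu]
      apply Finset.sum_nonpos
      intro i _
      nlinarith [sq_nonneg (a i), hex i]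
    linarith

/-- If the quadratic form is dominated by a rank-one square, at most one positive eigenvalue. -/
lemma card_le_one_of_dominated {n : ℕ} (A : Matrix (Fin n) (Fin n) ℝ) (hA : A.IsHermitian)
    (x : Fin n → ℝ) (hx : ∀ v : Fin n → ℝ, v ⬝ᵥ (A *ᵥ v) ≤ (x ⬝ᵥ v)^2) :
    (Finset.univ.filter fun i => 0 < hA.eigenvalues i).card ≤ 1 := by
  by_contra h
  push_neg at h
  obtain ⟨i, hi, j, hj, hij⟩ := Finset.one_lt_card.mp h
  rw [Finset.mem_filter] at hi hj
  have hli : 0 < hA.eigenvalues i := hi.2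
  have hlj : 0 < hA.eigenvalues j := hj.2
  set b := hA.eigenvectorBasis with hb
  set lam := hA.eigenvalues with hlam
  set βi : ℝ := x ⬝ᵥ ⇑(b i) with hβi
  set βj : ℝ := x ⬝ᵥ ⇑(b j) with hβj
  by_cases hzero : βi = 0
  · have hq : ⇑(b i) ⬝ᵥ (A *ᵥ ⇑(b i)) = lam i := by
      rw [expand_sum n A hA]
      have : ∀ m : Fin n, lam m * (⇑(b m) ⬝ᵥ ⇑(b i)) * (⇑(b m) ⬝ᵥ ⇑(b i))
          = if m = i then lam i else 0 := by
        intro m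
        rw [basis_dot]
        by_cases hmi : m = i <;> simp [hmi]
      rw [Finset.sum_congr rfl (fun m _ => this m), Finset.sum_ite_eq']
      simp
    have h2 := hx ⇑(b i)
    rw [hq, ← hβi, hzero] at h2
    simp at h2
    linarith
  · set v : Fin n → ℝ := βj • ⇑(b i) - βi • ⇑(b j) with hvdef
    have hxv : x ⬝ᵥ v = 0 := by
      rw [hvdef, dotProduct_sub, dotProduct_smul, dotProduct_smul, ← hβi, ← hβj]
      simp [smul_eq_mul]
      ring
    have hbv : ∀ m : Fin n, ⇑(b m) ⬝ᵥ v
        = βj * (if m = i then (1:ℝ) else 0) - βi * (if m = j then (1:ℝ) else 0) := by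
      intro m
      rw [hvdef, dotProduct_sub, dotProduct_smul, dotProduct_smul, basis_dot, basis_dot]
      simp [smul_eq_mul]
    have hq : v ⬝ᵥ (A *ᵥ v) = lam i * βj^2 + lam j * βi^2 := by
      rw [expand_sum n A hA]
      have hterm : ∀ m : Fin n, lam m * (⇑(b m) ⬝ᵥ v) * (⇑(b m) ⬝ᵥ v)
          = (if m = i then lam i * βj^2 else 0) + (if m = j then lam j * βi^2 else 0) := by
        intro m
        rw [hbv m]
        by_cases hmi : m = i
        · subst hmi
          simp [hij]
          ring
        · by_cases hmj : m = j
          · subst hmj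
            simp [hmi]
            ring
          · simp [hmi, hmj]
      rw [Finset.sum_congr rfl (fun m _ => hterm m), Finset.sum_add_distrib,
        Finset.sum_ite_eq', Finset.sum_ite_eq']
      simp
    have h2 := hx v
    rw [hq, hxv] at h2
    simp at h2
    have h3 : 0 < βi^2 := by
      have h4 := abs_pos.mpr hzero
      nlinarith [sq_abs βi]
    nlinarith [mul_pos hlj h3, mul_nonneg (le_of_lt hli) (sq_nonneg βj)]


lemma gram_key {n : ℕ} (y : Fin n → ℝ) :
    ∀ (N : ℕ) (s : Finset (Fin n)) (u : Fin n → Fin n → ℝ), s.card ≤ N →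
    (∀ i j, u i j = u j i) →
    (∀ i j, 0 < u i j) →
    (∀ i ∈ s, ∀ j ∈ s, u i j ≤ 1) →
    (∀ i ∈ s, ∀ j ∈ s, u i i ≤ u i j) →
    (∀ i ∈ s, ∀ j ∈ s, ∀ k ∈ s, u i j ≤ max (u i k) (u j k)) →
    0 ≤ ∑ i ∈ s, ∑ j ∈ s, y i * y j * (1 - u i j) := by
  intro N
  induction N with
  | zero =>
    intro s u hcard _ _ _ _ _
    have : s = ∅ := Finset.card_eq_zero.mp (Nat.le_zero.mp hcard)
    simp [this]
  | succ N IH =>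
    intro s u hcard hsymm hpos hone hdiag hultra
    rcases s.eq_empty_or_nonempty with hs | hs
    · simp [hs]
    · have hprod : (s ×ˢ s).Nonempty := hs.product hs
      obtain ⟨p, hpmem, hpmax⟩ := Finset.exists_max_image (s ×ˢ s) (fun p => u p.1 p.2) hprod
      obtain ⟨a, b⟩ := p
      rw [Finset.mem_product] at hpmem
      obtain ⟨ha0, hb0⟩ := hpmem
      have ha : a ∈ s := ha0
      have hb : b ∈ s := hb0
      set M : ℝ := u a b with hMdef
      have hM0 : 0 < M := hpos a b
      have hM1 : M ≤ 1 := hone a ha b hb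
      have hMmax : ∀ i ∈ s, ∀ j ∈ s, u i j ≤ M := by
        intro i hi j hj
        exact hpmax (i, j) (Finset.mem_product.mpr ⟨hi, hj⟩)
      set v : Fin n → Fin n → ℝ := fun i j => u i j / M with hvdef
      have hvsymm : ∀ i j, v i j = v j i := fun i j => by simp only [hvdef, hsymm i j]
      have hvpos : ∀ i j, 0 < v i j := fun i j => div_pos (hpos i j) hM0
      have hvone : ∀ i ∈ s, ∀ j ∈ s, v i j ≤ 1 := by
        intro i hi j hj
        exact (div_le_one hM0).mpr (hMmax i hi j hj)
      have hvdiag : ∀ i ∈ s, ∀ j ∈ s, v i i ≤ v i j := by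
        intro i hi j hj
        exact div_le_div_of_nonneg_right (hdiag i hi j hj) hM0.le
      have hvultra : ∀ i ∈ s, ∀ j ∈ s, ∀ k ∈ s, v i j ≤ max (v i k) (v j k) := by
        intro i hi j hj k hk
        rcases le_max_iff.mp (hultra i hi j hj k hk) with h | h
        · exact le_max_of_le_left (div_le_div_of_nonneg_right h hM0.le)
        · exact le_max_of_le_right (div_le_div_of_nonneg_right h hM0.le)
      -- the key nonnegativity for v
      have key2 : 0 ≤ ∑ i ∈ s, ∑ j ∈ s, y i * y j * (1 - v i j) := by
        by_cases hda : u a a = M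
        · -- row a of v is all ones on s; drop it
          have hrow : ∀ j ∈ s, v a j = 1 := by
            intro j hj
            have h1 : u a j = M := le_antisymm (hMmax a ha j hj) (hda ▸ hdiag a ha j hj)
            simp [hvdef, h1, div_self (ne_of_gt hM0)]
          have hzero : ∀ i ∈ s, ∀ j ∈ s, (i = a ∨ j = a) →
              y i * y j * (1 - v i j) = 0 := by
            intro i hi j hj hij
            rcases hij with rfl | rfl
            · rw [hrow j hj]; ring
            · rw [hvsymm, hrow i hi]; ring
          have e1 : ∑ i ∈ s, ∑ j ∈ s, y i * y j * (1 - v i j)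
              = ∑ i ∈ s.erase a, ∑ j ∈ s.erase a, y i * y j * (1 - v i j) := by
            rw [← Finset.add_sum_erase s _ ha,
              Finset.sum_eq_zero (fun j hj => hzero a ha j hj (Or.inl rfl)), zero_add]
            apply Finset.sum_congr rfl
            intro i hi
            rw [← Finset.add_sum_erase s _ ha,
              hzero i (Finset.mem_of_mem_erase hi) a ha (Or.inr rfl), zero_add]
          rw [e1]
          have hsub : ∀ x ∈ s.erase a, x ∈ s := fun x hx => Finset.mem_of_mem_erase hx
          refine IH (s.erase a) v ?_ hvsymm hvpos ?_ ?_ ?_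
          · have := Finset.card_erase_lt_of_mem ha
            omega
          · exact fun i hi j hj => hvone i (hsub i hi) j (hsub j hj)
          · exact fun i hi j hj => hvdiag i (hsub i hi) j (hsub j hj)
          · exact fun i hi j hj k hk => hvultra i (hsub i hi) j (hsub j hj) k (hsub k hk)
        · -- split s into the class of a and the rest
          have haa : u a a < M := lt_of_le_of_ne (hMmax a ha a ha) hda
          set C : Finset (Fin n) := s.filter (fun j => u a j < M) with hC
          set D : Finset (Fin n) := s.filter (fun j => ¬ u a j < M) with hD
          have hCs : ∀ x ∈ C, x ∈ s := fun x hx => (Finset.mem_filter.mp hx).1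
          have hDs : ∀ x ∈ D, x ∈ s := fun x hx => (Finset.mem_filter.mp hx).1
          have haC : a ∈ C := Finset.mem_filter.mpr ⟨ha, haa⟩
          have hbD : b ∈ D := Finset.mem_filter.mpr ⟨hb, lt_irrefl M⟩
          have hcross : ∀ i ∈ C, ∀ j ∈ D, v i j = 1 := by
            intro i hi j hj
            have hjs := hDs j hj
            have his := hCs i hi
            have huaj : u a j = M :=
              le_antisymm (hMmax a ha j hjs) (not_lt.mp (Finset.mem_filter.mp hj).2)
            have hineq := hultra a ha j hjs i his
            rw [huaj] at hineq
            have huai : u a i < M := (Finset.mem_filter.mp hi).2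
            have : M ≤ u j i := by
              rcases le_max_iff.mp hineq with h | h
              · linarith
              · exact h
            have : u i j = M := le_antisymm (hMmax i his j hjs) (by rw [hsymm]; exact this)
            simp [hvdef, this, div_self (ne_of_gt hM0)]
          have hcross' : ∀ i ∈ D, ∀ j ∈ C, v i j = 1 := by
            intro i hi j hj
            rw [hvsymm]; exact hcross j hj i hi
          have hsplit : ∀ F : Fin n → ℝ, ∑ i ∈ s, F i = ∑ i ∈ C, F i + ∑ i ∈ D, F i :=
            fun F => (Finset.sum_filter_add_sum_filter_not s _ F).symm
          have e2 : ∑ i ∈ s, ∑ j ∈ s, y i * y j * (1 - v i j)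
              = (∑ i ∈ C, ∑ j ∈ C, y i * y j * (1 - v i j))
                + (∑ i ∈ D, ∑ j ∈ D, y i * y j * (1 - v i j)) := by
            rw [hsplit (fun i => ∑ j ∈ s, y i * y j * (1 - v i j))]
            congr 1
            · apply Finset.sum_congr rfl
              intro i hi
              have hz : ∑ j ∈ D, y i * y j * (1 - v i j) = 0 :=
                Finset.sum_eq_zero (fun j hj => by rw [hcross i hi j hj]; ring)
              rw [hsplit (fun j => y i * y j * (1 - v i j)), hz, add_zero]
            · apply Finset.sum_congr rfl
              intro i hi
              have hz : ∑ j ∈ C, y i * y j * (1 - v i j) = 0 :=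
                Finset.sum_eq_zero (fun j hj => by rw [hcross' i hi j hj]; ring)
              rw [hsplit (fun j => y i * y j * (1 - v i j)), hz, zero_add]
          rw [e2]
          have hcardC : C.card ≤ N := by
            have h1 : C ⊂ s := Finset.ssubset_iff_of_subset (Finset.filter_subset _ _)
              |>.mpr ⟨b, hb, fun hbC => by
                have := (Finset.mem_filter.mp hbC).2
                exact absurd this (lt_irrefl M)⟩
            have := Finset.card_lt_card h1
            omega
          have hcardD : D.card ≤ N := by
            have h1 : D ⊂ s := Finset.ssubset_iff_of_subset (Finset.filter_subset _ _)
              |>.mpr ⟨a, ha, fun haD => (Finset.mem_filter.mp haD).2 haa⟩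
            have := Finset.card_lt_card h1
            omega
          have hIH1 := IH C v hcardC hvsymm hvpos
            (fun i hi j hj => hvone i (hCs i hi) j (hCs j hj))
            (fun i hi j hj => hvdiag i (hCs i hi) j (hCs j hj))
            (fun i hi j hj k hk => hvultra i (hCs i hi) j (hCs j hj) k (hCs k hk))
          have hIH2 := IH D v hcardD hvsymm hvpos
            (fun i hi j hj => hvone i (hDs i hi) j (hDs j hj))
            (fun i hi j hj => hvdiag i (hDs i hi) j (hDs j hj))
            (fun i hi j hj k hk => hvultra i (hDs i hi) j (hDs j hj) k (hDs k hk))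
          linarith
      -- combine
      have hpt : ∀ i j : Fin n, y i * y j * (1 - u i j)
          = y i * y j * (1 - M) + M * (y i * y j * (1 - v i j)) := by
        intro i j
        have hMne : M ≠ 0 := ne_of_gt hM0
        field_simp [hvdef]
        rw [hvdef]
        field_simp
        ring
      have e3 : ∑ i ∈ s, ∑ j ∈ s, y i * y j * (1 - u i j)
          = (∑ i ∈ s, ∑ j ∈ s, y i * y j * (1 - M))
            + ∑ i ∈ s, ∑ j ∈ s, M * (y i * y j * (1 - v i j)) := by
        rw [← Finset.sum_add_distrib]
        apply Finset.sum_congr rfl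
        intro i _
        rw [← Finset.sum_add_distrib]
        apply Finset.sum_congr rfl
        intro j _
        exact hpt i j
      have hfirst : ∑ i ∈ s, ∑ j ∈ s, y i * y j * (1 - M)
          = (1 - M) * ((∑ i ∈ s, y i) * (∑ i ∈ s, y i)) := by
        rw [Finset.sum_mul_sum, Finset.mul_sum]
        apply Finset.sum_congr rfl
        intro i _
        rw [Finset.mul_sum]
        apply Finset.sum_congr rfl
        intro j _
        ring
      have hsecond : ∑ i ∈ s, ∑ j ∈ s, M * (y i * y j * (1 - v i j))
          = M * ∑ i ∈ s, ∑ j ∈ s, y i * y j * (1 - v i j) := by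
        rw [Finset.mul_sum]
        apply Finset.sum_congr rfl
        intro i _
        rw [Finset.mul_sum]
      rw [e3, hfirst, hsecond]
      have h1 : 0 ≤ (1 - M) * ((∑ i ∈ s, y i) * (∑ i ∈ s, y i)) :=
        mul_nonneg (by linarith) (mul_self_nonneg _)
      nlinarith

lemma pair_dot {n : ℕ} (g : Fin n → ℝ) (a b : ℝ) (i j : Fin n) :
    ∑ x, ((if x = i then a else 0) + (if x = j then b else 0)) * g x = a * g i + b * g j := by
  simp [add_mul, Finset.sum_add_distrib, ite_mul, Finset.sum_ite_eq']

lemma dot_pair {n : ℕ} (g : Fin n → ℝ) (a b : ℝ) (i j : Fin n) :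
    ∑ x, g x * ((if x = i then a else 0) + (if x = j then b else 0)) = g i * a + g j * b := by
  simp [mul_add, Finset.sum_add_distrib, mul_ite, Finset.sum_ite_eq']

end Helpers


/-- **Tropicalization of matrices with at most one positive eigenvalue.**
A symmetric real matrix `W` satisfies the four-point condition iff for all
sufficiently large `t` the symmetric matrix `(t ^ w i j)` (real power) has at
most one positive eigenvalue, counted with multiplicity. -/
theorem fourPointCondition_iff_at_most_one_positive_eigenvalue
    (n : ℕ) (W : Matrix (Fin n) (Fin n) ℝ) (hW : W.IsSymm) :
    (∀ i j k l : Fin n, W i j + W k l ≤ max (W i k + W j l) (W i l + W j k)) ↔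
      ∃ t₀ : ℝ, ∀ t : ℝ, t₀ < t →
        ∃ hA : (Matrix.of fun i j : Fin n => t ^ W i j).IsHermitian,
          (Finset.univ.filter fun i : Fin n => 0 < hA.eigenvalues i).card ≤ 1 := by
  constructor
  · -- forward direction
    intro h4pc
    refine ⟨1, fun t ht => ?_⟩
    have ht0 : (0:ℝ) < t := lt_trans one_pos ht
    set A : Matrix (Fin n) (Fin n) ℝ := Matrix.of fun i j : Fin n => t ^ W i j with hAdef
    have hA : A.IsHermitian := by
      rw [Matrix.IsHermitian]
      ext i j
      simp [hAdef, Matrix.conjTranspose_apply, Matrix.of_apply, hW.apply i j]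
    refine ⟨hA, ?_⟩
    rcases Nat.eq_zero_or_pos n with hn | hn
    · subst hn
      refine le_trans (Finset.card_filter_le _ _) ?_
      simp
    · set p : Fin n := ⟨0, hn⟩ with hp
      set g : Fin n → ℝ := fun i => W i p - W p p / 2 with hg
      set x : Fin n → ℝ := fun i => t ^ g i with hx
      apply card_le_one_of_dominated A hA x
      intro v
      set u : Fin n → Fin n → ℝ := fun i j => t ^ (W i j - g i - g j) with hu
      set y : Fin n → ℝ := fun i => v i * x i with hy
      -- rewrite quadratic form
      have hLHS : v ⬝ᵥ (A *ᵥ v) = ∑ i, ∑ j, y i * y j * u i j := by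
        simp only [dotProduct, Matrix.mulVec, Finset.mul_sum]
        apply Finset.sum_congr rfl
        intro i _
        apply Finset.sum_congr rfl
        intro j _
        have hentry : (A i j : ℝ) = x i * x j * u i j := by
          simp only [hAdef, Matrix.of_apply, hx, hu]
          rw [← Real.rpow_add ht0, ← Real.rpow_add ht0]
          congr 1
          ring
        simp only [dotProduct, hentry, hy]
        ring
      have hRHS : (x ⬝ᵥ v)^2 = ∑ i, ∑ j, y i * y j := by
        rw [sq, dotProduct, Finset.sum_mul_sum]
        apply Finset.sum_congr rfl
        intro i _
        apply Finset.sum_congr rfl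
        intro j _
        simp only [hy]
        ring
      rw [hLHS, hRHS]
      -- apply the gram lemma
      have hmono : ∀ {e f : ℝ}, e ≤ f → t ^ e ≤ t ^ f :=
        fun {e f} hef => (Real.rpow_le_rpow_left_iff ht).mpr hef
      have hkey := gram_key y n Finset.univ u (by simp : (Finset.univ : Finset (Fin n)).card ≤ n)
        (fun i j => by simp only [hu]; congr 1; rw [hW.apply i j]; ring)
        (fun i j => Real.rpow_pos_of_pos ht0 _)
        (fun i _ j _ => by
          have h := h4pc i j p p
          rw [max_self] at h
          have : W i j - g i - g j ≤ 0 := by simp only [hg]; linarith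
          calc u i j ≤ t ^ (0:ℝ) := hmono this
          _ = 1 := Real.rpow_zero t)
        (fun i _ j _ => by
          have h := h4pc i i j p
          have h2 : W i i + W j p ≤ W i j + W i p := by
            rcases le_max_iff.mp h with h' | h' <;> linarith
          apply hmono
          simp only [hg]
          linarith)
        (fun i _ j _ k _ => by
          have h := h4pc i j k p
          rcases le_max_iff.mp h with h' | h'
          · apply le_max_of_le_left
            apply hmono
            simp only [hg]
            linarith
          · apply le_max_of_le_right
            apply hmono
            simp only [hg]
            linarith)
      have hsum : ∑ i, ∑ j, y i * y j * (1 - u i j)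
          = (∑ i, ∑ j, y i * y j) - ∑ i, ∑ j, y i * y j * u i j := by
        rw [← Finset.sum_sub_distrib]
        apply Finset.sum_congr rfl
        intro i _
        rw [← Finset.sum_sub_distrib]
        apply Finset.sum_congr rfl
        intro j _
        ring
      rw [hsum] at hkey
      linarith
  · -- backward direction
    intro hex i j k l
    by_contra hc
    push_neg at hc
    have h1 : W i k + W j l < W i j + W k l := lt_of_le_of_lt (le_max_left _ _) hc
    have h2 : W i l + W j k < W i j + W k l := lt_of_le_of_lt (le_max_right _ _) hc
    have hsymW : ∀ a b : Fin n, W a b = W b a := fun a b => (hW.apply a b).symm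
    have hik : i ≠ k := by rintro rfl; have := hsymW j i; linarith
    have hil : i ≠ l := by rintro rfl; have := hsymW j i; have := hsymW k i; linarith
    have hjk : j ≠ k := by rintro rfl; linarith
    have hjl : j ≠ l := by rintro rfl; have := hsymW j k; linarith
    set δ : ℝ := min (W i j + W k l - (W i k + W j l)) (W i j + W k l - (W i l + W j k))
      with hδdef
    have hδ : 0 < δ := lt_min (by linarith) (by linarith)
    have hδ1 : δ ≤ W i j + W k l - (W i k + W j l) := min_le_left _ _
    have hδ2 : δ ≤ W i j + W k l - (W i l + W j k) := min_le_right _ _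
    clear_value δ
    clear hδdef
    obtain ⟨t₀, hT⟩ := hex
    obtain ⟨t, ht₀, ht1, ht4⟩ : ∃ t : ℝ, t₀ < t ∧ 1 < t ∧ (4:ℝ) ^ (1/δ) < t := by
      refine ⟨max t₀ (max 1 ((4:ℝ) ^ (1/δ))) + 1, ?_, ?_, ?_⟩
      · exact lt_of_le_of_lt (le_max_left _ _) (lt_add_one _)
      · exact lt_of_le_of_lt ((le_max_left _ _).trans (le_max_right _ _)) (lt_add_one _)
      · exact lt_of_le_of_lt ((le_max_right _ _).trans (le_max_right _ _)) (lt_add_one _)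
    have ht0 : (0:ℝ) < t := lt_trans one_pos ht1
    obtain ⟨hA, hcard⟩ := hT t ht₀
    set A : Matrix (Fin n) (Fin n) ℝ := Matrix.of fun i j : Fin n => t ^ W i j with hAdef
    have hentry : ∀ a b : Fin n, A a b = t ^ W a b := fun a b => rfl
    set P : ℝ := (W j l + W j k - W i k - W i l)/2 with hP
    set S : ℝ := (W j l + W i l - W i k - W j k)/2 with hS
    have hPval : P = (W j l + W j k - W i k - W i l)/2 := hP
    have hSval : S = (W j l + W i l - W i k - W j k)/2 := hS
    clear_value P S
    set uu : Fin n → ℝ := fun x => (if x = i then t ^ P else 0) + (if x = j then (1:ℝ) else 0)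
      with huu
    set vv : Fin n → ℝ := fun x => (if x = k then t ^ S else 0) + (if x = l then (1:ℝ) else 0)
      with hvv
    -- compute the three bilinear quantities
    have hAvu : ∀ z : Fin n, (A *ᵥ uu) z = A z i * t ^ P + A z j * 1 := by
      intro z
      simp only [Matrix.mulVec, dotProduct, huu]
      exact dot_pair (fun y => A z y) (t ^ P) 1 i j
    have hAvv : ∀ z : Fin n, (A *ᵥ vv) z = A z k * t ^ S + A z l * 1 := by
      intro z
      simp only [Matrix.mulVec, dotProduct, hvv]
      exact dot_pair (fun y => A z y) (t ^ S) 1 k l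
    have hqu : uu ⬝ᵥ (A *ᵥ uu)
        = t ^ P * (A i i * t ^ P + A i j * 1) + 1 * (A j i * t ^ P + A j j * 1) := by
      simp only [dotProduct, huu]
      rw [pair_dot (fun z => (A *ᵥ uu) z) (t ^ P) 1 i j]
      rw [hAvu i, hAvu j]
    have hqv : vv ⬝ᵥ (A *ᵥ vv)
        = t ^ S * (A k k * t ^ S + A k l * 1) + 1 * (A l k * t ^ S + A l l * 1) := by
      simp only [dotProduct, hvv]
      rw [pair_dot (fun z => (A *ᵥ vv) z) (t ^ S) 1 k l]
      rw [hAvv k, hAvv l]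
    have hB : uu ⬝ᵥ (A *ᵥ vv)
        = t ^ P * (A i k * t ^ S + A i l * 1) + 1 * (A j k * t ^ S + A j l * 1) := by
      simp only [dotProduct, huu]
      rw [pair_dot (fun z => (A *ᵥ vv) z) (t ^ P) 1 i j]
      rw [hAvv i, hAvv j]
    have hrp : ∀ e : ℝ, 0 < t ^ e := fun e => Real.rpow_pos_of_pos ht0 e
    have hradd : ∀ e f : ℝ, t ^ e * t ^ f = t ^ (e + f) := fun e f =>
      (Real.rpow_add ht0 e f).symm
    -- positivity of the quadratic forms
    have hqu_pos : 0 < uu ⬝ᵥ (A *ᵥ uu) := by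
      rw [hqu]
      simp only [hentry]
      nlinarith only [hrp (W i i), hrp (W i j), hrp (W j i), hrp (W j j), hrp P,
        mul_pos (hrp P) (hrp P), mul_pos (hrp P) (hrp (W i j)),
        mul_pos (hrp P) (hrp (W j i)),
        mul_pos (mul_pos (hrp P) (hrp P)) (hrp (W i i))]
    have hqv_pos : 0 < vv ⬝ᵥ (A *ᵥ vv) := by
      rw [hqv]
      simp only [hentry]
      nlinarith only [hrp (W k k), hrp (W k l), hrp (W l k), hrp (W l l), hrp S,
        mul_pos (hrp S) (hrp S), mul_pos (hrp S) (hrp (W k l)),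
        mul_pos (hrp S) (hrp (W l k)),
        mul_pos (mul_pos (hrp S) (hrp S)) (hrp (W k k))]
    -- lower bounds
    have hqu_ge : 2 * t ^ (P + W i j) ≤ uu ⬝ᵥ (A *ᵥ uu) := by
      rw [hqu]
      simp only [hentry]
      have e1 : t ^ P * t ^ W i j = t ^ (P + W i j) := hradd P (W i j)
      have e3 : t ^ W j i * t ^ P = t ^ (P + W i j) := by
        rw [hsymW j i, hradd (W i j) P]; congr 1; ring
      nlinarith only [e1, e3, mul_pos (mul_pos (hrp P) (hrp P)) (hrp (W i i)), hrp (W j j)]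
    have hqv_ge : 2 * t ^ (S + W k l) ≤ vv ⬝ᵥ (A *ᵥ vv) := by
      rw [hqv]
      simp only [hentry]
      have e1 : t ^ S * t ^ W k l = t ^ (S + W k l) := hradd S (W k l)
      have e3 : t ^ W l k * t ^ S = t ^ (S + W k l) := by
        rw [hsymW l k, hradd (W k l) S]; congr 1; ring
      nlinarith only [e1, e3, mul_pos (mul_pos (hrp S) (hrp S)) (hrp (W k k)), hrp (W l l)]
    -- upper bound for B
    set Q : ℝ := P + S + (W i j + W k l) with hQ
    have hQval : Q = P + S + (W i j + W k l) := hQ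
    clear_value Q
    have hB_le : uu ⬝ᵥ (A *ᵥ vv) ≤ 4 * t ^ ((Q - δ)/2) := by
      rw [hB]
      simp only [hentry]
      have hmono : ∀ {e f : ℝ}, e ≤ f → t ^ e ≤ t ^ f :=
        fun {e f} hef => (Real.rpow_le_rpow_left_iff ht1).mpr hef
      have t1 : t ^ P * (t ^ W i k * t ^ S) = t ^ (P + S + W i k) := by
        rw [hradd (W i k) S, hradd P (W i k + S)]; congr 1; ring
      have t2 : t ^ P * t ^ W i l = t ^ (P + W i l) := hradd P (W i l)
      have t3 : t ^ W j k * t ^ S = t ^ (W j k + S) := hradd (W j k) S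
      have b1 : t ^ (P + S + W i k) ≤ t ^ ((Q - δ)/2) := by
        apply hmono; rw [hQval, hPval, hSval]; linarith
      have b2 : t ^ (P + W i l) ≤ t ^ ((Q - δ)/2) := by
        apply hmono; rw [hQval, hPval, hSval]; linarith
      have b3 : t ^ (W j k + S) ≤ t ^ ((Q - δ)/2) := by
        apply hmono; rw [hQval, hPval, hSval]; linarith
      have b4 : t ^ (W j l) ≤ t ^ ((Q - δ)/2) := by
        apply hmono; rw [hQval, hPval, hSval]; linarith
      nlinarith only [t1, t2, t3, b1, b2, b3, b4]
    -- apply the reverse Cauchy-Schwarz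
    have hcs := lorentz_cs A hA hcard uu vv hqu_pos hqv_pos
    have hBpos : 0 < uu ⬝ᵥ (A *ᵥ vv) := by
      rw [hB]
      simp only [hentry]
      nlinarith only [mul_pos (hrp P) (mul_pos (hrp (W i k)) (hrp S)),
        mul_pos (hrp P) (hrp (W i l)), mul_pos (hrp (W j k)) (hrp S), hrp (W j l)]
    -- combine the bounds
    have hprod_lb : 4 * t ^ Q ≤ (uu ⬝ᵥ (A *ᵥ uu)) * (vv ⬝ᵥ (A *ᵥ vv)) := by
      have hmul := mul_le_mul hqu_ge hqv_ge (by positivity) (le_of_lt hqu_pos)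
      have e1 : (2 * t ^ (P + W i j)) * (2 * t ^ (S + W k l)) = 4 * t ^ Q := by
        rw [show (2 * t ^ (P + W i j)) * (2 * t ^ (S + W k l))
            = 4 * (t ^ (P + W i j) * t ^ (S + W k l)) by ring, hradd]
        congr 1
        simp only [hQ]
        ring
      linarith [hmul, e1.symm.le]
    have hsq_ub : (uu ⬝ᵥ (A *ᵥ vv))^2 ≤ 16 * t ^ (Q - δ) := by
      have h5 : (uu ⬝ᵥ (A *ᵥ vv))^2 ≤ (4 * t ^ ((Q - δ)/2))^2 := by
        apply sq_le_sq'
        · nlinarith [hrp ((Q - δ)/2)]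
        · exact hB_le
      have e2 : (4 * t ^ ((Q - δ)/2))^2 = 16 * t ^ (Q - δ) := by
        have e4 := hradd ((Q - δ)/2) ((Q - δ)/2)
        rw [show (Q-δ)/2 + (Q-δ)/2 = Q - δ by ring] at e4
        rw [← e4]; ring
      linarith
    have hfinal : t ^ Q ≤ 4 * t ^ (Q - δ) := by linarith only [hprod_lb, hcs, hsq_ub]
    have hQsplit : t ^ Q = t ^ (Q - δ) * t ^ δ := by
      rw [hradd]; congr 1; ring
    have htδ : (4:ℝ) < t ^ δ := by
      have h6 : ((4:ℝ) ^ (1/δ)) ^ δ < t ^ δ :=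
        Real.rpow_lt_rpow (Real.rpow_nonneg (by norm_num) _) ht4 hδ
      have h7 : ((4:ℝ) ^ (1/δ)) ^ δ = 4 := by
        rw [← Real.rpow_mul (by norm_num : (0:ℝ) ≤ 4)]
        rw [one_div, inv_mul_cancel₀ (ne_of_gt hδ), Real.rpow_one]
      linarith
    rw [hQsplit] at hfinal
    have hcontra := mul_pos (hrp (Q - δ)) (sub_pos.mpr htδ)
    nlinarith only [hcontra, hfinal]
end

section
/- Let T be a tree with vertex set V = {1,2,…,N}, and define the odd-dissimilarity map D° : 2^V → ℤ ∪ {−∞} by D°(X) = |O_X| if |X| is even and D°(X) = −∞ if |X| is odd. Then D° is a valuated Δ-matroid: for all X, Y ⊆ V and every i ∈ X △ Y, D°(X) + D°(Y) ≤ max_{j ∈ (X △ Y) ∖ {i}} ( D°(X △ {i,j}) + D°(Y △ {i,j}) ), where △ denotes symmetric difference, addition in ℤ ∪ {−∞} satisfies a + (−∞) = −∞, and the maximum over the empty set is −∞. -/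
open scoped Classical symmDiff

/-- An edge `e` of `T` is odd w.r.t. `X` if each of the two components of
`T − e` contains an odd number of vertices of `X`. -/
def OddEdge {N : ℕ} (T : SimpleGraph (Fin N)) (X : Finset (Fin N)) (e : Sym2 (Fin N)) : Prop :=
  e ∈ T.edgeSet ∧
    ∀ u ∈ e, Odd {x : Fin N | x ∈ X ∧ (T.deleteEdges {e}).Reachable u x}.ncard

/-- The odd-dissimilarity map of a tree: `D°(X) = |O_X|` if `|X|` is even and
`−∞` otherwise, with values in `ℤ ∪ {−∞}`. -/
noncomputable def oddDissimilarity {N : ℕ} (T : SimpleGraph (Fin N))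
    (X : Finset (Fin N)) : WithBot ℤ :=
  if Even X.card then (({e | OddEdge T X e}.ncard : ℤ) : WithBot ℤ) else ⊥

namespace TreeOdd

lemma card_symmDiff_helper {α : Type*} [DecidableEq α] (A B : Finset α) :
    (A ∆ B).card + 2 * (A ∩ B).card = A.card + B.card := by
  have h2 : Disjoint (A ∆ B) (A ∩ B) := by
    rw [Finset.disjoint_left]
    intro a ha hb
    rw [Finset.mem_symmDiff] at ha
    rw [Finset.mem_inter] at hb
    tauto
  have h1 : (A ∆ B) ∪ (A ∩ B) = A ∪ B := by
    ext a
    simp only [Finset.mem_union, Finset.mem_symmDiff, Finset.mem_inter]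
    tauto
  have h3 := Finset.card_union_of_disjoint h2
  have h4 := Finset.card_union_add_card_inter A B
  rw [h1] at h3
  omega

lemma filter_symmDiff' {α : Type*} [DecidableEq α] (A B : Finset α) (p : α → Prop)
    [DecidablePred p] : ((A ∆ B).filter p) = A.filter p ∆ B.filter p := by
  ext a
  simp only [Finset.mem_filter, Finset.mem_symmDiff]
  tauto

variable {N : ℕ} {T : SimpleGraph (Fin N)}

lemma ncard_eq_filter_card (X : Finset (Fin N)) (e : Sym2 (Fin N)) (u : Fin N) :
    {x : Fin N | x ∈ X ∧ (T.deleteEdges {e}).Reachable u x}.ncard =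
      (X.filter (fun z => (T.deleteEdges {e}).Reachable u z)).card := by
  have : {x : Fin N | x ∈ X ∧ (T.deleteEdges {e}).Reachable u x} =
      ↑(X.filter (fun z => (T.deleteEdges {e}).Reachable u z)) := by
    ext z
    simp [Finset.mem_filter]
  rw [this, Set.ncard_coe_finset]

lemma filter_congr_reach {e : Sym2 (Fin N)} {x x' : Fin N}
    (h : (T.deleteEdges {e}).Reachable x x') (X : Finset (Fin N)) :
    X.filter (fun z => (T.deleteEdges {e}).Reachable x z) =
      X.filter (fun z => (T.deleteEdges {e}).Reachable x' z) := by
  apply Finset.filter_congr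
  intro z _
  constructor
  · intro hz; exact h.symm.trans hz
  · intro hz; exact h.trans hz


noncomputable def pthP (hT : T.IsTree) (a b : Fin N) : T.Path a b :=
  ((hT.isConnected.preconnected a b).some).toPath

noncomputable def pth (hT : T.IsTree) (a b : Fin N) : T.Walk a b := (pthP hT a b).val

lemma pth_isPath (hT : T.IsTree) (a b : Fin N) : (pth hT a b).IsPath := (pthP hT a b).prop

lemma eq_pth (hT : T.IsTree) {a b : Fin N} (w : T.Walk a b) (hw : w.IsPath) :
    w = pth hT a b :=
  congrArg Subtype.val (hT.IsAcyclic.path_unique ⟨w, hw⟩ (pthP hT a b))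

lemma edge_mem_path_iff (hT : T.IsTree) {a b : Fin N} (w : T.Walk a b) (hw : w.IsPath)
    (f : Sym2 (Fin N)) :
    f ∈ w.edges ↔ ¬(T.deleteEdges {f}).Reachable a b := by
  constructor
  · intro hf hr
    obtain ⟨q, hq⟩ := (hr.some.toPath : (T.deleteEdges {f}).Path a b)
    have hsub : ∀ e ∈ q.edges, e ∈ T.edgeSet := by
      intro e he
      have := q.edges_subset_edgeSet he
      rw [SimpleGraph.edgeSet_deleteEdges] at this
      exact this.1
    have hq' : (q.transfer T hsub).IsPath := hq.transfer _
    have heq : q.transfer T hsub = w := by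
      rw [eq_pth hT _ hq', eq_pth hT w hw]
    have hf' : f ∈ q.edges := by
      rw [← SimpleGraph.Walk.edges_transfer q hsub, heq]; exact hf
    have := q.edges_subset_edgeSet hf'
    rw [SimpleGraph.edgeSet_deleteEdges] at this
    exact this.2 rfl
  · intro h
    by_contra hf
    exact h (w.toDeleteEdges {f} (by
      intro e he hes
      rw [Set.mem_singleton_iff] at hes
      exact hf (hes ▸ he))).reachable

lemma not_mem_edges_reachable (hT : T.IsTree) {a b : Fin N} (w : T.Walk a b)
    {f : Sym2 (Fin N)} (hf : f ∉ w.edges) : (T.deleteEdges {f}).Reachable a b :=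
  (w.toDeleteEdges {f} (by
    intro e he hes
    rw [Set.mem_singleton_iff] at hes
    exact hf (hes ▸ he))).reachable

/-- everything is on one of the two sides of an edge -/
lemma reach_cover (hT : T.IsTree) {u v : Fin N} (hadj : T.Adj u v) (x : Fin N) :
    (T.deleteEdges {s(u,v)}).Reachable u x ∨ (T.deleteEdges {s(u,v)}).Reachable v x := by
  set p := pth hT u x with hp
  by_cases hf : s(u,v) ∈ p.edges
  · right
    have hv : v ∈ p.support := p.snd_mem_support_of_mem_edges hf
    set d := p.dropUntil v hv with hd
    have hnd : s(u,v) ∉ d.edges := by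
      intro hmem
      have hu : u ∈ d.support := d.fst_mem_support_of_mem_edges hmem
      have hsupp : p.support = (p.takeUntil v hv).support ++ d.support.tail := by
        conv_lhs => rw [← p.take_spec hv]
        rw [SimpleGraph.Walk.support_append]
      have hnodup : p.support.Nodup := (pth_isPath hT u x).support_nodup
      rw [hsupp] at hnodup
      have hdisj := (List.nodup_append'.mp hnodup).2.2
      have hu1 : u ∈ (p.takeUntil v hv).support := SimpleGraph.Walk.start_mem_support _
      have hu2 : u ∈ d.support.tail := by
        have := SimpleGraph.Walk.support_eq_cons d
        rw [this] at hu
        rcases hu with _ | hu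
        · exact absurd rfl hadj.ne
        · assumption
      exact hdisj hu1 hu2
    exact not_mem_edges_reachable hT d hnd
  · exact Or.inl (not_mem_edges_reachable hT p hf)

lemma not_reachable_endpoints (hT : T.IsTree) {u v : Fin N} (hadj : T.Adj u v) :
    ¬(T.deleteEdges {s(u,v)}).Reachable u v := by
  have := (edge_mem_path_iff hT (SimpleGraph.Path.singleton hadj).val
      (SimpleGraph.Path.singleton hadj).prop s(u,v)).mp
  exact this (SimpleGraph.Path.mk'_mem_edges_singleton hadj)

/-- there is an endpoint of `e` separated from `x` by `e` -/
lemma exists_far (hT : T.IsTree) {e : Sym2 (Fin N)} (he : e ∈ T.edgeSet) (x : Fin N) :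
    ∃ v ∈ e, ¬(T.deleteEdges {e}).Reachable x v := by
  induction e with
  | _ u v =>
    rw [SimpleGraph.mem_edgeSet] at he
    have hsep := not_reachable_endpoints hT he
    rcases reach_cover hT he x with h | h
    · exact ⟨v, Sym2.mem_mk_right u v, fun hr => hsep (h.trans hr)⟩
    · exact ⟨u, Sym2.mem_mk_left u v, fun hr => hsep (h.trans hr).symm⟩


lemma filter_partition (hT : T.IsTree) {u v : Fin N} (hadj : T.Adj u v) (X : Finset (Fin N)) :
    (X.filter (fun z => (T.deleteEdges {s(u,v)}).Reachable u z)).card +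
      (X.filter (fun z => (T.deleteEdges {s(u,v)}).Reachable v z)).card = X.card := by
  have hpt : ∀ z, (T.deleteEdges {s(u,v)}).Reachable v z ↔
      ¬ (T.deleteEdges {s(u,v)}).Reachable u z := by
    intro z
    constructor
    · intro h1 h2
      exact not_reachable_endpoints hT hadj (h2.trans h1.symm)
    · intro h1
      rcases reach_cover hT hadj z with h | h
      · exact absurd h h1
      · exact h
  have : X.filter (fun z => (T.deleteEdges {s(u,v)}).Reachable v z) =
      X.filter (fun z => ¬ (T.deleteEdges {s(u,v)}).Reachable u z) := by
    apply Finset.filter_congr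
    intro z _
    exact hpt z
  rw [this]
  exact Finset.card_filter_add_card_filter_not _

/-- parity of a side-count is independent of the reference vertex, for even `X` -/
lemma parity_transport (hT : T.IsTree) {e : Sym2 (Fin N)} (he : e ∈ T.edgeSet)
    {X : Finset (Fin N)} (hX : Even X.card) (x x' : Fin N) :
    Odd ((X.filter (fun z => (T.deleteEdges {e}).Reachable x z)).card) ↔
      Odd ((X.filter (fun z => (T.deleteEdges {e}).Reachable x' z)).card) := by
  induction e with
  | _ u v =>
    rw [SimpleGraph.mem_edgeSet] at he
    have hpart := filter_partition hT he X
    have hparity : Odd ((X.filter (fun z => (T.deleteEdges {s(u,v)}).Reachable u z)).card) ↔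
        Odd ((X.filter (fun z => (T.deleteEdges {s(u,v)}).Reachable v z)).card) := by
      obtain ⟨k, hk⟩ := hX
      rw [Nat.odd_iff, Nat.odd_iff]
      omega
    have key : ∀ y : Fin N,
        X.filter (fun z => (T.deleteEdges {s(u,v)}).Reachable y z) =
          X.filter (fun z => (T.deleteEdges {s(u,v)}).Reachable u z) ∨
        X.filter (fun z => (T.deleteEdges {s(u,v)}).Reachable y z) =
          X.filter (fun z => (T.deleteEdges {s(u,v)}).Reachable v z) := by
      intro y
      rcases reach_cover hT he y with h | h
      · exact Or.inl (filter_congr_reach h.symm X)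
      · exact Or.inr (filter_congr_reach h.symm X)
    rcases key x with h1 | h1 <;> rcases key x' with h2 | h2 <;> rw [h1, h2]
    · exact hparity
    · exact hparity.symm

/-- `OddEdge` in terms of all reference vertices -/
lemma oddEdge_iff_forall (hT : T.IsTree) {X : Finset (Fin N)} {e : Sym2 (Fin N)} :
    OddEdge T X e ↔ e ∈ T.edgeSet ∧
      ∀ x, Odd ((X.filter (fun z => (T.deleteEdges {e}).Reachable x z)).card) := by
  constructor
  · rintro ⟨he, hodd⟩
    refine ⟨he, fun x => ?_⟩
    have he' := he
    induction e with
    | _ u v =>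
      rw [SimpleGraph.mem_edgeSet] at he'
      rcases reach_cover hT he' x with h | h
      · rw [filter_congr_reach h.symm X, ← ncard_eq_filter_card]
        exact hodd u (Sym2.mem_mk_left u v)
      · rw [filter_congr_reach h.symm X, ← ncard_eq_filter_card]
        exact hodd v (Sym2.mem_mk_right u v)
  · rintro ⟨he, hodd⟩
    refine ⟨he, fun u _ => ?_⟩
    rw [ncard_eq_filter_card]
    exact hodd u


lemma oddEdge_iff_at (hT : T.IsTree) {X : Finset (Fin N)} (hX : Even X.card)
    (x₀ : Fin N) {e : Sym2 (Fin N)} :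
    OddEdge T X e ↔ e ∈ T.edgeSet ∧
      Odd ((X.filter (fun z => (T.deleteEdges {e}).Reachable x₀ z)).card) := by
  rw [oddEdge_iff_forall hT]
  constructor
  · rintro ⟨he, h⟩; exact ⟨he, h x₀⟩
  · rintro ⟨he, h⟩
    exact ⟨he, fun x => (parity_transport hT he hX x₀ x).mp h⟩

lemma mem_support_of_edge {a b : Fin N} (p : T.Walk a b) {e : Sym2 (Fin N)} {x : Fin N}
    (hx : x ∈ e) (he : e ∈ p.edges) : x ∈ p.support := by
  obtain ⟨w, hw⟩ := Sym2.mem_iff_exists.mp hx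
  rw [hw] at he
  exact p.fst_mem_support_of_mem_edges he

lemma reachable_deleteEdges_iff (hT : T.IsTree) (S : Finset (Sym2 (Fin N))) (x y : Fin N) :
    (T.deleteEdges (↑S : Set (Sym2 (Fin N)))).Reachable x y ↔
      ∀ e ∈ S, (T.deleteEdges {e}).Reachable x y := by
  constructor
  · intro h e he
    obtain w := h.some
    refine (w.transfer (T.deleteEdges {e}) ?_).reachable
    intro f hf
    have hfe := w.edges_subset_edgeSet hf
    rw [SimpleGraph.edgeSet_deleteEdges] at hfe ⊢
    refine ⟨hfe.1, ?_⟩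
    intro hfs
    rw [Set.mem_singleton_iff] at hfs
    exact hfe.2 (hfs ▸ (Finset.mem_coe.mpr he))
  · intro h
    have hav : ∀ f ∈ (pth hT x y).edges, ¬ f ∈ (↑S : Set (Sym2 (Fin N))) := by
      intro f hf hfs
      exact ((edge_mem_path_iff hT (pth hT x y) (pth_isPath hT x y) f).mp hf)
        (h f (Finset.mem_coe.mp hfs))
    exact ((pth hT x y).toDeleteEdges ↑S hav).reachable

/-- The key parity fact: if every edge of `S` has an even number of `Z`-vertices on
each of its sides, then the `T − S`-component of any vertex contains an even number
of `Z`-vertices. -/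
lemma factC (hT : T.IsTree) (Z : Finset (Fin N)) (hZ : Even Z.card) (i : Fin N) :
    ∀ n (S : Finset (Sym2 (Fin N))), S.card ≤ n →
    (∀ e ∈ S, e ∈ T.edgeSet) →
    (∀ e ∈ S, ∀ x : Fin N,
      Even ((Z.filter (fun z => (T.deleteEdges {e}).Reachable x z)).card)) →
    Even ((Z.filter (fun z =>
      (T.deleteEdges (↑S : Set (Sym2 (Fin N)))).Reachable i z)).card) := by
  intro n
  induction n with
  | zero =>
    intro S hcard _ _
    have hS : S = ∅ := Finset.card_eq_zero.mp (Nat.le_zero.mp hcard)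
    subst hS
    simp only [Finset.coe_empty, SimpleGraph.deleteEdges_empty]
    rw [Finset.filter_true_of_mem (fun z _ => hT.isConnected.preconnected i z)]
    exact hZ
  | succ n IH =>
    intro S hcard hSE hSZ
    rcases Finset.eq_empty_or_nonempty S with rfl | hSne
    · simp only [Finset.coe_empty, SimpleGraph.deleteEdges_empty]
      rw [Finset.filter_true_of_mem (fun z _ => hT.isConnected.preconnected i z)]
      exact hZ
    -- choose a maximal "far" pair (e₀, v₀)
    set Q := (S ×ˢ (Finset.univ : Finset (Fin N))).filter
        (fun q => q.2 ∈ q.1 ∧ ¬ (T.deleteEdges {q.1}).Reachable i q.2) with hQdef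
    have hQne : Q.Nonempty := by
      obtain ⟨e, he⟩ := hSne
      obtain ⟨v, hv, hsepv⟩ := exists_far hT (hSE e he) i
      exact ⟨(e, v), by
        rw [hQdef, Finset.mem_filter, Finset.mem_product]
        exact ⟨⟨he, Finset.mem_univ v⟩, hv, hsepv⟩⟩
    obtain ⟨⟨e₀, v₀⟩, hQ₀, hmax⟩ :=
      Finset.exists_max_image Q (fun q => (pth hT i q.2).length) hQne
    rw [hQdef, Finset.mem_filter, Finset.mem_product] at hQ₀
    obtain ⟨⟨he₀S, -⟩, hv₀e, hsep₀⟩ := hQ₀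
    set S' := S.erase e₀ with hS'def
    have hS'card : S'.card ≤ n := by
      have h := Finset.card_erase_of_mem he₀S
      rw [← hS'def] at h
      omega
    have hSE' : ∀ e ∈ S', e ∈ T.edgeSet := fun e he => hSE e (Finset.mem_of_mem_erase he)
    have hSZ' : ∀ e ∈ S', ∀ x : Fin N,
        Even ((Z.filter (fun z => (T.deleteEdges {e}).Reachable x z)).card) :=
      fun e he => hSZ e (Finset.mem_of_mem_erase he)
    have hA : Even ((Z.filter (fun z =>
        (T.deleteEdges (↑S' : Set (Sym2 (Fin N)))).Reachable i z)).card) :=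
      IH S' hS'card hSE' hSZ'
    -- THE CLAIM
    have claim : ∀ x : Fin N, (∀ e ∈ S', (T.deleteEdges {e}).Reachable i x) →
        ¬(T.deleteEdges {e₀}).Reachable i x →
        ∀ y : Fin N, ¬(T.deleteEdges {e₀}).Reachable i y →
        ∀ e ∈ S', (T.deleteEdges {e}).Reachable i y := by
      intro x hx1 hx2 y hy e heS'
      by_contra hsep
      have heS : e ∈ S := Finset.mem_of_mem_erase heS'
      have heE : e ∈ T.edgeSet := hSE e heS
      by_cases hc : (T.deleteEdges {e}).Reachable i v₀
      · -- case (b)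
        obtain ⟨v, hve, hsepv⟩ := exists_far hT heE i
        have hvne : v ≠ v₀ := by rintro rfl; exact hsepv hc
        have hi' : ¬ (T.deleteEdges {e₀}).Reachable i v := by
          intro hco
          set py := pth hT i y with hpydef
          have hpyp := pth_isPath hT i y
          have hey : e ∈ py.edges := (edge_mem_path_iff hT py hpyp e).mpr hsep
          have he0y : e₀ ∈ py.edges := (edge_mem_path_iff hT py hpyp e₀).mpr hy
          have hv₀sup : v₀ ∈ py.support := mem_support_of_edge py hv₀e he0y
          set q := py.takeUntil v₀ hv₀sup with hqdef
          set d := py.dropUntil v₀ hv₀sup with hddef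
          have hqp : q.IsPath := hpyp.takeUntil _
          have hdp : d.IsPath := hpyp.dropUntil _
          have hedges : py.edges = q.edges ++ d.edges := by
            rw [hqdef, hddef, ← SimpleGraph.Walk.edges_append, py.take_spec hv₀sup]
          have hnodup : py.edges.Nodup := hpyp.edges_nodup
          rw [hedges] at hnodup
          have hdisj := (List.nodup_append'.mp hnodup).2.2
          have he0q : e₀ ∈ q.edges := (edge_mem_path_iff hT q hqp e₀).mpr hsep₀
          have he0d : e₀ ∉ d.edges := fun h => hdisj he0q h
          have heq' : e ∉ q.edges := fun h => ((edge_mem_path_iff hT q hqp e).mp h) hc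
          have hed : e ∈ d.edges := by
            rw [hedges] at hey
            rcases List.mem_append.mp hey with h | h
            · exact absurd h heq'
            · exact h
          have hvsupd : v ∈ d.support := mem_support_of_edge d hve hed
          set d₂ := d.takeUntil v hvsupd with hd₂def
          have hd₂p : d₂.IsPath := hdp.takeUntil _
          have hsepv₀v : ¬ (T.deleteEdges {e₀}).Reachable v₀ v :=
            fun h => hsep₀ (hco.trans h.symm)
          have he0d₂ : e₀ ∈ d₂.edges := (edge_mem_path_iff hT d₂ hd₂p e₀).mpr hsepv₀v
          exact he0d (SimpleGraph.Walk.edges_takeUntil_subset d hvsupd he0d₂)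
        -- length contradiction
        set r := pth hT i v with hrdef
        have hrp := pth_isPath hT i v
        have he0r : e₀ ∈ r.edges := (edge_mem_path_iff hT r hrp e₀).mpr hi'
        have hv₀r : v₀ ∈ r.support := mem_support_of_edge r hv₀e he0r
        set q' := r.takeUntil v₀ hv₀r with hq'def
        have hq'p : q'.IsPath := hrp.takeUntil _
        have hq'eq : q' = pth hT i v₀ := eq_pth hT q' hq'p
        have hlen : q'.length + (r.dropUntil v₀ hv₀r).length = r.length := by
          rw [hq'def, ← SimpleGraph.Walk.length_append, r.take_spec hv₀r]
        have hdrop : (r.dropUntil v₀ hv₀r).length ≠ 0 :=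
          fun h => hvne (SimpleGraph.Walk.eq_of_length_eq_zero h).symm
        have hmem : (e, v) ∈ Q := by
          rw [hQdef, Finset.mem_filter, Finset.mem_product]
          exact ⟨⟨heS, Finset.mem_univ v⟩, hve, hsepv⟩
        have hle := hmax (e, v) hmem
        simp only at hle
        rw [← hq'eq, ← hrdef] at hle
        omega
      · -- case (a)
        have hsx : ¬ (T.deleteEdges {e}).Reachable i x := by
          intro hrx
          set p := pth hT i x with hpdef
          have hpp := pth_isPath hT i x
          have hep : e ∉ p.edges := fun h => ((edge_mem_path_iff hT p hpp e).mp h) hrx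
          have he0p : e₀ ∈ p.edges := (edge_mem_path_iff hT p hpp e₀).mpr hx2
          have hv₀p : v₀ ∈ p.support := mem_support_of_edge p hv₀e he0p
          have heq2 : e ∉ (p.takeUntil v₀ hv₀p).edges :=
            fun h => hep (SimpleGraph.Walk.edges_takeUntil_subset _ _ h)
          exact hc (not_mem_edges_reachable hT _ heq2)
        exact hsx (hx1 e heS')
    -- parity bookkeeping
    set A := Z.filter (fun z =>
      (T.deleteEdges (↑S' : Set (Sym2 (Fin N)))).Reachable i z) with hAdef
    set D := Z.filter (fun z =>
      ((T.deleteEdges (↑S' : Set (Sym2 (Fin N)))).Reachable i z ∧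
        ¬ (T.deleteEdges {e₀}).Reachable i z)) with hDdef
    set F := Z.filter (fun z => ¬ (T.deleteEdges {e₀}).Reachable i z) with hFdef
    have hFeven : Even F.card := by
      have h1 := hSZ e₀ he₀S i
      have h2 := Finset.card_filter_add_card_filter_not
        (s := Z) (p := fun z => (T.deleteEdges {e₀}).Reachable i z)
      obtain ⟨k, hk⟩ := h1
      obtain ⟨m, hm⟩ := hZ
      rw [Nat.even_iff]
      rw [hFdef]
      omega
    have hsplit : Z.filter (fun z =>
        (T.deleteEdges (↑S : Set (Sym2 (Fin N)))).Reachable i z) =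
        Z.filter (fun z =>
          ((T.deleteEdges (↑S' : Set (Sym2 (Fin N)))).Reachable i z ∧
            (T.deleteEdges {e₀}).Reachable i z)) := by
      apply Finset.filter_congr
      intro z _
      rw [reachable_deleteEdges_iff hT S, reachable_deleteEdges_iff hT S']
      constructor
      · intro h
        exact ⟨fun e he => h e (Finset.mem_of_mem_erase he), h e₀ he₀S⟩
      · rintro ⟨h1, h2⟩ e he
        by_cases he0 : e = e₀
        · subst he0; exact h2
        · exact h1 e (Finset.mem_erase.mpr ⟨he0, he⟩)
    have hAsplit : (A.filter (fun z => (T.deleteEdges {e₀}).Reachable i z)).card +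
        (A.filter (fun z => ¬ (T.deleteEdges {e₀}).Reachable i z)).card = A.card :=
      Finset.card_filter_add_card_filter_not _
    have hA1 : A.filter (fun z => (T.deleteEdges {e₀}).Reachable i z) =
        Z.filter (fun z =>
          ((T.deleteEdges (↑S' : Set (Sym2 (Fin N)))).Reachable i z ∧
            (T.deleteEdges {e₀}).Reachable i z)) := by
      rw [hAdef, Finset.filter_filter]
    have hA2 : A.filter (fun z => ¬ (T.deleteEdges {e₀}).Reachable i z) = D := by
      rw [hAdef, hDdef, Finset.filter_filter]
    have hDeven : Even D.card := by
      rcases Finset.eq_empty_or_nonempty D with hD | hD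
      · rw [hD]; simp
      · obtain ⟨x, hx⟩ := hD
        rw [hDdef, Finset.mem_filter] at hx
        obtain ⟨hxZ, hxr, hx2⟩ := hx
        have hx1 : ∀ e ∈ S', (T.deleteEdges {e}).Reachable i x :=
          (reachable_deleteEdges_iff hT S' i x).mp hxr
        have hDF : D = F := by
          apply Finset.Subset.antisymm
          · intro z hz
            rw [hDdef, Finset.mem_filter] at hz
            rw [hFdef, Finset.mem_filter]
            exact ⟨hz.1, hz.2.2⟩
          · intro y hy
            rw [hFdef, Finset.mem_filter] at hy
            rw [hDdef, Finset.mem_filter]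
            exact ⟨hy.1, (reachable_deleteEdges_iff hT S' i y).mpr
              (claim x hx1 hx2 y hy.2), hy.2⟩
        rw [hDF]; exact hFeven
    rw [hsplit, ← hA1]
    rw [← hA2] at hDeven
    obtain ⟨a, ha⟩ := hA
    obtain ⟨d, hd⟩ := hDeven
    rw [Nat.even_iff]
    omega

noncomputable def OFin (T : SimpleGraph (Fin N)) (X : Finset (Fin N)) :
    Finset (Sym2 (Fin N)) :=
  Finset.univ.filter (fun e => OddEdge T X e)

lemma mem_OFin {X : Finset (Fin N)} {e : Sym2 (Fin N)} :
    e ∈ OFin T X ↔ OddEdge T X e := by simp [OFin]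

lemma ncard_oddEdge_eq (X : Finset (Fin N)) :
    {e | OddEdge T X e}.ncard = (OFin T X).card := by
  have : {e | OddEdge T X e} = ↑(OFin T X) := by ext e; simp [OFin]
  rw [this, Set.ncard_coe_finset]

lemma OFin_symmDiff (hT : T.IsTree) (i₀ : Fin N) {X W : Finset (Fin N)}
    (hX : Even X.card) (hW : Even W.card) :
    OFin T (X ∆ W) = OFin T X ∆ OFin T W := by
  have hXW : Even (X ∆ W).card := by
    have h := card_symmDiff_helper X W
    obtain ⟨a, ha⟩ := hX
    obtain ⟨b, hb⟩ := hW
    rw [Nat.even_iff]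
    omega
  ext e
  rw [Finset.mem_symmDiff, mem_OFin, mem_OFin, mem_OFin,
    oddEdge_iff_at hT hXW i₀, oddEdge_iff_at hT hX i₀, oddEdge_iff_at hT hW i₀]
  have key : Odd (((X ∆ W).filter (fun z => (T.deleteEdges {e}).Reachable i₀ z)).card) ↔
      ¬ (Odd ((X.filter (fun z => (T.deleteEdges {e}).Reachable i₀ z)).card) ↔
        Odd ((W.filter (fun z => (T.deleteEdges {e}).Reachable i₀ z)).card)) := by
    rw [filter_symmDiff' X W (fun z => (T.deleteEdges {e}).Reachable i₀ z)]
    have h := card_symmDiff_helper (X.filter (fun z => (T.deleteEdges {e}).Reachable i₀ z))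
      (W.filter (fun z => (T.deleteEdges {e}).Reachable i₀ z))
    rw [Nat.odd_iff, Nat.odd_iff, Nat.odd_iff]
    omega
  rw [key]
  tauto

lemma mem_OFin_pair (hT : T.IsTree) {i j : Fin N} (hij : i ≠ j) (e : Sym2 (Fin N)) :
    e ∈ OFin T {i, j} ↔
      (e ∈ T.edgeSet ∧ ¬ (T.deleteEdges {e}).Reachable i j) := by
  have hcard : (({i, j} : Finset (Fin N))).card = 2 := by
    rw [Finset.card_insert_of_notMem (Finset.notMem_singleton.mpr hij),
      Finset.card_singleton]
  rw [mem_OFin, oddEdge_iff_at hT (by rw [hcard]; exact even_two) i]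
  have hmain : Odd ((({i, j} : Finset (Fin N)).filter
      (fun z => (T.deleteEdges {e}).Reachable i z)).card) ↔
      ¬ (T.deleteEdges {e}).Reachable i j := by
    by_cases hrij : (T.deleteEdges {e}).Reachable i j
    · have : ({i, j} : Finset (Fin N)).filter
          (fun z => (T.deleteEdges {e}).Reachable i z) = {i, j} := by
        apply Finset.filter_true_of_mem
        intro z hz
        rcases Finset.mem_insert.mp hz with rfl | hz
        · exact SimpleGraph.Reachable.refl _
        · rw [Finset.mem_singleton] at hz
          subst hz
          exact hrij
      rw [this, hcard]
      simp [hrij]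
    · have : ({i, j} : Finset (Fin N)).filter
          (fun z => (T.deleteEdges {e}).Reachable i z) = {i} := by
        ext z
        simp only [Finset.mem_filter, Finset.mem_insert, Finset.mem_singleton]
        constructor
        · rintro ⟨rfl | rfl, hr⟩
          · rfl
          · exact absurd hr hrij
        · rintro rfl
          exact ⟨Or.inl rfl, SimpleGraph.Reachable.refl _⟩
      rw [this, Finset.card_singleton]
      simp [hrij]
  rw [hmain]

end TreeOdd

open TreeOdd

/-- **The odd-dissimilarity map is a valuated Δ-matroid**: it satisfies the
tropical Wick exchange axiom. -/
theorem oddDissimilarity_valuated_delta_matroid (N : ℕ)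
    (T : SimpleGraph (Fin N)) (hT : T.IsTree) (X Y : Finset (Fin N)) (i : Fin N)
    (hi : i ∈ X ∆ Y) :
    oddDissimilarity T X + oddDissimilarity T Y ≤
      ((X ∆ Y).erase i).sup fun j =>
        oddDissimilarity T (X ∆ {i, j}) + oddDissimilarity T (Y ∆ {i, j}) := by
  by_cases hX : Even X.card
  swap
  · have : oddDissimilarity T X = ⊥ := by rw [oddDissimilarity, if_neg hX]
    rw [this, WithBot.bot_add]
    exact bot_le
  by_cases hY : Even Y.card
  swap
  · have : oddDissimilarity T Y = ⊥ := by rw [oddDissimilarity, if_neg hY]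
    rw [this, WithBot.add_bot]
    exact bot_le
  have hZeven : Even (X ∆ Y).card := by
    have h := card_symmDiff_helper X Y
    obtain ⟨a, ha⟩ := hX
    obtain ⟨b, hb⟩ := hY
    rw [Nat.even_iff]
    omega
  set S := OFin T X ∩ OFin T Y with hSdef
  have hSE : ∀ e ∈ S, e ∈ T.edgeSet := by
    intro e he
    exact (mem_OFin.mp (Finset.mem_inter.mp he).1).1
  have hSZ : ∀ e ∈ S, ∀ x : Fin N,
      Even (((X ∆ Y).filter (fun z => (T.deleteEdges {e}).Reachable x z)).card) := by
    intro e he x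
    have h1 := ((oddEdge_iff_forall hT).mp (mem_OFin.mp (Finset.mem_inter.mp he).1)).2 x
    have h2 := ((oddEdge_iff_forall hT).mp (mem_OFin.mp (Finset.mem_inter.mp he).2)).2 x
    rw [filter_symmDiff' X Y (fun z => (T.deleteEdges {e}).Reachable x z)]
    have h := card_symmDiff_helper (X.filter (fun z => (T.deleteEdges {e}).Reachable x z))
      (Y.filter (fun z => (T.deleteEdges {e}).Reachable x z))
    rw [Nat.odd_iff] at h1 h2
    rw [Nat.even_iff]
    omega
  have hC := factC hT (X ∆ Y) hZeven i S.card S le_rfl hSE hSZ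
  have hiC : i ∈ (X ∆ Y).filter (fun z =>
      (T.deleteEdges (↑S : Set (Sym2 (Fin N)))).Reachable i z) :=
    Finset.mem_filter.mpr ⟨hi, SimpleGraph.Reachable.refl _⟩
  have h2card : 1 < ((X ∆ Y).filter (fun z =>
      (T.deleteEdges (↑S : Set (Sym2 (Fin N)))).Reachable i z)).card := by
    have hpos := Finset.card_pos.mpr ⟨i, hiC⟩
    obtain ⟨k, hk⟩ := hC
    omega
  obtain ⟨j, hjmem, hjne⟩ := Finset.exists_mem_ne h2card i
  rw [Finset.mem_filter] at hjmem
  obtain ⟨hjZ, hjreach⟩ := hjmem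
  have hjer : j ∈ (X ∆ Y).erase i := Finset.mem_erase.mpr ⟨hjne, hjZ⟩
  refine le_trans ?_ (Finset.le_sup hjer)
  have hij : i ≠ j := hjne.symm
  have hpaircard : (({i, j} : Finset (Fin N))).card = 2 := by
    rw [Finset.card_insert_of_notMem (Finset.notMem_singleton.mpr hij),
      Finset.card_singleton]
  have hpair : Even (({i, j} : Finset (Fin N))).card := by rw [hpaircard]; exact even_two
  have hXe : Even (X ∆ {i, j}).card := by
    have h := card_symmDiff_helper X ({i, j} : Finset (Fin N))
    obtain ⟨a, ha⟩ := hX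
    rw [hpaircard] at h
    rw [Nat.even_iff]
    omega
  have hYe : Even (Y ∆ {i, j}).card := by
    have h := card_symmDiff_helper Y ({i, j} : Finset (Fin N))
    obtain ⟨b, hb⟩ := hY
    rw [hpaircard] at h
    rw [Nat.even_iff]
    omega
  rw [oddDissimilarity, if_pos hX, oddDissimilarity, if_pos hY,
    oddDissimilarity, if_pos hXe, oddDissimilarity, if_pos hYe,
    ncard_oddEdge_eq, ncard_oddEdge_eq, ncard_oddEdge_eq, ncard_oddEdge_eq,
    OFin_symmDiff hT i hX hpair, OFin_symmDiff hT i hY hpair]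
  set P := OFin T {i, j} with hPdef
  have hdisjP : ∀ e, e ∈ S → e ∉ P := by
    intro e heS heP
    have h := (mem_OFin_pair hT hij e).mp (hPdef ▸ heP)
    exact h.2 ((reachable_deleteEdges_iff hT S i j).mp hjreach e heS)
  have h1 := card_symmDiff_helper (OFin T X) P
  have h2 := card_symmDiff_helper (OFin T Y) P
  have h3 : (OFin T X ∩ P).card + (OFin T Y ∩ P).card ≤ P.card := by
    have hd : Disjoint (OFin T X ∩ P) (OFin T Y ∩ P) := by
      rw [Finset.disjoint_left]
      intro e he1 he2
      have heS : e ∈ S := by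
        rw [hSdef, Finset.mem_inter]
        exact ⟨(Finset.mem_inter.mp he1).1, (Finset.mem_inter.mp he2).1⟩
      exact hdisjP e heS (Finset.mem_inter.mp he1).2
    have hcu := Finset.card_union_of_disjoint hd
    have hsub : (OFin T X ∩ P) ∪ (OFin T Y ∩ P) ⊆ P := by
      intro e he
      rcases Finset.mem_union.mp he with h | h
      · exact (Finset.mem_inter.mp h).2
      · exact (Finset.mem_inter.mp h).2
    have := Finset.card_le_card hsub
    omega
  have hnat : (OFin T X).card + (OFin T Y).card ≤
      (OFin T X ∆ P).card + (OFin T Y ∆ P).card := by omega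
  exact_mod_cast hnat
end

section
/- Let T be a tree with vertex set V = {1,2,…,N}, and define the map E° : 2^V → ℤ ∪ {−∞} by E°(X) = −|O_X| if |X| is even and E°(X) = −∞ if |X| is odd (i.e., E° is the negative of the odd-dissimilarity map). Then E° is a valuated Δ-matroid: for all X, Y ⊆ V and every i ∈ X △ Y, E°(X) + E°(Y) ≤ max_{j ∈ (X △ Y) ∖ {i}} ( E°(X △ {i,j}) + E°(Y △ {i,j}) ), where △ denotes symmetric difference, addition in ℤ ∪ {−∞} satisfies a + (−∞) = −∞, and the maximum over the empty set is −∞. -/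
open scoped Classical symmDiff

/-- The negative of the odd-dissimilarity map of a tree:
`E°(X) = −|O_X|` if `|X|` is even and `−∞` otherwise, in `ℤ ∪ {−∞}`. -/
noncomputable def negOddDissimilarity {N : ℕ} (T : SimpleGraph (Fin N))
    (X : Finset (Fin N)) : WithBot ℤ :=
  if Even X.card then ((-({e | OddEdge T X e}.ncard : ℤ) : ℤ) : WithBot ℤ) else ⊥

namespace VDMaux

variable {N : ℕ} {T : SimpleGraph (Fin N)}


lemma card_symmDiff_aux {α : Type*} [DecidableEq α] (s t : Finset α) :
    (s ∆ t).card + 2 * (s ∩ t).card = s.card + t.card := by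
  have h1 : s ∆ t = (s ∪ t) \ (s ∩ t) := symmDiff_eq_sup_sdiff_inf s t
  have h2 : (s ∩ t) ⊆ (s ∪ t) := (Finset.inter_subset_left).trans Finset.subset_union_left
  have h3 : ((s ∪ t) \ (s ∩ t)).card = (s ∪ t).card - (s ∩ t).card := Finset.card_sdiff_of_subset h2
  have h4 := Finset.card_union_add_card_inter s t
  have h5 := Finset.card_le_card h2
  rw [h1, h3]; omega

lemma parity_symmDiff {α : Type*} [DecidableEq α] (s t : Finset α) :
    Even (s ∆ t).card ↔ (Even s.card ↔ Even t.card) := by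
  have := card_symmDiff_aux s t
  simp only [Nat.even_iff] at *
  omega

lemma odd_symmDiff {α : Type*} [DecidableEq α] (s t : Finset α) :
    Odd (s ∆ t).card ↔ (Odd s.card ↔ ¬ Odd t.card) := by
  have := card_symmDiff_aux s t
  simp only [Nat.odd_iff] at *
  omega

lemma filter_symmDiff {α : Type*} [DecidableEq α] (p : α → Prop) (s t : Finset α) :
    (s ∆ t).filter p = (s.filter p) ∆ (t.filter p) := by
  ext a
  simp only [Finset.mem_filter, Finset.mem_symmDiff]
  tauto

lemma card_symmDiff_exchange {α : Type*} [DecidableEq α] {A B P : Finset α}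
    (hP : P ⊆ A ∆ B) : (A ∆ P).card + (B ∆ P).card = A.card + B.card := by
  have h1 := card_symmDiff_aux A P
  have h2 := card_symmDiff_aux B P
  have h3 : (A ∩ P).card + (B ∩ P).card = P.card := by
    have hd : Disjoint (A ∩ P) (B ∩ P) := by
      rw [Finset.disjoint_left]
      intro x hx hx'
      simp only [Finset.mem_inter] at hx hx'
      have := hP hx.2
      rw [Finset.mem_symmDiff] at this
      tauto
    have hu : (A ∩ P) ∪ (B ∩ P) = P := by
      ext x
      simp only [Finset.mem_union, Finset.mem_inter]
      constructor
      · tauto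
      · intro hx
        have := hP hx
        rw [Finset.mem_symmDiff] at this
        tauto
    rw [← Finset.card_union_of_disjoint hd, hu]
  omega

noncomputable def sideC (T : SimpleGraph (Fin N)) (X : Finset (Fin N))
    (e : Sym2 (Fin N)) (u : Fin N) : ℕ :=
  (X.filter fun x => (T.deleteEdges {e}).Reachable u x).card

lemma ncard_side (X : Finset (Fin N)) (e : Sym2 (Fin N)) (u : Fin N) :
    {x : Fin N | x ∈ X ∧ (T.deleteEdges {e}).Reachable u x}.ncard = sideC T X e u := by
  have : {x : Fin N | x ∈ X ∧ (T.deleteEdges {e}).Reachable u x} =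
      ↑(X.filter fun x => (T.deleteEdges {e}).Reachable u x) := by
    ext x; simp [Finset.mem_filter]
  rw [this, Set.ncard_coe_finset, sideC]

lemma oddEdge_iff' (X : Finset (Fin N)) (e : Sym2 (Fin N)) :
    OddEdge T X e ↔ e ∈ T.edgeSet ∧ ∀ u ∈ e, Odd (sideC T X e u) := by
  unfold OddEdge
  simp_rw [ncard_side]

lemma not_reachable_delete (hT : T.IsAcyclic) {u v : Fin N} (h : T.Adj u v) :
    ¬ (T.deleteEdges {s(u, v)}).Reachable u v := by
  have hb := (SimpleGraph.isAcyclic_iff_forall_edge_isBridge.mp hT)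
    (e := s(u, v)) ((T.mem_edgeSet).mpr h)
  rw [SimpleGraph.isBridge_iff] at hb
  exact hb

lemma reachable_delete_or (hT : T.Connected) {u v : Fin N} (h : T.Adj u v) (x : Fin N) :
    (T.deleteEdges {s(u, v)}).Reachable u x ∨ (T.deleteEdges {s(u, v)}).Reachable v x := by
  have key : ∀ {a : Fin N} (p : T.Walk a x),
      (T.deleteEdges {s(u, v)}).Reachable a x ∨
        ((T.deleteEdges {s(u, v)}).Reachable u x ∨ (T.deleteEdges {s(u, v)}).Reachable v x) := by
    intro a p
    induction p with
    | nil => exact Or.inl (SimpleGraph.Reachable.refl _)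
    | @cons a b c hadj q ih =>
      rcases ih with hbx | hrest
      · by_cases he : s(a, b) = s(u, v)
        · rw [Sym2.eq_iff] at he
          rcases he with ⟨rfl, rfl⟩ | ⟨rfl, rfl⟩
          · exact Or.inr (Or.inr hbx)
          · exact Or.inr (Or.inl hbx)
        · have : (T.deleteEdges {s(u, v)}).Adj a b := by
            rw [SimpleGraph.deleteEdges_adj]
            exact ⟨hadj, by simpa using he⟩
          exact Or.inl (this.reachable.trans hbx)
      · exact Or.inr hrest
  rcases hT.preconnected u x with ⟨p⟩
  rcases key p with h' | h'
  · exact Or.inl h'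
  · exact h'

lemma not_reachable_both (hT : T.IsTree) {u v : Fin N} (h : T.Adj u v) (x : Fin N) :
    ¬ ((T.deleteEdges {s(u, v)}).Reachable u x ∧ (T.deleteEdges {s(u, v)}).Reachable v x) := by
  rintro ⟨h1, h2⟩
  exact not_reachable_delete hT.IsAcyclic h (h1.trans h2.symm)

lemma sideC_add_sideC (hT : T.IsTree) {u v : Fin N} (h : T.Adj u v) (X : Finset (Fin N)) :
    sideC T X s(u, v) u + sideC T X s(u, v) v = X.card := by
  unfold sideC
  have hkey := Finset.card_filter_add_card_filter_not
    (s := X) (p := fun x => (T.deleteEdges {s(u, v)}).Reachable u x)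
  have heq : (X.filter fun x => ¬ (T.deleteEdges {s(u, v)}).Reachable u x) =
      (X.filter fun x => (T.deleteEdges {s(u, v)}).Reachable v x) := by
    apply Finset.filter_congr
    intro x _
    constructor
    · intro hnu
      rcases reachable_delete_or hT.isConnected h x with h' | h'
      · exact absurd h' hnu
      · exact h'
    · intro hv hu
      exact not_reachable_both hT h x ⟨hu, hv⟩
  rw [heq] at hkey
  exact hkey

lemma oddEdge_iff_sideC (hT : T.IsTree) {u v : Fin N} (h : T.Adj u v) {X : Finset (Fin N)}
    (hX : Even X.card) : OddEdge T X s(u, v) ↔ Odd (sideC T X s(u, v) u) := by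
  rw [oddEdge_iff']
  constructor
  · rintro ⟨-, h2⟩
    exact h2 u (Sym2.mem_mk_left u v)
  · intro hodd
    refine ⟨(T.mem_edgeSet).mpr h, ?_⟩
    intro w hw
    rw [Sym2.mem_iff] at hw
    have hsum := sideC_add_sideC hT h X
    rcases hw with rfl | rfl
    · exact hodd
    · rw [Nat.even_iff] at hX
      rw [Nat.odd_iff] at *
      omega

/-- Every vertex other than `v` lies on the far side of some edge at `v`. -/
lemma exists_neighbor_side (hT : T.IsTree) {v x : Fin N} (hx : x ≠ v) :
    ∃ w, T.Adj v w ∧ (T.deleteEdges {s(v, w)}).Reachable w x := by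
  rcases hT.isConnected.preconnected v x with ⟨p⟩
  obtain ⟨q, hq⟩ : ∃ q : T.Walk v x, q.IsPath := ⟨p.toPath.val, p.toPath.prop⟩
  cases q with
  | nil => exact absurd rfl hx
  | cons h r =>
    rename_i b
    rw [SimpleGraph.Walk.cons_isPath_iff] at hq
    refine ⟨b, h, ?_⟩
    refine ⟨r.toDeleteEdges {s(v, b)} ?_⟩
    intro e he
    simp only [Set.mem_singleton_iff]
    rintro rfl
    exact hq.2 (r.fst_mem_support_of_mem_edges he)

/-- Distinct neighbors of `v` have disjoint far sides. -/
lemma sides_disjoint (hT : T.IsTree) {v w w' x : Fin N} (hadj : T.Adj v w)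
    (hadj' : T.Adj v w') (hne : w ≠ w')
    (h1 : (T.deleteEdges {s(v, w)}).Reachable w x)
    (h2 : (T.deleteEdges {s(v, w')}).Reachable w' x) : False := by
  have hbr' : ¬ (T.deleteEdges {s(v, w')}).Reachable v w' :=
    not_reachable_delete hT.IsAcyclic hadj'
  obtain ⟨W⟩ := h2
  have hv : v ∉ W.support := by
    intro hvs
    exact hbr' (SimpleGraph.Reachable.symm ⟨W.takeUntil v hvs⟩)
  have hE : ∀ e ∈ W.edges, e ∈ T.edgeSet := fun e he =>
    SimpleGraph.edgeSet_mono (T.deleteEdges_le _) (W.edges_subset_edgeSet he)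
  have hW' : ∀ e ∈ (W.transfer T hE).edges, e ∉ ({s(v, w)} : Set (Sym2 (Fin N))) := by
    intro e he
    rw [SimpleGraph.Walk.edges_transfer] at he
    simp only [Set.mem_singleton_iff]
    rintro rfl
    exact hv (W.fst_mem_support_of_mem_edges he)
  have h2' : (T.deleteEdges {s(v, w)}).Reachable w' x :=
    ⟨(W.transfer T hE).toDeleteEdges _ hW'⟩
  have hvw' : (T.deleteEdges {s(v, w)}).Adj v w' := by
    rw [SimpleGraph.deleteEdges_adj]
    refine ⟨hadj', ?_⟩
    simp only [Set.mem_singleton_iff, Sym2.congr_right]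
    exact hne.symm
  exact not_reachable_delete hT.IsAcyclic hadj
    (hvw'.reachable.trans (h2'.trans h1.symm))

/-- The graph on the odd edges. -/
noncomputable def oddGraph (T : SimpleGraph (Fin N)) (Z : Finset (Fin N)) :
    SimpleGraph (Fin N) where
  Adj v w := OddEdge T Z s(v, w)
  symm := by
    refine ⟨fun v w h => ?_⟩
    rwa [Sym2.eq_swap] at h
  loopless := by
    refine ⟨fun v h => ?_⟩
    exact T.loopless.irrefl v ((T.mem_edgeSet).mp h.1)

lemma odd_degree_iff (hT : T.IsTree) {Z : Finset (Fin N)} (hZ : Even Z.card) (v : Fin N) :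
    Odd ((oddGraph T Z).degree v) ↔ v ∈ Z := by
  classical
  rw [← SimpleGraph.card_neighborFinset_eq_degree]
  have hnb : (oddGraph T Z).neighborFinset v
      = (T.neighborFinset v).filter (fun w => OddEdge T Z s(v, w)) := by
    ext w
    simp only [SimpleGraph.mem_neighborFinset, Finset.mem_filter]
    constructor
    · intro h
      exact ⟨(T.mem_edgeSet).mp h.1, h⟩
    · exact fun h => h.2
  rw [hnb]
  -- identify with odd side counts
  have hfilter : (T.neighborFinset v).filter (fun w => OddEdge T Z s(v, w))
      = (T.neighborFinset v).filter (fun w => Odd (sideC T Z s(v, w) w)) := by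
    apply Finset.filter_congr
    intro w hw
    rw [SimpleGraph.mem_neighborFinset] at hw
    rw [show s(v, w) = s(w, v) from Sym2.eq_swap, oddEdge_iff_sideC hT hw.symm hZ]
  rw [hfilter, ← Finset.odd_sum_iff_odd_card_odd (fun w => sideC T Z s(v, w) w)]
  -- the sum of side counts is the number of elements of `Z` other than `v`
  have hsum : ∑ w ∈ T.neighborFinset v, sideC T Z s(v, w) w = (Z.erase v).card := by
    unfold sideC
    rw [← Finset.card_biUnion]
    · congr 1
      ext x
      simp only [Finset.mem_biUnion, Finset.mem_filter, Finset.mem_erase,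
        SimpleGraph.mem_neighborFinset]
      constructor
      · rintro ⟨w, hw, hxZ, hr⟩
        refine ⟨?_, hxZ⟩
        rintro rfl
        exact not_reachable_delete hT.IsAcyclic hw hr.symm
      · rintro ⟨hxv, hxZ⟩
        obtain ⟨w, hw, hr⟩ := exists_neighbor_side hT hxv
        exact ⟨w, hw, hxZ, hr⟩
    · intro w hw w' hw' hne
      rw [Finset.mem_coe, SimpleGraph.mem_neighborFinset] at hw hw'
      simp only [Function.onFun, Finset.disjoint_left, Finset.mem_filter]
      rintro x ⟨-, h1⟩ ⟨-, h2⟩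
      exact sides_disjoint hT hw hw' hne h1 h2
  rw [hsum]
  by_cases hv : v ∈ Z
  · have h1 : (Z.erase v).card = Z.card - 1 := Finset.card_erase_of_mem hv
    have h2 : 1 ≤ Z.card := Finset.card_pos.mpr ⟨v, hv⟩
    rw [h1]
    rw [Nat.even_iff] at hZ
    rw [Nat.odd_iff]
    simp only [hv, iff_true]
    omega
  · rw [Finset.erase_eq_of_notMem hv]
    rw [Nat.even_iff] at hZ
    rw [Nat.odd_iff]
    simp only [hv, iff_false]
    omega

/-- The component graph of `i`. -/
noncomputable def compGraph (G : SimpleGraph (Fin N)) (i : Fin N) : SimpleGraph (Fin N) where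
  Adj v w := G.Adj v w ∧ G.Reachable i v ∧ G.Reachable i w
  symm := ⟨fun v w ⟨h, h1, h2⟩ => ⟨h.symm, h2, h1⟩⟩
  loopless := ⟨fun v h => G.loopless.irrefl v h.1⟩

lemma compGraph_degree (G : SimpleGraph (Fin N)) (i v : Fin N) :
    (compGraph G i).degree v = if G.Reachable i v then G.degree v else 0 := by
  classical
  rw [← SimpleGraph.card_neighborFinset_eq_degree]
  split_ifs with h
  · rw [← SimpleGraph.card_neighborFinset_eq_degree]
    congr 1
    ext w
    simp only [SimpleGraph.mem_neighborFinset]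
    exact ⟨fun hw => hw.1, fun hw => ⟨hw, h, h.trans hw.reachable⟩⟩
  · rw [Finset.card_eq_zero]
    ext w
    simp only [SimpleGraph.mem_neighborFinset, Finset.notMem_empty, iff_false]
    intro hw
    exact h hw.2.1

/-- There is another vertex of `Z` in the odd‑edge component of `i`. -/
lemma exists_partner (hT : T.IsTree) {Z : Finset (Fin N)} (hZ : Even Z.card)
    {i : Fin N} (hi : i ∈ Z) :
    ∃ j, j ≠ i ∧ j ∈ Z ∧ (oddGraph T Z).Reachable i j := by
  classical
  set G := oddGraph T Z
  set H := compGraph G i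
  have hdegi : Odd (H.degree i) := by
    rw [compGraph_degree, if_pos (SimpleGraph.Reachable.refl i)]
    exact (odd_degree_iff hT hZ i).mpr hi
  have heven := H.even_card_odd_degree_vertices
  set S := Finset.univ.filter fun v => Odd (H.degree v) with hS
  have hiS : i ∈ S := by simp [hS, hdegi]
  have hlt : 1 < S.card := by
    rcases heven with ⟨k, hk⟩
    have : 1 ≤ S.card := Finset.card_pos.mpr ⟨i, hiS⟩
    omega
  obtain ⟨j, hjS, hji⟩ := Finset.exists_mem_ne hlt i
  rw [hS, Finset.mem_filter] at hjS
  have hdegj := hjS.2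
  rw [compGraph_degree] at hdegj
  by_cases hr : G.Reachable i j
  · rw [if_pos hr] at hdegj
    exact ⟨j, hji, (odd_degree_iff hT hZ j).mp hdegj, hr⟩
  · rw [if_neg hr] at hdegj
    simp at hdegj

/-- Every odd edge of `{i,j}` is an odd edge of `Z` if `i` and `j` are connected in
the odd‑edge graph of `Z`. -/
lemma oddEdge_pair_subset (hT : T.IsTree) {Z : Finset (Fin N)} {i j : Fin N} (hij : i ≠ j)
    (hR : (oddGraph T Z).Reachable i j) (e : Sym2 (Fin N)) (he : OddEdge T {i, j} e) :
    OddEdge T Z e := by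
  revert he
  induction e using Sym2.ind with
  | _ u v =>
  intro he
  by_contra hnot
  have hadj : T.Adj u v := (T.mem_edgeSet).mp he.1
  rw [oddEdge_iff'] at he
  -- the edge separates i and j
  have hsep : ¬ (T.deleteEdges {s(u, v)}).Reachable i j := by
    intro hRij
    have hcard : ({i, j} : Finset (Fin N)).card = 2 := Finset.card_pair hij
    have key : ∀ w, w ∈ s(u, v) → (T.deleteEdges {s(u, v)}).Reachable w i → False := by
      intro w hw hwi
      have hodd := he.2 w hw
      have : ({i, j} : Finset (Fin N)).filter
          (fun x => (T.deleteEdges {s(u, v)}).Reachable w x) = {i, j} := by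
        rw [Finset.filter_eq_self]
        intro x hx
        rcases Finset.mem_insert.mp hx with rfl | hx
        · exact hwi
        · rw [Finset.mem_singleton] at hx
          subst hx
          exact hwi.trans hRij
      rw [sideC, this, hcard] at hodd
      have := Nat.odd_iff.mp hodd; omega
    rcases reachable_delete_or hT.isConnected hadj i with h' | h'
    · exact key u (Sym2.mem_mk_left u v) h'
    · exact key v (Sym2.mem_mk_right u v) h'
  -- but i and j are connected by odd edges of Z, none of which is s(u,v)
  obtain ⟨W⟩ := hR
  have hE : ∀ f ∈ W.edges, f ∈ T.edgeSet := by
    intro f hf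
    have := W.edges_subset_edgeSet hf
    revert this
    induction f using Sym2.ind with
    | _ a b =>
    intro hab
    exact hab.1
  have hW : ∀ f ∈ (W.transfer T hE).edges, f ∉ ({s(u, v)} : Set (Sym2 (Fin N))) := by
    intro f hf
    rw [SimpleGraph.Walk.edges_transfer] at hf
    simp only [Set.mem_singleton_iff]
    rintro rfl
    exact hnot (W.edges_subset_edgeSet hf)
  exact hsep ⟨(W.transfer T hE).toDeleteEdges _ hW⟩

noncomputable def OF (T : SimpleGraph (Fin N)) (X : Finset (Fin N)) : Finset (Sym2 (Fin N)) :=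
  Finset.univ.filter fun e => OddEdge T X e

lemma ncard_OF (X : Finset (Fin N)) : {e | OddEdge T X e}.ncard = (OF T X).card := by
  have : {e | OddEdge T X e} = ↑(OF T X) := by
    ext e; simp [OF]
  rw [this, Set.ncard_coe_finset]

lemma negOdd_of_even {X : Finset (Fin N)} (hX : Even X.card) :
    negOddDissimilarity T X = ((-(((OF T X).card : ℤ)) : ℤ) : WithBot ℤ) := by
  rw [negOddDissimilarity, if_pos hX, ncard_OF]

lemma OF_symmDiff (hT : T.IsTree) {X Y : Finset (Fin N)} (hX : Even X.card)
    (hY : Even Y.card) : OF T (X ∆ Y) = OF T X ∆ OF T Y := by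
  have hXY : Even (X ∆ Y).card := (parity_symmDiff X Y).mpr (by tauto)
  ext e
  simp only [OF, Finset.mem_symmDiff, Finset.mem_filter, Finset.mem_univ, true_and]
  by_cases he : e ∈ T.edgeSet
  · revert he
    induction e using Sym2.ind with
    | _ u v =>
    intro he
    have hadj : T.Adj u v := (T.mem_edgeSet).mp he
    rw [oddEdge_iff_sideC hT hadj hX, oddEdge_iff_sideC hT hadj hY,
      oddEdge_iff_sideC hT hadj hXY]
    set p : Fin N → Prop := fun x => (T.deleteEdges {s(u, v)}).Reachable u x with hp
    have hfe : ((X ∆ Y).filter fun x => p x) = (X.filter fun x => p x) ∆ (Y.filter fun x => p x) := by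
      ext a
      simp only [Finset.mem_filter, Finset.mem_symmDiff]
      tauto
    have hc := card_symmDiff_aux (X.filter fun x => p x) (Y.filter fun x => p x)
    simp only [sideC, ← hp, hfe]
    simp only [Nat.odd_iff]
    omega
  · have h1 : ¬ OddEdge T (X ∆ Y) e := fun h => he h.1
    have h2 : ¬ OddEdge T X e := fun h => he h.1
    have h3 : ¬ OddEdge T Y e := fun h => he h.1
    tauto


end VDMaux

open VDMaux in
/-- **The negative odd-dissimilarity map is a valuated Δ-matroid**: it
satisfies the tropical Wick exchange axiom. -/
theorem negOddDissimilarity_valuated_delta_matroid (N : ℕ)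
    (T : SimpleGraph (Fin N)) (hT : T.IsTree) (X Y : Finset (Fin N)) (i : Fin N)
    (hi : i ∈ X ∆ Y) :
    negOddDissimilarity T X + negOddDissimilarity T Y ≤
      ((X ∆ Y).erase i).sup fun j =>
        negOddDissimilarity T (X ∆ {i, j}) + negOddDissimilarity T (Y ∆ {i, j}) := by
  by_cases hX : Even X.card
  swap
  · simp [negOddDissimilarity, hX]
  by_cases hY : Even Y.card
  swap
  · simp [negOddDissimilarity, hY]
  have hZ : Even (X ∆ Y).card := (parity_symmDiff X Y).mpr (by tauto)
  obtain ⟨j, hji, hjZ, hR⟩ := exists_partner hT hZ hi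
  have hij : i ≠ j := hji.symm
  have hpair : ({i, j} : Finset (Fin N)).card = 2 := Finset.card_pair hij
  have hpairEven : Even ({i, j} : Finset (Fin N)).card := by rw [hpair]; exact even_two
  -- the four sets involved are all of even size
  have hXij : Even (X ∆ ({i, j} : Finset (Fin N))).card :=
    (parity_symmDiff _ _).mpr (by tauto)
  have hYij : Even (Y ∆ ({i, j} : Finset (Fin N))).card :=
    (parity_symmDiff _ _).mpr (by tauto)
  -- the key cardinality identity
  have hsub : OF T {i, j} ⊆ OF T X ∆ OF T Y := by
    rw [← OF_symmDiff hT hX hY]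
    intro e he
    simp only [OF, Finset.mem_filter, Finset.mem_univ, true_and] at he ⊢
    exact oddEdge_pair_subset hT hij hR e he
  have hkey : (OF T (X ∆ {i, j})).card + (OF T (Y ∆ {i, j})).card
      = (OF T X).card + (OF T Y).card := by
    rw [OF_symmDiff hT hX hpairEven, OF_symmDiff hT hY hpairEven]
    exact card_symmDiff_exchange hsub
  -- conclude
  refine le_trans ?_ (Finset.le_sup (Finset.mem_erase.mpr ⟨hji, hjZ⟩))
  rw [negOdd_of_even hX, negOdd_of_even hY, negOdd_of_even hXij, negOdd_of_even hYij,
    ← WithBot.coe_add, ← WithBot.coe_add, WithBot.coe_le_coe]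
  have h1 : ((OF T (X ∆ {i, j})).card : ℤ) + ((OF T (Y ∆ {i, j})).card : ℤ)
      = ((OF T X).card : ℤ) + ((OF T Y).card : ℤ) := by exact_mod_cast hkey
  omega
end

section
/- Let T be a tree with vertex set V, let r ∈ V, and let X ⊆ V ∖ {r} be nonempty. For a real number t, let M(t) be the symmetric matrix with entries m_{ij} = t^{d_{ij}} − t^{d_{ri} + d_{rj}} for i,j ∈ X (the Schur complement of the r-th diagonal entry in A(t)[X ∪ {r}]). Then there exists a real number t₀ such that for every real t > t₀, the matrix M(t) is negative definite. -/
open SimpleGraph Walk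
variable {V : Type*} {G : SimpleGraph V}

lemma myLength_drop {u v : V} (p : G.Walk u v) (n : ℕ) :
    (p.drop n).length = p.length - n := by
  induction p generalizing n with
  | nil => cases n <;> simp [Walk.drop]
  | cons h q ih =>
    cases n with
    | zero => simp [Walk.drop]
    | succ n => simp [Walk.drop, ih]

lemma myGetVert_drop {u v : V} (p : G.Walk u v) (n m : ℕ) :
    (p.drop n).getVert m = p.getVert (n + m) := by
  induction p generalizing n with
  | nil => cases n <;> simp [Walk.drop, Walk.getVert_of_length_le]
  | cons h q ih =>
    cases n with
    | zero => simp [Walk.drop]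
    | succ n =>
      have : n + 1 + m = (n + m) + 1 := by omega
      rw [this]
      simp [Walk.drop, ih, getVert_cons_succ]

lemma myIsPath_drop {u v : V} {p : G.Walk u v} (hp : p.IsPath) (n : ℕ) :
    (p.drop n).IsPath := by
  induction p generalizing n with
  | nil => cases n <;> simp [Walk.drop]
  | cons h q ih =>
    cases n with
    | zero => simpa [Walk.drop] using hp
    | succ n => simpa [Walk.drop] using ih hp.of_cons n

lemma dist_getVert_right {u x : V} (w : G.Walk u x) (k : ℕ) :
    G.dist (w.getVert k) x ≤ w.length - k :=
  le_trans (SimpleGraph.dist_le (w.drop k)) (le_of_eq (myLength_drop w k))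

lemma dist_getVert_left {u x : V} (w : G.Walk u x) (k : ℕ) (hk : k ≤ w.length) :
    G.dist u (w.getVert k) ≤ k := by
  have h1 := dist_getVert_right w.reverse (w.length - k)
  rw [Walk.getVert_reverse, Walk.length_reverse] at h1
  have h2 : w.length - (w.length - k) = k := by omega
  rw [h2] at h1
  calc G.dist u (w.getVert k) = G.dist (w.getVert k) u := SimpleGraph.dist_comm ..
  _ ≤ k := h1

lemma dist_getVert_between {u x : V} (w : G.Walk u x) (k : ℕ) (hk : k ≤ w.length)
    (m : ℕ) (hm : k ≤ m) (hmw : m ≤ w.length) :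
    G.dist (w.getVert k) (w.getVert m) ≤ m - k := by
  have := dist_getVert_left (w.drop k) (m - k) (by rw [myLength_drop]; omega)
  rwa [myGetVert_drop, show k + (m-k) = m by omega] at this

lemma geodesic_getVert {u x : V} (hc : G.Connected) (w : G.Walk u x) (hw : w.length = G.dist u x)
    (k : ℕ) (hk : k ≤ w.length) :
    G.dist u (w.getVert k) = k ∧ G.dist (w.getVert k) x = w.length - k := by
  have h1 := dist_getVert_left w k hk
  have h2 := dist_getVert_right w k
  have h3 : G.dist u x ≤ G.dist u (w.getVert k) + G.dist (w.getVert k) x :=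
    hc.dist_triangle
  omega

lemma tree_path_length (hT : G.IsTree) {u x : V} (q : G.Walk u x) (hq : q.IsPath) :
    q.length = G.dist u x := by
  obtain ⟨q', hq', hl'⟩ := hT.isConnected.exists_path_of_dist u x
  have : (⟨q, hq⟩ : G.Path u x) = ⟨q', hq'⟩ := hT.IsAcyclic.path_unique _ _
  rw [show q = q' from congrArg Subtype.val this, hl']

lemma btw_unique (hT : G.IsTree) {r u v w : V}
    (hv : G.dist r v + G.dist v u = G.dist r u)
    (hw : G.dist r w + G.dist w u = G.dist r u)
    (hd : G.dist r v = G.dist r w) : v = w := by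
  have hc := hT.isConnected
  obtain ⟨p1, hp1⟩ := hc.exists_walk_length_eq_dist r v
  obtain ⟨q1, hq1⟩ := hc.exists_walk_length_eq_dist v u
  obtain ⟨p2, hp2⟩ := hc.exists_walk_length_eq_dist r w
  obtain ⟨q2, hq2⟩ := hc.exists_walk_length_eq_dist w u
  have hW1 : (p1.append q1).IsPath := by
    apply Walk.isPath_of_length_eq_dist
    rw [Walk.length_append, hp1, hq1, hv]
  have hW2 : (p2.append q2).IsPath := by
    apply Walk.isPath_of_length_eq_dist
    rw [Walk.length_append, hp2, hq2, hw]
  have heq : p1.append q1 = p2.append q2 := by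
    have : (⟨p1.append q1, hW1⟩ : G.Path r u) = ⟨p2.append q2, hW2⟩ :=
      hT.IsAcyclic.path_unique _ _
    exact congrArg Subtype.val this
  have g1 : (p1.append q1).getVert (G.dist r v) = v := by
    rw [Walk.getVert_append, hp1]
    simp
  have g2 : (p2.append q2).getVert (G.dist r w) = w := by
    rw [Walk.getVert_append, hp2]
    simp
  rw [← g1, ← g2, heq, hd]

lemma meet_main [Fintype V] (hT : G.IsTree) (r i j : V) :
    ∃ (m : ℕ) (a : ℕ → V),
      m ≤ G.dist r i ∧ m ≤ G.dist r j ∧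
      G.dist i j + 2*m = G.dist r i + G.dist r j ∧
      (∀ ℓ, ℓ ≤ m → G.dist r (a ℓ) = ℓ ∧
          G.dist r (a ℓ) + G.dist (a ℓ) i = G.dist r i ∧
          G.dist r (a ℓ) + G.dist (a ℓ) j = G.dist r j) ∧
      (∀ v, G.dist r v + G.dist v i = G.dist r i →
          G.dist r v + G.dist v j = G.dist r j →
          G.dist r v ≤ m ∧ v = a (G.dist r v)) := by
  classical
  have hc := hT.isConnected
  obtain ⟨p, hp, hpl⟩ := hc.exists_path_of_dist r i
  obtain ⟨pj, hpj, hpjl⟩ := hc.exists_path_of_dist r j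
  set S : Finset V := Finset.univ.filter
    (fun v => G.dist r v + G.dist v i = G.dist r i ∧
              G.dist r v + G.dist v j = G.dist r j) with hS
  have hrS : r ∈ S := by
    simp [hS, SimpleGraph.dist_self]
  have hSne : (S.image (G.dist r)).Nonempty := ⟨_, Finset.mem_image_of_mem _ hrS⟩
  set m := (S.image (G.dist r)).max' hSne with hm
  obtain ⟨c, hcS, hcm⟩ : ∃ c ∈ S, G.dist r c = m := by
    have := (S.image (G.dist r)).max'_mem hSne
    rw [← hm] at this
    simpa using this
  have hSle : ∀ v ∈ S, G.dist r v ≤ m := fun v hv =>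
    Finset.le_max' _ _ (Finset.mem_image_of_mem _ hv)
  rw [hS, Finset.mem_filter] at hcS
  obtain ⟨-, hci, hcj⟩ := hcS
  have hmi : m ≤ G.dist r i := by omega
  have hmj : m ≤ G.dist r j := by omega
  -- ancestors along p
  have hanc : ∀ ℓ, ℓ ≤ G.dist r i →
      G.dist r (p.getVert ℓ) = ℓ ∧ G.dist (p.getVert ℓ) i = G.dist r i - ℓ := by
    intro ℓ hℓ
    have := geodesic_getVert hc p hpl ℓ (by omega)
    rwa [hpl] at this
  have hancj : ∀ ℓ, ℓ ≤ G.dist r j →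
      G.dist r (pj.getVert ℓ) = ℓ ∧ G.dist (pj.getVert ℓ) j = G.dist r j - ℓ := by
    intro ℓ hℓ
    have := geodesic_getVert hc pj hpjl ℓ (by omega)
    rwa [hpjl] at this
  have hcam : c = p.getVert m := by
    apply btw_unique hT (u := i) hci
    · have := hanc m hmi; omega
    · rw [hcm, (hanc m hmi).1]
  have hcbm : c = pj.getVert m := by
    apply btw_unique hT (u := j) hcj
    · have := hancj m hmj; omega
    · rw [hcm, (hancj m hmj).1]
  -- common prefix
  have hcommon : ∀ ℓ, ℓ ≤ m → p.getVert ℓ = pj.getVert ℓ := by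
    intro ℓ hℓ
    have hai := hanc ℓ (by omega)
    have haj := hancj ℓ (by omega)
    have h1 : G.dist (p.getVert ℓ) c ≤ m - ℓ := by
      rw [hcam]
      exact dist_getVert_between p ℓ (by omega) m hℓ (by omega)
    have h2 : G.dist (pj.getVert ℓ) c ≤ m - ℓ := by
      rw [hcbm]
      exact dist_getVert_between pj ℓ (by omega) m hℓ (by omega)
    have ht1 : G.dist r c ≤ G.dist r (p.getVert ℓ) + G.dist (p.getVert ℓ) c :=
      hc.dist_triangle
    have ht2 : G.dist r c ≤ G.dist r (pj.getVert ℓ) + G.dist (pj.getVert ℓ) c :=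
      hc.dist_triangle
    exact btw_unique hT (r := r) (u := c) (v := p.getVert ℓ) (w := pj.getVert ℓ)
      (by omega) (by omega) (by rw [hai.1, haj.1])
  refine ⟨m, p.getVert, hmi, hmj, ?_, ?_, ?_⟩
  · -- distance formula
    have hcast : pj.getVert m = p.getVert m := (hcommon m le_rfl).symm
    set B := (pj.drop m).copy hcast rfl with hB
    have hBpath : B.IsPath := by
      simpa [hB] using myIsPath_drop hpj m
    have hApath : (p.drop m).reverse.IsPath := (myIsPath_drop hp m).reverse
    have hW : ((p.drop m).reverse.append B).IsPath := by
      rw [Walk.isPath_def, Walk.support_append, List.nodup_append]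
      have hBcons := Walk.support_eq_cons B
      have hBnodup := hBpath.support_nodup
      rw [hBcons, List.nodup_cons] at hBnodup
      refine ⟨hApath.support_nodup, hBnodup.2, ?_⟩
      intro u hu1 u' hu2 huu'
      subst huu'
      rw [Walk.support_reverse, List.mem_reverse,
        Walk.mem_support_iff_exists_getVert] at hu1
      obtain ⟨n, hn, hnle⟩ := hu1
      rw [myGetVert_drop] at hn
      rw [myLength_drop, hpl] at hnle
      have huB : u ∈ B.support := List.mem_of_mem_tail hu2
      rw [hB, Walk.support_copy, Walk.mem_support_iff_exists_getVert] at huB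
      obtain ⟨n', hn', hnle'⟩ := huB
      rw [myGetVert_drop] at hn'
      rw [myLength_drop, hpjl] at hnle'
      obtain ⟨d1a, d1b⟩ := hanc (m+n) (by omega)
      obtain ⟨d2a, d2b⟩ := hancj (m+n') (by omega)
      rw [hn] at d1a d1b
      rw [hn'] at d2a d2b
      have huS : u ∈ S := by
        rw [hS, Finset.mem_filter]
        exact ⟨Finset.mem_univ u, by omega, by omega⟩
      have hum := hSle u huS
      have hn0 : n = 0 := by omega
      have hn'0 : n' = 0 := by omega
      have hu_eq : u = p.getVert m := by
        rw [← hn, hn0, Nat.add_zero]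
      rw [hu_eq] at hu2
      exact hBnodup.1 hu2
    have hlen := tree_path_length hT _ hW
    rw [Walk.length_append, Walk.length_reverse, Walk.length_copy,
      myLength_drop, myLength_drop, hpl, hpjl] at hlen
    omega
  · intro ℓ hℓ
    have hai := hanc ℓ (by omega)
    have haj := hancj ℓ (by omega)
    obtain ⟨hai1, hai2⟩ := hai
    obtain ⟨haj1, haj2⟩ := haj
    rw [show p.getVert ℓ = pj.getVert ℓ from hcommon ℓ hℓ] at hai1 hai2 ⊢
    exact ⟨haj1, by omega, by omega⟩
  · intro v hvi hvj
    have hvS : v ∈ S := by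
      rw [hS, Finset.mem_filter]
      exact ⟨Finset.mem_univ v, hvi, hvj⟩
    refine ⟨hSle v hvS, ?_⟩
    apply btw_unique hT (u := i) hvi
    · have := hanc (G.dist r v) (by omega); omega
    · exact ((hanc (G.dist r v) (by omega)).1).symm

lemma geom_sum_tree (t : ℝ) : ∀ (K m : ℕ), 2*m ≤ K →
    (t^2 - 1) * ∑ ℓ ∈ Finset.Icc 1 m, t ^ (K - 2*ℓ) = t ^ K - t ^ (K - 2*m) := by
  intro K m
  induction m with
  | zero => simp
  | succ m ih =>
    intro h
    rw [Finset.sum_Icc_succ_top (by omega)]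
    have h2 : t^2 * t^(K - 2*(m+1)) = t^(K - 2*m) := by
      rw [← pow_add]; congr 1; omega
    have h3 := ih (by omega)
    ring_nf at h2 h3 ⊢
    linear_combination h3 + h2

lemma core_identity [Fintype V] [DecidableEq V] (hT : G.IsTree) (r i j : V) (t : ℝ) :
    (t^2 - 1) * ∑ v : V,
      (if v ≠ r ∧ G.dist r v + G.dist v i = G.dist r i then t ^ G.dist v i else 0)
      * (if v ≠ r ∧ G.dist r v + G.dist v j = G.dist r j then t ^ G.dist v j else 0)
    = t ^ (G.dist r i + G.dist r j) - t ^ G.dist i j := by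
  classical
  have hc := hT.isConnected
  obtain ⟨m, a, hmi, hmj, hdist, hanc, hmax⟩ := meet_main hT r i j
  have hptwise : ∀ v : V,
      (if v ≠ r ∧ G.dist r v + G.dist v i = G.dist r i then t ^ G.dist v i else 0)
      * (if v ≠ r ∧ G.dist r v + G.dist v j = G.dist r j then t ^ G.dist v j else 0)
      = if v ≠ r ∧ (G.dist r v + G.dist v i = G.dist r i ∧
          G.dist r v + G.dist v j = G.dist r j) then t ^ (G.dist v i + G.dist v j) else 0 := by
    intro v
    split_ifs with h1 h2 h3 h2 <;> first | tauto | rw [pow_add] | ring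
  rw [Finset.sum_congr rfl (fun v _ => hptwise v), ← Finset.sum_filter]
  have hbij : ∑ v ∈ Finset.univ.filter (fun v => v ≠ r ∧
        (G.dist r v + G.dist v i = G.dist r i ∧ G.dist r v + G.dist v j = G.dist r j)),
        t ^ (G.dist v i + G.dist v j)
      = ∑ ℓ ∈ Finset.Icc 1 m, t ^ ((G.dist r i - ℓ) + (G.dist r j - ℓ)) := by
    apply Finset.sum_nbij' (i := fun v => G.dist r v) (j := a)
    · intro v hv
      rw [Finset.mem_filter] at hv
      obtain ⟨-, hvr, hv1, hv2⟩ := hv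
      rw [Finset.mem_Icc]
      have h0 : G.dist r v ≠ 0 := by
        intro h
        exact hvr ((hc.preconnected r v).dist_eq_zero_iff.mp h).symm
      have := (hmax v hv1 hv2).1
      omega
    · intro ℓ hℓ
      rw [Finset.mem_Icc] at hℓ
      obtain ⟨hd, hb1, hb2⟩ := hanc ℓ hℓ.2
      rw [Finset.mem_filter]
      refine ⟨Finset.mem_univ _, ?_, hb1, hb2⟩
      intro h
      rw [h, SimpleGraph.dist_self] at hd
      omega
    · intro v hv
      rw [Finset.mem_filter] at hv
      exact ((hmax v hv.2.2.1 hv.2.2.2).2).symm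
    · intro ℓ hℓ
      rw [Finset.mem_Icc] at hℓ
      exact (hanc ℓ hℓ.2).1
    · intro v hv
      rw [Finset.mem_filter] at hv
      obtain ⟨-, hvr, hv1, hv2⟩ := hv
      obtain ⟨hle, hveq⟩ := hmax v hv1 hv2
      congr 1
      omega
  rw [hbij]
  have hexp : ∀ ℓ ∈ Finset.Icc 1 m,
      t ^ ((G.dist r i - ℓ) + (G.dist r j - ℓ)) = t ^ ((G.dist r i + G.dist r j) - 2*ℓ) := by
    intro ℓ hℓ
    rw [Finset.mem_Icc] at hℓ
    congr 1
    omega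
  rw [Finset.sum_congr rfl hexp, geom_sum_tree t _ m (by omega)]
  congr 2
  omega

/-- **Negative definiteness of the Schur complement.** For a tree `T`, a root
`r` and nonempty `X ⊆ V ∖ {r}`, the matrix `M(t)` with entries
`t^{d i j} − t^{d r i + d r j}` (the Schur complement of the `r`-th diagonal
entry of `A(t)[X ∪ {r}]`) is negative definite for all sufficiently large
real `t`, i.e. `−M(t)` is positive definite. -/
theorem schur_complement_negDef (N : ℕ) (T : SimpleGraph (Fin N)) (hT : T.IsTree)
    (r : Fin N) (X : Finset (Fin N)) (hX : X.Nonempty) (hr : r ∉ X) :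
    ∃ t₀ : ℝ, ∀ t : ℝ, t₀ < t →
      (-(Matrix.of fun i j : {x // x ∈ X} =>
          t ^ T.dist i j - t ^ (T.dist r i + T.dist r j))).PosDef := by
  classical
  refine ⟨1, fun t ht => ?_⟩
  have hc := hT.isConnected
  have ht2 : 0 < t^2 - 1 := by nlinarith
  set f : Fin N → {x // x ∈ X} → ℝ := fun v i =>
    if v ≠ r ∧ T.dist r v + T.dist v ↑i = T.dist r ↑i then t ^ T.dist v (↑i) else 0 with hf
  have hfv : ∀ (v : Fin N) (i : {x // x ∈ X}), f v i =
      if v ≠ r ∧ T.dist r v + T.dist v ↑i = T.dist r ↑i then t ^ T.dist v (↑i) else 0 :=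
    fun v i => rfl
  have hA : ∀ i j : {x // x ∈ X},
      (-(Matrix.of fun i j : {x // x ∈ X} =>
          t ^ T.dist ↑i ↑j - t ^ (T.dist r ↑i + T.dist r ↑j))) i j
      = (t^2 - 1) * ∑ v : Fin N, f v i * f v j := by
    intro i j
    simp only [Matrix.neg_apply, Matrix.of_apply, hf]
    rw [core_identity hT r ↑i ↑j t]
    ring
  refine Matrix.posDef_iff_dotProduct_mulVec.mpr ⟨?_, ?_⟩
  · show Matrix.conjTranspose _ = _
    ext i j
    simp only [Matrix.conjTranspose_apply, Matrix.neg_apply, Matrix.of_apply, star_trivial]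
    rw [SimpleGraph.dist_comm (u := (↑j : Fin N)), add_comm (T.dist r ↑j)]
  · intro x hx
    have hqf : dotProduct (star x) (Matrix.mulVec (-(Matrix.of fun i j : {x // x ∈ X} =>
          t ^ T.dist ↑i ↑j - t ^ (T.dist r ↑i + T.dist r ↑j))) x)
        = (t^2 - 1) * ∑ v : Fin N, (∑ i, f v i * x i)^2 := by
      rw [star_trivial]
      unfold dotProduct Matrix.mulVec
      calc ∑ i, x i * ∑ j, (-(Matrix.of fun i j : {x // x ∈ X} =>
              t ^ T.dist ↑i ↑j - t ^ (T.dist r ↑i + T.dist r ↑j))) i j * x j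
          = ∑ i, ∑ j, ∑ v : Fin N, (t^2-1) * ((f v i * x i) * (f v j * x j)) := by
            apply Finset.sum_congr rfl
            intro i _
            rw [Finset.mul_sum]
            apply Finset.sum_congr rfl
            intro j _
            rw [hA i j, Finset.mul_sum, Finset.sum_mul, Finset.mul_sum]
            apply Finset.sum_congr rfl
            intro v _
            ring
        _ = ∑ i, ∑ v : Fin N, ∑ j, (t^2-1) * ((f v i * x i) * (f v j * x j)) :=
            Finset.sum_congr rfl (fun i _ => Finset.sum_comm)
        _ = ∑ v : Fin N, ∑ i, ∑ j, (t^2-1) * ((f v i * x i) * (f v j * x j)) :=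
            Finset.sum_comm
        _ = (t^2 - 1) * ∑ v : Fin N, (∑ i, f v i * x i)^2 := by
            rw [Finset.mul_sum]
            apply Finset.sum_congr rfl
            intro v _
            simp only [sq, Finset.sum_mul, Finset.mul_sum]
            refine Finset.sum_congr rfl fun i _ => Finset.sum_congr rfl fun j _ => by ring
    rw [hqf]
    -- choose i₀ of maximal depth in the support of x
    set Sup := Finset.univ.filter (fun i : {x // x ∈ X} => x i ≠ 0) with hSup
    have hSupne : Sup.Nonempty := by
      obtain ⟨i, hi⟩ := Function.ne_iff.mp hx
      refine ⟨i, ?_⟩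
      simp only [hSup, Finset.mem_filter]
      exact ⟨Finset.mem_univ i, by simpa using hi⟩
    have hImne : (Sup.image (fun i : {x // x ∈ X} => T.dist r ↑i)).Nonempty :=
      hSupne.image _
    obtain ⟨i₀, hi₀S, hi₀d⟩ : ∃ i₀ ∈ Sup,
        T.dist r ↑i₀ = (Sup.image (fun i : {x // x ∈ X} => T.dist r ↑i)).max' hImne := by
      have := (Sup.image (fun i : {x // x ∈ X} => T.dist r ↑i)).max'_mem hImne
      simpa using this
    have hxi₀ : x i₀ ≠ 0 := by
      rw [hSup, Finset.mem_filter] at hi₀S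
      exact hi₀S.2
    have hterm : (∑ i, f (↑i₀) i * x i) = x i₀ := by
      rw [Finset.sum_eq_single i₀]
      · have : f (↑i₀) i₀ = 1 := by
          have h1 : (↑i₀ : Fin N) ≠ r := fun h => hr (h ▸ i₀.2)
          have hcond : (↑i₀ : Fin N) ≠ r ∧
              T.dist r ↑i₀ + T.dist (↑i₀ : Fin N) ↑i₀ = T.dist r ↑i₀ :=
            ⟨h1, by simp [SimpleGraph.dist_self]⟩
          rw [hfv, if_pos hcond, SimpleGraph.dist_self, pow_zero]
        rw [this, one_mul]
      · intro i _ hne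
        by_cases hxi : x i = 0
        · rw [hxi, mul_zero]
        · have hfz : f (↑i₀) i = 0 := by
            rw [hf]
            apply if_neg
            rintro ⟨h1, h2⟩
            have hle : T.dist r ↑i ≤ T.dist r ↑i₀ := by
              rw [hi₀d]
              apply Finset.le_max'
              apply Finset.mem_image_of_mem
              simp [hSup, hxi]
            have hdz : T.dist (↑i₀ : Fin N) ↑i = 0 := by omega
            have := (hc.preconnected (↑i₀ : Fin N) ↑i).dist_eq_zero_iff.mp hdz
            exact hne (Subtype.ext this).symm
          rw [hfz, zero_mul]
      · intro h
        exact absurd (Finset.mem_univ i₀) h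
    have hge : (x i₀)^2 ≤ ∑ v : Fin N, (∑ i, f v i * x i)^2 := by
      rw [← hterm]
      exact Finset.single_le_sum (f := fun v : Fin N => (∑ i, f v i * x i)^2)
        (fun v _ => sq_nonneg _) (Finset.mem_univ (↑i₀ : Fin N))
    calc (0:ℝ) < (t^2-1) * (x i₀)^2 :=
          mul_pos ht2 (pow_two_pos_of_ne_zero hxi₀)
      _ ≤ (t^2-1) * ∑ v : Fin N, (∑ i, f v i * x i)^2 :=
          mul_le_mul_of_nonneg_left hge (le_of_lt ht2)
end

section
/- Let T be a tree with vertex set V = {1,2,…,N} and let X ⊆ V. Call a permutation σ of X tight if for every edge e of T, the number of elements i ∈ X such that e lies on the unique path in T from i to σ(i) is either 0 or 2. Then for every real number t, det A(t)[X] = ∑_σ sign(σ) · t^{∑_{i∈X} d_{i,σ(i)}}, where the sum is over all tight permutations σ of X. -/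
open scoped Classical

/-- An edge `e` lies on the unique path between `i` and `j` in the graph `G`
iff its removal disconnects `i` from `j`. -/
def EdgeOnPath {V : Type*} (G : SimpleGraph V) (e : Sym2 V) (i j : V) : Prop :=
  ¬ (G.deleteEdges {e}).Reachable i j

/-- A permutation `σ` of `X` is tight (w.r.t. the tree `T`) if every edge of
`T` lies on the path from `i` to `σ i` for either `0` or `2` elements
`i ∈ X`. -/
def TightPerm {N : ℕ} (T : SimpleGraph (Fin N)) (X : Finset (Fin N))
    (σ : Equiv.Perm {x // x ∈ X}) : Prop :=
  ∀ e ∈ T.edgeSet,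
    {i : {x // x ∈ X} | EdgeOnPath T e i (σ i)}.ncard = 0 ∨
    {i : {x // x ∈ X} | EdgeOnPath T e i (σ i)}.ncard = 2

namespace TightAux

open SimpleGraph Finset

lemma edgeOnPath_iff {V : Type*} (G : SimpleGraph V) (e : Sym2 V) (i j : V) :
    EdgeOnPath G e i j ↔ ¬ (G.deleteEdges {e}).Reachable i j := Iff.rfl

lemma reach_or_aux {V : Type*} {G : SimpleGraph V} (u v : V) {x y : V} (p : G.Walk x y) :
    (G.deleteEdges {s(u,v)}).Reachable x u ∨ (G.deleteEdges {s(u,v)}).Reachable x v ∨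
      (G.deleteEdges {s(u,v)}).Reachable x y := by
  induction p with
  | nil => exact Or.inr (Or.inr (Reachable.refl _))
  | @cons a b c h q ih =>
    by_cases hab : s(a, b) = s(u, v)
    · rw [Sym2.eq_iff] at hab
      rcases hab with ⟨rfl, rfl⟩ | ⟨rfl, rfl⟩
      · exact Or.inl (Reachable.refl _)
      · exact Or.inr (Or.inl (Reachable.refl _))
    · have hadj : (G.deleteEdges {s(u,v)}).Adj a b := by
        rw [SimpleGraph.deleteEdges_adj]
        exact ⟨h, by simpa using hab⟩
      rcases ih with h' | h' | h'
      · exact Or.inl (hadj.reachable.trans h')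
      · exact Or.inr (Or.inl (hadj.reachable.trans h'))
      · exact Or.inr (Or.inr (hadj.reachable.trans h'))

lemma reach_or {V : Type*} {G : SimpleGraph V} (hc : G.Connected) (u v x : V) :
    (G.deleteEdges {s(u,v)}).Reachable x u ∨ (G.deleteEdges {s(u,v)}).Reachable x v := by
  obtain ⟨p⟩ := hc x u
  rcases reach_or_aux u v p with h | h | h
  · exact Or.inl h
  · exact Or.inr h
  · exact Or.inl h

lemma tree_bridge {V : Type*} {G : SimpleGraph V} (hA : G.IsAcyclic) {u v : V}
    (h : G.Adj u v) : ¬ (G.deleteEdges {s(u,v)}).Reachable u v := by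
  have hb := (SimpleGraph.isAcyclic_iff_forall_adj_isBridge.mp hA) h
  rw [SimpleGraph.isBridge_iff] at hb
  exact hb

lemma not_reach_of_mem_edges {V : Type*} {G : SimpleGraph V} (hA : G.IsAcyclic)
    {f : Sym2 V} {x y : V} (p : G.Walk x y) (hnd : p.edges.Nodup) (hf : f ∈ p.edges) :
    ¬ (G.deleteEdges {f}).Reachable x y := by
  induction p with
  | nil => simp at hf
  | @cons a b c h q ih =>
    rw [SimpleGraph.Walk.edges_cons, List.nodup_cons] at hnd
    rw [SimpleGraph.Walk.edges_cons, List.mem_cons] at hf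
    rcases hf with rfl | hf
    · have h1 : ¬ (G.deleteEdges {s(a,b)}).Reachable a b := tree_bridge hA h
      have h2 : (G.deleteEdges {s(a,b)}).Reachable b c :=
        ⟨q.toDeleteEdges _ (fun e he => by
          simp only [Set.mem_singleton_iff]
          rintro rfl; exact hnd.1 he)⟩
      intro hr; exact h1 (hr.trans h2.symm)
    · have h1 : (G.deleteEdges {f}).Adj a b := by
        rw [SimpleGraph.deleteEdges_adj]
        refine ⟨h, ?_⟩
        simp only [Set.mem_singleton_iff]
        rintro rfl; exact hnd.1 hf
      have h2 := ih hnd.2 hf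
      intro hr; exact h2 (h1.reachable.symm.trans hr)

variable {N : ℕ}

lemma dist_eq_card {T : SimpleGraph (Fin N)} (hT : T.IsTree) (i j : Fin N) :
    T.dist i j = (T.edgeFinset.filter (fun f => EdgeOnPath T f i j)).card := by
  obtain ⟨p, hp, hl⟩ := hT.isConnected.exists_path_of_dist i j
  have hnd : p.edges.Nodup := hp.isTrail.edges_nodup
  have hfil : T.edgeFinset.filter (fun f => EdgeOnPath T f i j) = p.edges.toFinset := by
    ext f
    simp only [mem_filter, mem_edgeFinset, List.mem_toFinset]
    constructor
    · rintro ⟨hfe, hsep⟩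
      by_contra hfp
      exact hsep ⟨p.toDeleteEdges {f} (fun e he => by
        simp only [Set.mem_singleton_iff]
        rintro rfl; exact hfp he)⟩
    · intro hfp
      exact ⟨p.edges_subset_edgeSet hfp,
        not_reach_of_mem_edges hT.2 p hnd hfp⟩
  rw [hfil, List.toFinset_card_of_nodup hnd, SimpleGraph.Walk.length_edges]
  exact hl.symm

lemma reach_pair {T : SimpleGraph (Fin N)} (hT : T.IsTree) {e : Sym2 (Fin N)} (he : e ∈ T.edgeSet)
    {i j x y : Fin N}
    (hix : ¬ (T.deleteEdges {e}).Reachable i x)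
    (hjy : ¬ (T.deleteEdges {e}).Reachable j y)
    (hij : (T.deleteEdges {e}).Reachable i j) (f : Sym2 (Fin N)) :
    (T.deleteEdges {f}).Reachable i j ∨ (T.deleteEdges {f}).Reachable x y := by
  by_cases hfe : f = e
  · subst hfe; exact Or.inl hij
  · obtain ⟨u, v, rfl⟩ : ∃ u v, e = s(u, v) := by
      induction e using Sym2.ind with | _ a b => exact ⟨a, b, rfl⟩
    have hadj : T.Adj u v := (T.mem_edgeSet).mp he
    have dich : ∀ z, (T.deleteEdges {s(u,v)}).Reachable z u ∨
        (T.deleteEdges {s(u,v)}).Reachable z v :=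
      fun z => reach_or hT.isConnected u v z
    have hbr : ¬ (T.deleteEdges {s(u,v)}).Reachable u v := tree_bridge hT.2 hadj
    have hxy : (T.deleteEdges {s(u,v)}).Reachable x y := by
      rcases dich x with hx | hx <;> rcases dich y with hy | hy
      · exact hx.trans hy.symm
      · exfalso
        rcases dich i with hi | hi
        · exact hix (hi.trans hx.symm)
        · exact hjy ((hij.symm.trans hi).trans hy.symm)
      · exfalso
        rcases dich i with hi | hi
        · exact hjy ((hij.symm.trans hi).trans hy.symm)
        · exact hix (hi.trans hx.symm)
      · exact hx.trans hy.symm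
    obtain ⟨W1⟩ := hij
    obtain ⟨W2⟩ := hxy
    by_cases hf1 : f ∈ W1.edges
    · by_cases hf2 : f ∈ W2.edges
      · exfalso
        obtain ⟨a, b, rfl⟩ : ∃ a b, f = s(a, b) := by
          induction f using Sym2.ind with | _ a b => exact ⟨a, b, rfl⟩
        have ha1 : a ∈ W1.support := W1.fst_mem_support_of_mem_edges hf1
        have ha2 : a ∈ W2.support := W2.fst_mem_support_of_mem_edges hf2
        have r1 : (T.deleteEdges {s(u,v)}).Reachable i a := ⟨W1.takeUntil a ha1⟩
        have r2 : (T.deleteEdges {s(u,v)}).Reachable x a := ⟨W2.takeUntil a ha2⟩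
        exact hix (r1.trans r2.symm)
      · refine Or.inr ⟨W2.transfer _ (fun e' he' => ?_)⟩
        have h1 : e' ∈ (T.deleteEdges {s(u,v)}).edgeSet := W2.edges_subset_edgeSet he'
        rw [SimpleGraph.edgeSet_deleteEdges] at h1 ⊢
        refine ⟨h1.1, ?_⟩
        simp only [Set.mem_singleton_iff]
        rintro rfl; exact hf2 he'
    · refine Or.inl ⟨W1.transfer _ (fun e' he' => ?_)⟩
      have h1 : e' ∈ (T.deleteEdges {s(u,v)}).edgeSet := W1.edges_subset_edgeSet he'
      rw [SimpleGraph.edgeSet_deleteEdges] at h1 ⊢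
      refine ⟨h1.1, ?_⟩
      simp only [Set.mem_singleton_iff]
      rintro rfl; exact hf1 he'

lemma pair_ite {T : SimpleGraph (Fin N)} (hT : T.IsTree) {e : Sym2 (Fin N)} (he : e ∈ T.edgeSet)
    {i j x y : Fin N}
    (hix : EdgeOnPath T e i x) (hjy : EdgeOnPath T e j y)
    (hij : (T.deleteEdges {e}).Reachable i j) (f : Sym2 (Fin N)) :
    ((if EdgeOnPath T f i y then 1 else 0) + (if EdgeOnPath T f j x then 1 else 0) : ℕ) =
      (if EdgeOnPath T f i x then 1 else 0) + (if EdgeOnPath T f j y then 1 else 0) := by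
  rcases reach_pair hT he hix hjy hij f with hr | hr
  · have h1 : EdgeOnPath T f i y ↔ EdgeOnPath T f j y :=
      not_congr ⟨fun a => hr.symm.trans a, fun a => hr.trans a⟩
    have h2 : EdgeOnPath T f j x ↔ EdgeOnPath T f i x :=
      not_congr ⟨fun a => hr.trans a, fun a => hr.symm.trans a⟩
    rw [if_congr h1 rfl rfl, if_congr h2 rfl rfl, add_comm]
  · have h1 : EdgeOnPath T f i y ↔ EdgeOnPath T f i x :=
      not_congr ⟨fun a => a.trans hr.symm, fun a => a.trans hr⟩
    have h2 : EdgeOnPath T f j x ↔ EdgeOnPath T f j y :=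
      not_congr ⟨fun a => a.trans hr, fun a => a.trans hr.symm⟩
    rw [if_congr h1 rfl rfl, if_congr h2 rfl rfl]

noncomputable def fset {α : Type*} [Fintype α] (p : α → Prop) : Finset α :=
  Finset.univ.filter (fun k => p k)

lemma mem_fset {α : Type*} [Fintype α] {p : α → Prop} {k : α} : k ∈ fset p ↔ p k := by
  simp [fset]

lemma card_split {α : Type*} [Fintype α] (w p : α → Prop) :
    (fset (fun k => w k ∧ p k)).card + (fset (fun k => w k ∧ ¬ p k)).card = (fset w).card := by
  classical
  have h1 : fset (fun k => w k ∧ p k) = (fset w).filter p := by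
    ext k; simp [fset]
  have h2 : fset (fun k => w k ∧ ¬ p k) = (fset w).filter (fun k => ¬ p k) := by
    ext k; simp [fset]
  rw [h1, h2]
  exact Finset.card_filter_add_card_filter_not _

lemma card_fset_perm {α : Type*} [Fintype α] (σ : Equiv.Perm α) (p : α → Prop) :
    (fset (fun k => p (σ k))).card = (fset p).card := by
  refine Finset.card_bij' (fun k _ => σ k) (fun k _ => σ.symm k) ?_ ?_ ?_ ?_
  · intro a ha; rw [mem_fset] at ha ⊢; exact ha
  · intro a ha; rw [mem_fset] at ha ⊢; simpa using ha
  · intro a _; simp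
  · intro a _; simp

variable (T : SimpleGraph (Fin N)) (X : Finset (Fin N))

noncomputable def Cset (σ : Equiv.Perm {x // x ∈ X}) (f : Sym2 (Fin N)) :
    Finset {x // x ∈ X} :=
  Finset.univ.filter (fun k => EdgeOnPath T f k (σ k))

noncomputable def Sset (σ : Equiv.Perm {x // x ∈ X}) (f : Sym2 (Fin N)) (i : {x // x ∈ X}) :
    Finset {x // x ∈ X} :=
  (Cset T X σ f).filter (fun k => (T.deleteEdges {f}).Reachable k i)

noncomputable def badSet (σ : Equiv.Perm {x // x ∈ X}) : Finset (Sym2 (Fin N)) :=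
  T.edgeFinset.filter (fun f => ¬ ((Cset T X σ f).card = 0 ∨ (Cset T X σ f).card = 2))

variable {T X}

lemma mem_Cset {σ : Equiv.Perm {x // x ∈ X}} {f : Sym2 (Fin N)} {k : {x // x ∈ X}} :
    k ∈ Cset T X σ f ↔ EdgeOnPath T f k (σ k) := by
  simp [Cset]

lemma mem_Sset {σ : Equiv.Perm {x // x ∈ X}} {f : Sym2 (Fin N)} {i k : {x // x ∈ X}} :
    k ∈ Sset T X σ f i ↔
      (EdgeOnPath T f k (σ k) ∧ (T.deleteEdges {f}).Reachable k i) := by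
  rw [Sset, Finset.mem_filter, mem_Cset]

lemma mem_badSet {σ : Equiv.Perm {x // x ∈ X}} {f : Sym2 (Fin N)} :
    f ∈ badSet T X σ ↔
      f ∈ T.edgeSet ∧ ¬ ((Cset T X σ f).card = 0 ∨ (Cset T X σ f).card = 2) := by
  rw [badSet, Finset.mem_filter, mem_edgeFinset]

lemma ncard_eq (σ : Equiv.Perm {x // x ∈ X}) (e : Sym2 (Fin N)) :
    {i : {x // x ∈ X} | EdgeOnPath T e i (σ i)}.ncard = (Cset T X σ e).card := by
  have h : {i : {x // x ∈ X} | EdgeOnPath T e i (σ i)} = ↑(Cset T X σ e) := by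
    ext k; simp [Cset]
  rw [h, Set.ncard_coe_finset]

lemma tight_iff (σ : Equiv.Perm {x // x ∈ X}) :
    TightPerm T X σ ↔ badSet T X σ = ∅ := by
  constructor
  · intro ht
    rw [Finset.eq_empty_iff_forall_notMem]
    intro f hf
    rw [mem_badSet] at hf
    have h2 := ht f hf.1
    rw [ncard_eq σ f] at h2
    exact hf.2 h2
  · intro hb e he
    rw [ncard_eq σ e]
    by_contra hc
    have h2 : e ∈ badSet T X σ := mem_badSet.mpr ⟨he, hc⟩
    rw [hb] at h2
    exact absurd h2 (Finset.notMem_empty e)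

lemma two_le_Sset (hT : T.IsTree) (σ : Equiv.Perm {x // x ∈ X}) {e : Sym2 (Fin N)}
    (he : e ∈ badSet T X σ) (i : {x // x ∈ X}) :
    2 ≤ (Sset T X σ e i).card := by
  rw [mem_badSet] at he
  obtain ⟨u, v, rfl⟩ : ∃ u v, e = s(u, v) := by
    induction e using Sym2.ind with | _ a b => exact ⟨a, b, rfl⟩
  have hadj : T.Adj u v := (T.mem_edgeSet).mp he.1
  have dich : ∀ z, (T.deleteEdges {s(u,v)}).Reachable z u ∨
      (T.deleteEdges {s(u,v)}).Reachable z v :=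
    fun z => reach_or hT.isConnected u v z
  have hbr : ¬ (T.deleteEdges {s(u,v)}).Reachable u v := tree_bridge hT.2 hadj
  have hside : ∀ a b : Fin N, (T.deleteEdges {s(u,v)}).Reachable a b ↔
      ((T.deleteEdges {s(u,v)}).Reachable a u ↔ (T.deleteEdges {s(u,v)}).Reachable b u) := by
    intro a b
    constructor
    · intro h; exact ⟨fun h' => h.symm.trans h', fun h' => h.trans h'⟩
    · intro h
      rcases dich a with ha | ha <;> rcases dich b with hb | hb
      · exact ha.trans hb.symm
      · exact absurd ((h.mp ha).symm.trans hb) hbr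
      · exact absurd ((h.mpr hb).symm.trans ha) hbr
      · exact ha.trans hb.symm
  have hsep : ∀ a b : Fin N, EdgeOnPath T s(u,v) a b ↔
      ¬ ((T.deleteEdges {s(u,v)}).Reachable a u ↔ (T.deleteEdges {s(u,v)}).Reachable b u) := by
    intro a b; rw [EdgeOnPath]; exact not_congr (hside a b)
  let Q : {x // x ∈ X} → Prop := fun k => (T.deleteEdges {s(u,v)}).Reachable ↑k u
  have c1 : (fset fun k => ¬ (Q (σ k) ↔ Q i) ∧ (Q k ↔ Q i)).card +
      (fset fun k => ¬ (Q (σ k) ↔ Q i) ∧ ¬ (Q k ↔ Q i)).card =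
      (fset fun k => ¬ (Q (σ k) ↔ Q i)).card :=
    card_split (fun k => ¬ (Q (σ k) ↔ Q i)) (fun k => Q k ↔ Q i)
  have c2 : (fset fun k => ¬ (Q k ↔ Q i) ∧ (Q (σ k) ↔ Q i)).card +
      (fset fun k => ¬ (Q k ↔ Q i) ∧ ¬ (Q (σ k) ↔ Q i)).card =
      (fset fun k => ¬ (Q k ↔ Q i)).card :=
    card_split (fun k => ¬ (Q k ↔ Q i)) (fun k => Q (σ k) ↔ Q i)
  have c3 : (fset fun k => ¬ (Q k ↔ Q (σ k)) ∧ (Q k ↔ Q i)).card +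
      (fset fun k => ¬ (Q k ↔ Q (σ k)) ∧ ¬ (Q k ↔ Q i)).card =
      (fset fun k => ¬ (Q k ↔ Q (σ k))).card :=
    card_split (fun k => ¬ (Q k ↔ Q (σ k))) (fun k => Q k ↔ Q i)
  have E1 : Sset T X σ s(u,v) i = fset (fun k => ¬ (Q (σ k) ↔ Q i) ∧ (Q k ↔ Q i)) := by
    ext k
    rw [mem_Sset, mem_fset, hsep ↑k ↑(σ k), hside ↑k ↑i]
    show (¬ (Q k ↔ Q (σ k))) ∧ (Q k ↔ Q i) ↔ _
    tauto
  have E2 : (fset fun k : {x // x ∈ X} => ¬ (Q (σ k) ↔ Q i) ∧ ¬ (Q k ↔ Q i)) =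
      fset (fun k => ¬ (Q k ↔ Q i) ∧ ¬ (Q (σ k) ↔ Q i)) := by
    ext k; rw [mem_fset, mem_fset]; tauto
  have E3 : (fset fun k : {x // x ∈ X} => ¬ (Q (σ k) ↔ Q i)).card =
      (fset fun k => ¬ (Q k ↔ Q i)).card :=
    card_fset_perm σ (fun k => ¬ (Q k ↔ Q i))
  have E4 : (fset fun k : {x // x ∈ X} => ¬ (Q k ↔ Q (σ k)) ∧ (Q k ↔ Q i)) =
      fset (fun k => ¬ (Q (σ k) ↔ Q i) ∧ (Q k ↔ Q i)) := by
    ext k; rw [mem_fset, mem_fset]; tauto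
  have E5 : (fset fun k : {x // x ∈ X} => ¬ (Q k ↔ Q (σ k)) ∧ ¬ (Q k ↔ Q i)) =
      fset (fun k => ¬ (Q k ↔ Q i) ∧ (Q (σ k) ↔ Q i)) := by
    ext k; rw [mem_fset, mem_fset]; tauto
  have E6 : Cset T X σ s(u,v) = fset (fun k => ¬ (Q k ↔ Q (σ k))) := by
    ext k
    rw [mem_Cset, mem_fset, hsep ↑k ↑(σ k)]
  rw [E4, E5, ← E6, ← E1] at c3
  rw [E2, ← E1] at c1
  have hcard := he.2
  push_neg at hcard
  omega

lemma card_Cset_eq_sum (σ : Equiv.Perm {x // x ∈ X}) (f : Sym2 (Fin N)) :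
    (Cset T X σ f).card = ∑ k : {x // x ∈ X}, if EdgeOnPath T f k (σ k) then 1 else 0 :=
  Finset.card_filter _ _

lemma swap_card (hT : T.IsTree) (σ : Equiv.Perm {x // x ∈ X}) {e : Sym2 (Fin N)}
    (he : e ∈ T.edgeSet) {i j : {x // x ∈ X}} (hij : i ≠ j)
    (hsi : EdgeOnPath T e i (σ i)) (hsj : EdgeOnPath T e j (σ j))
    (hreach : (T.deleteEdges {e}).Reachable i j) (f : Sym2 (Fin N)) :
    (Cset T X (σ * Equiv.swap i j) f).card = (Cset T X σ f).card := by
  rw [card_Cset_eq_sum, card_Cset_eq_sum]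
  have hs : ({i, j} : Finset {x // x ∈ X}) ⊆ Finset.univ := Finset.subset_univ _
  rw [← Finset.sum_sdiff hs, ← Finset.sum_sdiff hs]
  congr 1
  · refine Finset.sum_congr rfl fun k hk => ?_
    rw [Finset.mem_sdiff, Finset.mem_insert, Finset.mem_singleton] at hk
    push_neg at hk
    rw [show (σ * Equiv.swap i j) k = σ k by
      rw [Equiv.Perm.mul_apply, Equiv.swap_apply_of_ne_of_ne hk.2.1 hk.2.2]]
  · rw [Finset.sum_pair hij, Finset.sum_pair hij]
    rw [show (σ * Equiv.swap i j) i = σ j by rw [Equiv.Perm.mul_apply, Equiv.swap_apply_left]]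
    rw [show (σ * Equiv.swap i j) j = σ i by rw [Equiv.Perm.mul_apply, Equiv.swap_apply_right]]
    exact pair_ite hT he hsi hsj hreach f

lemma swap_Cset (hT : T.IsTree) (σ : Equiv.Perm {x // x ∈ X}) {e : Sym2 (Fin N)}
    {i j : {x // x ∈ X}} (hij : i ≠ j)
    (hsi : EdgeOnPath T e i (σ i)) (hsj : EdgeOnPath T e j (σ j))
    (hreach : (T.deleteEdges {e}).Reachable i j) :
    Cset T X (σ * Equiv.swap i j) e = Cset T X σ e := by
  ext k
  rw [mem_Cset, mem_Cset]
  rcases eq_or_ne k i with rfl | hki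
  · rw [show (σ * Equiv.swap k j) k = σ j by rw [Equiv.Perm.mul_apply, Equiv.swap_apply_left]]
    exact iff_of_true (fun hc => hsj (hreach.symm.trans hc)) hsi
  · rcases eq_or_ne k j with rfl | hkj
    · rw [show (σ * Equiv.swap i k) k = σ i by rw [Equiv.Perm.mul_apply, Equiv.swap_apply_right]]
      exact iff_of_true (fun hc => hsi (hreach.trans hc)) hsj
    · rw [show (σ * Equiv.swap i j) k = σ k by
        rw [Equiv.Perm.mul_apply, Equiv.swap_apply_of_ne_of_ne hki hkj]]

lemma weight_fun (hT : T.IsTree) (σ : Equiv.Perm {x // x ∈ X}) :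
    ∑ k : {x // x ∈ X}, T.dist k (σ k) = ∑ f ∈ T.edgeFinset, (Cset T X σ f).card := by
  have h1 : ∀ k : {x // x ∈ X}, (T.dist k (σ k) : ℕ) =
      ∑ f ∈ T.edgeFinset, if EdgeOnPath T f k (σ k) then 1 else 0 := fun k => by
    rw [dist_eq_card hT, Finset.card_filter]
  rw [Finset.sum_congr rfl (fun k _ => h1 k), Finset.sum_comm]
  exact Finset.sum_congr rfl fun f _ => (card_Cset_eq_sum σ f).symm

variable (T X)

noncomputable def encE : Sym2 (Fin N) ≃ Fin (Fintype.card (Sym2 (Fin N))) :=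
  Fintype.equivFin _

noncomputable def eFun (σ : Equiv.Perm {x // x ∈ X}) (h : (badSet T X σ).Nonempty) :
    Sym2 (Fin N) :=
  encE.symm (((badSet T X σ).image encE).min' (h.image _))

lemma eFun_mem (σ : Equiv.Perm {x // x ∈ X}) (h : (badSet T X σ).Nonempty) :
    eFun T X σ h ∈ badSet T X σ := by
  have h1 := Finset.min'_mem ((badSet T X σ).image encE) (h.image _)
  rw [Finset.mem_image] at h1
  obtain ⟨a, ha, hae⟩ := h1
  rw [eFun, ← hae, Equiv.symm_apply_apply]
  exact ha

variable {T X}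

lemma Cset_ne (σ : Equiv.Perm {x // x ∈ X}) {f : Sym2 (Fin N)} (hf : f ∈ badSet T X σ) :
    (Cset T X σ f).Nonempty := by
  rw [mem_badSet] at hf
  push_neg at hf
  rw [← Finset.card_pos]
  have := hf.2.1
  omega

variable (T X)

noncomputable def iFun (σ : Equiv.Perm {x // x ∈ X}) (h : (badSet T X σ).Nonempty) :
    {x // x ∈ X} :=
  (Cset T X σ (eFun T X σ h)).min' (Cset_ne σ (eFun_mem T X σ h))

noncomputable def jFun (hT : T.IsTree) (σ : Equiv.Perm {x // x ∈ X})
    (h : (badSet T X σ).Nonempty) : {x // x ∈ X} :=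
  ((Sset T X σ (eFun T X σ h) (iFun T X σ h)).erase (iFun T X σ h)).min' (by
    have h2 := two_le_Sset hT σ (eFun_mem T X σ h) (iFun T X σ h)
    have h3 := Finset.pred_card_le_card_erase
      (s := Sset T X σ (eFun T X σ h) (iFun T X σ h)) (a := iFun T X σ h)
    rw [← Finset.card_pos]
    omega)

noncomputable def gmap (hT : T.IsTree) (σ : Equiv.Perm {x // x ∈ X}) :
    Equiv.Perm {x // x ∈ X} :=
  if h : (badSet T X σ).Nonempty then σ * Equiv.swap (iFun T X σ h) (jFun T X hT σ h) else σ

variable {T X}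

lemma min'_congr {α : Type*} [LinearOrder α] {s t : Finset α} (h : s = t)
    (hs : s.Nonempty) (ht : t.Nonempty) : s.min' hs = t.min' ht := by subst h; rfl

-- basic facts in the presence of h
section facts
variable (hT : T.IsTree) (σ : Equiv.Perm {x // x ∈ X}) (h : (badSet T X σ).Nonempty)
include hT h

omit hT in
lemma iFun_mem : iFun T X σ h ∈ Cset T X σ (eFun T X σ h) := Finset.min'_mem _ _

lemma jFun_mem : jFun T X hT σ h ∈
    (Sset T X σ (eFun T X σ h) (iFun T X σ h)).erase (iFun T X σ h) := Finset.min'_mem _ _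

lemma ij_ne : iFun T X σ h ≠ jFun T X hT σ h :=
  fun hc => (Finset.mem_erase.mp (jFun_mem hT σ h)).1 hc.symm

lemma eFun_edge : eFun T X σ h ∈ T.edgeSet := (mem_badSet.mp (eFun_mem T X σ h)).1

lemma hsi : EdgeOnPath T (eFun T X σ h) (iFun T X σ h) (σ (iFun T X σ h)) :=
  mem_Cset.mp (iFun_mem σ h)

lemma jFun_Sset : jFun T X hT σ h ∈ Sset T X σ (eFun T X σ h) (iFun T X σ h) :=
  Finset.mem_of_mem_erase (jFun_mem hT σ h)

lemma hsj : EdgeOnPath T (eFun T X σ h) (jFun T X hT σ h) (σ (jFun T X hT σ h)) :=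
  (mem_Sset.mp (jFun_Sset hT σ h)).1

lemma hreach : (T.deleteEdges {eFun T X σ h}).Reachable
    (iFun T X σ h) (jFun T X hT σ h) :=
  ((mem_Sset.mp (jFun_Sset hT σ h)).2).symm

lemma gmap_eq : gmap T X hT σ = σ * Equiv.swap (iFun T X σ h) (jFun T X hT σ h) :=
  dif_pos h

lemma gmap_card (f : Sym2 (Fin N)) :
    (Cset T X (gmap T X hT σ) f).card = (Cset T X σ f).card := by
  rw [gmap_eq hT σ h]
  exact swap_card hT σ (eFun_edge hT σ h) (ij_ne hT σ h) (hsi hT σ h) (hsj hT σ h)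
    (hreach hT σ h) f

lemma gmap_bad : badSet T X (gmap T X hT σ) = badSet T X σ := by
  ext f
  rw [mem_badSet, mem_badSet, gmap_card hT σ h f]

lemma gmap_nonempty : (badSet T X (gmap T X hT σ)).Nonempty := by
  rw [gmap_bad hT σ h]; exact h

lemma gmap_Cset_e : Cset T X (gmap T X hT σ) (eFun T X σ h) = Cset T X σ (eFun T X σ h) := by
  rw [gmap_eq hT σ h]
  exact swap_Cset hT σ (ij_ne hT σ h) (hsi hT σ h) (hsj hT σ h) (hreach hT σ h)

lemma gmap_eFun (h' : (badSet T X (gmap T X hT σ)).Nonempty) :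
    eFun T X (gmap T X hT σ) h' = eFun T X σ h := by
  rw [eFun, eFun]
  exact congrArg _ (min'_congr (by rw [gmap_bad hT σ h]) _ _)

lemma gmap_iFun (h' : (badSet T X (gmap T X hT σ)).Nonempty) :
    iFun T X (gmap T X hT σ) h' = iFun T X σ h := by
  rw [iFun, iFun]
  refine min'_congr ?_ _ _
  rw [gmap_eFun hT σ h h']
  exact gmap_Cset_e hT σ h

lemma gmap_Sset : Sset T X (gmap T X hT σ) (eFun T X σ h) (iFun T X σ h) =
    Sset T X σ (eFun T X σ h) (iFun T X σ h) := by
  rw [Sset, Sset, gmap_Cset_e hT σ h]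

lemma gmap_jFun (h' : (badSet T X (gmap T X hT σ)).Nonempty) :
    jFun T X hT (gmap T X hT σ) h' = jFun T X hT σ h := by
  rw [jFun, jFun]
  refine min'_congr ?_ _ _
  rw [gmap_eFun hT σ h h', gmap_iFun hT σ h h', gmap_Sset hT σ h]

lemma gmap_invol : gmap T X hT (gmap T X hT σ) = σ := by
  rw [gmap_eq hT _ (gmap_nonempty hT σ h), gmap_iFun hT σ h, gmap_jFun hT σ h,
    gmap_eq hT σ h, mul_assoc, Equiv.swap_mul_self, mul_one]

lemma gmap_ne : gmap T X hT σ ≠ σ := by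
  rw [gmap_eq hT σ h]
  intro hc
  have h2 := congrArg (fun τ : Equiv.Perm {x // x ∈ X} => τ (iFun T X σ h)) hc
  simp only [Equiv.Perm.mul_apply, Equiv.swap_apply_left] at h2
  exact ij_ne hT σ h (σ.injective h2).symm

lemma gmap_sign : Equiv.Perm.sign (gmap T X hT σ) = - Equiv.Perm.sign σ := by
  rw [gmap_eq hT σ h, Equiv.Perm.sign_mul, Equiv.Perm.sign_swap (ij_ne hT σ h), mul_neg_one]

lemma gmap_weight : ∑ k : {x // x ∈ X}, T.dist k ((gmap T X hT σ) k) =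
    ∑ k : {x // x ∈ X}, T.dist k (σ k) := by
  rw [weight_fun hT, weight_fun hT]
  exact Finset.sum_congr rfl fun f _ => gmap_card hT σ h f

lemma gmap_nontight : ¬ TightPerm T X (gmap T X hT σ) := by
  rw [tight_iff]
  exact (gmap_nonempty hT σ h).ne_empty

end facts

lemma bad_nonempty_of_nontight {σ : Equiv.Perm {x // x ∈ X}} (hσ : ¬ TightPerm T X σ) :
    (badSet T X σ).Nonempty := by
  rw [Finset.nonempty_iff_ne_empty]
  intro hc
  exact hσ ((tight_iff σ).mpr hc)

lemma sum_nontight (hT : T.IsTree) (t : ℝ) :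
    ∑ σ ∈ Finset.univ.filter (fun σ => ¬ TightPerm T X σ),
      ((Equiv.Perm.sign σ : ℤ) : ℝ) * t ^ (∑ i : {x // x ∈ X}, T.dist i (σ i)) = 0 := by
  refine Finset.sum_involution (fun σ _ => gmap T X hT σ) ?_ ?_ ?_ ?_
  · intro σ hσ
    have h := bad_nonempty_of_nontight (Finset.mem_filter.mp hσ).2
    beta_reduce
    rw [gmap_weight hT σ h]
    have hs : ((Equiv.Perm.sign (gmap T X hT σ) : ℤ) : ℝ) =
        - ((Equiv.Perm.sign σ : ℤ) : ℝ) := by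
      rw [gmap_sign hT σ h]
      push_cast
      ring
    rw [hs]
    ring
  · intro σ hσ _
    have h := bad_nonempty_of_nontight (Finset.mem_filter.mp hσ).2
    exact gmap_ne hT σ h
  · intro σ hσ
    have h := bad_nonempty_of_nontight (Finset.mem_filter.mp hσ).2
    rw [Finset.mem_filter]
    exact ⟨Finset.mem_univ _, gmap_nontight hT σ h⟩
  · intro σ hσ
    have h := bad_nonempty_of_nontight (Finset.mem_filter.mp hσ).2
    exact gmap_invol hT σ h

end TightAux

/-- **Determinant via tight permutations**: the determinant of the principal
minor `A(t)[X]` of the tree-distance matrix is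
`∑_σ sign σ · t^{∑_{i∈X} d i (σ i)}`, summing over tight permutations `σ`
of `X` only. -/
theorem det_eq_sum_tight_permutations (N : ℕ) (T : SimpleGraph (Fin N)) (hT : T.IsTree)
    (X : Finset (Fin N)) (t : ℝ) :
    (Matrix.of fun i j : {x // x ∈ X} => t ^ T.dist i j).det =
      ∑ σ ∈ Finset.univ.filter (fun σ => TightPerm T X σ),
        ((Equiv.Perm.sign σ : ℤ) : ℝ) * t ^ (∑ i : {x // x ∈ X}, T.dist i (σ i)) := by
  classical
  rw [Matrix.det_apply']
  have h1 : ∀ σ : Equiv.Perm {x // x ∈ X},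
      (∏ i : {x // x ∈ X}, (Matrix.of fun i j : {x // x ∈ X} => t ^ T.dist i j) (σ i) i) =
        t ^ (∑ i : {x // x ∈ X}, T.dist i (σ i)) := by
    intro σ
    rw [← Finset.prod_pow_eq_pow_sum]
    refine Finset.prod_congr rfl fun k _ => ?_
    rw [Matrix.of_apply, SimpleGraph.dist_comm]
  have h2 : (∑ σ : Equiv.Perm {x // x ∈ X},
      ((Equiv.Perm.sign σ : ℤ) : ℝ) *
        ∏ i : {x // x ∈ X}, (Matrix.of fun i j : {x // x ∈ X} => t ^ T.dist i j) (σ i) i) =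
      ∑ σ : Equiv.Perm {x // x ∈ X},
        ((Equiv.Perm.sign σ : ℤ) : ℝ) * t ^ (∑ i : {x // x ∈ X}, T.dist i (σ i)) :=
    Finset.sum_congr rfl fun σ _ => by rw [h1 σ]
  rw [h2, ← Finset.sum_filter_add_sum_filter_not Finset.univ (fun σ => TightPerm T X σ),
    TightAux.sum_nontight hT t, add_zero]
end

section
/- Let F = (V_F, E_F) be a finite star with center vertex v (i.e., F is a tree in which every edge is incident to v), and suppose F is spanned by X ⊆ V_F. Then ⟨Π_{F,X}⟩ = (−1)^{|X|+1} if v ∈ X, and ⟨Π_{F,X}⟩ = (−1)^{|X|+1} · (deg_F(v) − 1) if v ∉ X. -/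
open scoped Classical

/-- `Π_{F,X}` for a graph `F`: permutations `σ` of `X` such that
(a) every orbit of `σ` stays in one connected component of `F`, and
(b) every edge of `F` lies on the path from `i` to `σ i` for exactly two
elements `i ∈ X`. -/
def PiFX {V : Type*} (F : SimpleGraph V) (X : Finset V)
    (σ : Equiv.Perm {x // x ∈ X}) : Prop :=
  (∀ i : {x // x ∈ X}, F.Reachable i (σ i)) ∧
  ∀ e ∈ F.edgeSet, {i : {x // x ∈ X} | EdgeOnPath F e i (σ i)}.ncard = 2

/-- `⟨Π_{F,X}⟩`, the signed count of the permutations in `Π_{F,X}`. -/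
noncomputable def piFXSum {V : Type*} [Fintype V] (F : SimpleGraph V) (X : Finset V) : ℤ :=
  ∑ σ ∈ Finset.univ.filter (fun σ => PiFX F X σ), (Equiv.Perm.sign σ : ℤ)

/-! ### Auxiliary algebra lemmas: signed sums of permutations with restricted fixed points -/

lemma sum_sign_fixing {α : Type*} [DecidableEq α] [Fintype α] (T : Finset α) :
    ∑ σ ∈ Finset.univ.filter (fun σ : Equiv.Perm α => ∀ a, ¬ (a ∉ T) → σ a = a),
      (Equiv.Perm.sign σ : ℤ) = if Fintype.card α ≤ T.card + 1 then 1 else 0 := by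
  classical
  split_ifs with h
  · have hfil : Finset.univ.filter (fun σ : Equiv.Perm α => ∀ a, ¬ (a ∉ T) → σ a = a)
        = {1} := by
      have hcc : Tᶜ.card ≤ 1 := by
        rw [Finset.card_compl]
        have := Finset.card_le_card (Finset.subset_univ T)
        simp only [Finset.card_univ] at this
        omega
      ext σ
      simp only [Finset.mem_filter, Finset.mem_univ, true_and, Finset.mem_singleton]
      constructor
      · intro hfix
        ext a
        simp only [Equiv.Perm.one_apply]
        by_cases ha : a ∈ T
        · exact hfix a (by simpa using ha)
        · have hσa : σ a ∉ T := by
            intro hmem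
            have h1 : σ (σ a) = σ a := hfix (σ a) (by simpa using hmem)
            have h2 : a = σ a := σ.injective h1.symm
            exact ha (h2 ▸ hmem)
          exact (Finset.card_le_one.mp hcc (σ a) (Finset.mem_compl.mpr hσa)
            a (Finset.mem_compl.mpr ha))
      · rintro rfl; intro a _; rfl
    rw [hfil]; simp
  · push_neg at h
    have h2 : 1 < Tᶜ.card := by
      rw [Finset.card_compl]
      have := Finset.card_le_card (Finset.subset_univ T)
      simp only [Finset.card_univ] at this
      omega
    obtain ⟨a, ha, b, hb, hab⟩ := Finset.one_lt_card.mp h2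
    have haT : a ∉ T := Finset.mem_compl.mp ha
    have hbT : b ∉ T := Finset.mem_compl.mp hb
    refine Finset.sum_involution (fun σ _ => Equiv.swap a b * σ) ?_ ?_ ?_ ?_
    · intro σ _
      have : Equiv.Perm.sign (Equiv.swap a b * σ) = - Equiv.Perm.sign σ := by
        rw [Equiv.Perm.sign_mul, Equiv.Perm.sign_swap hab, neg_one_mul]
      rw [this]; push_cast; ring
    · intro σ _ _ hEq
      have hEq' : Equiv.swap a b * σ = 1 * σ := by simpa using hEq
      exact hab (Equiv.swap_eq_one_iff.mp (mul_right_cancel hEq'))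
    · intro σ hσ
      simp only [Finset.mem_filter, Finset.mem_univ, true_and] at hσ ⊢
      intro i hi
      have hiT : i ∈ T := by simpa using hi
      have h1 : σ i = i := hσ i hi
      have h2 : Equiv.swap a b i = i :=
        Equiv.swap_apply_of_ne_of_ne (fun h => haT (h ▸ hiT)) (fun h => hbT (h ▸ hiT))
      simp [Equiv.Perm.mul_apply, h1, h2]
    · intro σ _
      show Equiv.swap a b * (Equiv.swap a b * σ) = σ
      rw [← mul_assoc, Equiv.swap_mul_self, one_mul]

lemma sum_sign_fix_subset {α : Type*} [DecidableEq α] [Fintype α] (K : Finset α) :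
    ∑ σ ∈ Finset.univ.filter (fun σ : Equiv.Perm α => ∀ i ∉ K, σ i ≠ i),
      (Equiv.Perm.sign σ : ℤ) =
    ∑ T ∈ Kᶜ.powerset, (-1 : ℤ) ^ T.card *
      (if Fintype.card α ≤ T.card + 1 then 1 else 0) := by
  classical
  have step1 : ∑ σ ∈ Finset.univ.filter (fun σ : Equiv.Perm α => ∀ i ∉ K, σ i ≠ i),
      (Equiv.Perm.sign σ : ℤ)
      = ∑ σ : Equiv.Perm α, (Equiv.Perm.sign σ : ℤ) *
          ∏ i ∈ Kᶜ, ((-(if σ i = i then (1:ℤ) else 0)) + 1) := by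
    rw [Finset.sum_filter]
    refine Finset.sum_congr rfl (fun σ _ => ?_)
    by_cases h : ∀ i ∉ K, σ i ≠ i
    · rw [if_pos h]
      have : ∀ i ∈ Kᶜ, ((-(if σ i = i then (1:ℤ) else 0)) + 1) = 1 := by
        intro i hi
        rw [if_neg (h i (Finset.mem_compl.mp hi))]; ring
      rw [Finset.prod_congr rfl this]; simp
    · rw [if_neg h]
      push_neg at h
      obtain ⟨i, hiK, hfix⟩ := h
      rw [Finset.prod_eq_zero (Finset.mem_compl.mpr hiK) (by rw [if_pos hfix]; ring)]
      ring
  rw [step1]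
  have step2 : ∀ σ : Equiv.Perm α,
      ∏ i ∈ Kᶜ, ((-(if σ i = i then (1:ℤ) else 0)) + 1)
      = ∑ T ∈ Kᶜ.powerset, (-1:ℤ)^T.card * ∏ i ∈ T, (if σ i = i then (1:ℤ) else 0) := by
    intro σ
    rw [Finset.prod_add]
    refine Finset.sum_congr rfl (fun T hT => ?_)
    rw [Finset.prod_const_one, mul_one]
    have : ∀ i ∈ T, -(if σ i = i then (1:ℤ) else 0) = (-1) * (if σ i = i then (1:ℤ) else 0) :=
      fun i _ => by ring
    rw [Finset.prod_congr rfl this, Finset.prod_mul_distrib, Finset.prod_const]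
  simp_rw [step2, Finset.mul_sum]
  rw [Finset.sum_comm]
  refine Finset.sum_congr rfl (fun T hT => ?_)
  have inner : ∑ σ : Equiv.Perm α, (Equiv.Perm.sign σ : ℤ) *
      ((-1:ℤ)^T.card * ∏ i ∈ T, (if σ i = i then (1:ℤ) else 0))
      = (-1:ℤ)^T.card * ∑ σ ∈ Finset.univ.filter
          (fun σ : Equiv.Perm α => ∀ a, ¬ (a ∉ T) → σ a = a), (Equiv.Perm.sign σ : ℤ) := by
    rw [Finset.sum_filter, Finset.mul_sum]
    refine Finset.sum_congr rfl (fun σ _ => ?_)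
    by_cases h : ∀ a, ¬ (a ∉ T) → σ a = a
    · rw [if_pos h, Finset.prod_congr rfl (fun i hi => if_pos (h i (by simp [hi])))]
      simp; ring
    · rw [if_neg h]
      push_neg at h
      obtain ⟨i, hi, hfix⟩ := h
      have hz : ∏ i ∈ T, (if σ i = i then (1:ℤ) else 0) = 0 :=
        Finset.prod_eq_zero hi (if_neg hfix)
      rw [hz]; ring
  rw [inner, sum_sign_fixing T]

lemma sum_sign_derangements {α : Type*} [DecidableEq α] [Fintype α] :
    ∑ σ ∈ Finset.univ.filter (fun σ : Equiv.Perm α => ∀ i, σ i ≠ i),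
      (Equiv.Perm.sign σ : ℤ)
      = (-1) ^ (Fintype.card α + 1) * ((Fintype.card α : ℤ) - 1) := by
  classical
  have hfil : Finset.univ.filter (fun σ : Equiv.Perm α => ∀ i, σ i ≠ i)
      = Finset.univ.filter (fun σ : Equiv.Perm α => ∀ i ∉ (∅ : Finset α), σ i ≠ i) :=
    Finset.filter_congr (fun σ _ => by simp)
  rw [hfil, sum_sign_fix_subset, Finset.compl_empty,
    Finset.sum_powerset_apply_card
      (fun m => (-1:ℤ)^m * (if Fintype.card α ≤ m + 1 then 1 else 0)),
    Finset.card_univ]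
  rcases Nat.eq_zero_or_pos (Fintype.card α) with h0 | hpos
  · rw [h0]; simp
  · obtain ⟨k, hk⟩ : ∃ k, Fintype.card α = k + 1 := ⟨Fintype.card α - 1, by omega⟩
    rw [hk]
    rw [Finset.sum_range_succ, Finset.sum_range_succ]
    rw [Finset.sum_eq_zero (fun m hm => by
      rw [Finset.mem_range] at hm
      rw [if_neg (by omega)]
      simp)]
    rw [if_pos (by omega), if_pos (by omega), Nat.choose_succ_self_right, Nat.choose_self]
    push_cast [nsmul_eq_mul]
    ring

lemma sum_sign_fix_single {α : Type*} [DecidableEq α] [Fintype α] (v : α) :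
    ∑ σ ∈ Finset.univ.filter (fun σ : Equiv.Perm α => ∀ i, i ≠ v → σ i ≠ i),
      (Equiv.Perm.sign σ : ℤ) = (-1) ^ (Fintype.card α + 1) := by
  classical
  have hfil : Finset.univ.filter (fun σ : Equiv.Perm α => ∀ i, i ≠ v → σ i ≠ i)
      = Finset.univ.filter (fun σ : Equiv.Perm α => ∀ i ∉ ({v} : Finset α), σ i ≠ i) :=
    Finset.filter_congr (fun σ _ => by simp)
  rw [hfil, sum_sign_fix_subset,
    Finset.sum_powerset_apply_card
      (fun m => (-1:ℤ)^m * (if Fintype.card α ≤ m + 1 then 1 else 0))]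
  have hpos : 0 < Fintype.card α := Fintype.card_pos_iff.mpr ⟨v⟩
  obtain ⟨k, hk⟩ : ∃ k, Fintype.card α = k + 1 := ⟨Fintype.card α - 1, by omega⟩
  have hcc : ({v} : Finset α)ᶜ.card = k := by
    rw [Finset.card_compl, Finset.card_singleton, hk]; omega
  rw [hcc, hk, Finset.sum_range_succ]
  rw [Finset.sum_eq_zero (fun m hm => by
    rw [Finset.mem_range] at hm
    rw [if_neg (by omega)]
    simp)]
  rw [if_pos (by omega), Nat.choose_self]
  push_cast [nsmul_eq_mul]
  ring

/-! ### Auxiliary graph lemmas for stars -/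

section StarLemmas

variable {V : Type*} {F : SimpleGraph V} {v : V}

lemma star_adj (hF : F.IsTree) (hstar : ∀ a b : V, F.Adj a b → a = v ∨ b = v)
    {u : V} (hu : u ≠ v) : F.Adj u v := by
  obtain ⟨p⟩ := hF.isConnected.preconnected u v
  cases p with
  | nil => exact absurd rfl hu
  | cons h q =>
    rcases hstar _ _ h with h1 | h2
    · exact absurd h1 hu
    · exact h2 ▸ h

lemma star_nbhd (hF : F.IsTree) (hstar : ∀ a b : V, F.Adj a b → a = v ∨ b = v)
    {u : V} (hu : u ≠ v) : F.neighborSet u = {v} := by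
  ext w
  simp only [SimpleGraph.mem_neighborSet, Set.mem_singleton_iff]
  constructor
  · intro h
    rcases hstar u w h with h1 | h2
    · exact absurd h1 hu
    · exact h2
  · rintro rfl
    exact star_adj hF hstar hu

lemma star_edge (hstar : ∀ a b : V, F.Adj a b → a = v ∨ b = v)
    {e : Sym2 V} (he : e ∈ F.edgeSet) : ∃ l, F.Adj v l ∧ e = s(v, l) := by
  induction e with
  | _ a b =>
    rw [SimpleGraph.mem_edgeSet] at he
    rcases hstar a b he with rfl | rfl
    · exact ⟨b, he, rfl⟩
    · exact ⟨a, he.symm, Sym2.eq_swap⟩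

lemma star_del_reach (hF : F.IsTree) (hstar : ∀ a b : V, F.Adj a b → a = v ∨ b = v)
    {l : V} (hl : F.Adj v l) {i : V} (hi : i ≠ l) :
    (F.deleteEdges {s(v, l)}).Reachable i v := by
  by_cases hiv : i = v
  · exact hiv ▸ SimpleGraph.Reachable.refl i
  · have hadj : F.Adj i v := star_adj hF hstar hiv
    have hne : s(i, v) ∉ ({s(v, l)} : Set (Sym2 V)) := by
      simp only [Set.mem_singleton_iff, Sym2.eq_iff]
      push_neg
      constructor
      · intro h1; exact absurd h1 hiv
      · intro h1; exact absurd h1 hi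
    exact (SimpleGraph.deleteEdges_adj.mpr ⟨hadj, hne⟩).reachable

lemma star_del_not_reach (hstar : ∀ a b : V, F.Adj a b → a = v ∨ b = v)
    {l : V} (hl : F.Adj v l) {j : V} (hj : j ≠ l) :
    ¬ (F.deleteEdges {s(v, l)}).Reachable l j := by
  intro hR
  obtain ⟨p⟩ := hR
  cases p with
  | nil => exact hj rfl
  | cons h q =>
    rw [SimpleGraph.deleteEdges_adj] at h
    obtain ⟨hadj, hne⟩ := h
    rcases hstar _ _ hadj with h1 | h2
    · exact hl.ne' h1
    · subst h2
      exact hne (by rw [Sym2.eq_swap]; rfl)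

lemma star_edgeOnPath_iff (hF : F.IsTree) (hstar : ∀ a b : V, F.Adj a b → a = v ∨ b = v)
    {l : V} (hl : F.Adj v l) (a b : V) :
    EdgeOnPath F s(v, l) a b ↔ ((a = l ∧ b ≠ l) ∨ (a ≠ l ∧ b = l)) := by
  unfold EdgeOnPath
  constructor
  · intro h
    by_cases ha : a = l
    · by_cases hb : b = l
      · subst ha; subst hb
        exact absurd (SimpleGraph.Reachable.refl _) h
      · exact Or.inl ⟨ha, hb⟩
    · by_cases hb : b = l
      · exact Or.inr ⟨ha, hb⟩
      · exact absurd ((star_del_reach hF hstar hl ha).trans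
          (star_del_reach hF hstar hl hb).symm) h
  · rintro (⟨rfl, hb⟩ | ⟨ha, rfl⟩)
    · exact star_del_not_reach hstar hl hb
    · exact fun hR => star_del_not_reach hstar hl ha hR.symm

end StarLemmas

lemma piFX_iff {V : Type*} (F : SimpleGraph V) (hF : F.IsTree)
    (v : V) (hstar : ∀ a b : V, F.Adj a b → a = v ∨ b = v)
    (X : Finset V) (hX : ∀ u : V, (F.neighborSet u).ncard ≤ 1 → u ∈ X)
    (σ : Equiv.Perm {x // x ∈ X}) :
    PiFX F X σ ↔ ∀ i : {x // x ∈ X}, (i : V) ≠ v → σ i ≠ i := by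
  constructor
  · rintro ⟨_, hb⟩ i hiv hfix
    have hl : F.Adj v (i : V) := (star_adj hF hstar hiv).symm
    have he : s(v, (i : V)) ∈ F.edgeSet := hl
    have hcount := hb _ he
    have hempty : {j : {x // x ∈ X} | EdgeOnPath F s(v, (i : V)) j (σ j)} = ∅ := by
      ext j
      simp only [Set.mem_setOf_eq, Set.mem_empty_iff_false, iff_false]
      rw [star_edgeOnPath_iff hF hstar hl]
      rintro (⟨hj1, hj2⟩ | ⟨hj1, hj2⟩)
      · have : j = i := Subtype.ext hj1
        subst this
        exact hj2 (congrArg Subtype.val hfix ▸ hj1)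
      · have h1 : σ j = i := Subtype.ext hj2
        have h2 : j = i := by
          have := hfix ▸ h1
          exact σ.injective (h1.trans hfix.symm)
        exact hj1 (congrArg Subtype.val h2)
    rw [hempty] at hcount
    simp at hcount
  · intro h
    refine ⟨fun i => hF.isConnected.preconnected _ _, fun e he => ?_⟩
    obtain ⟨l, hl, rfl⟩ := star_edge hstar he
    have hlX : l ∈ X := by
      apply hX
      rw [star_nbhd hF hstar hl.ne']
      simp
    set lt : {x // x ∈ X} := ⟨l, hlX⟩ with hlt
    have hσl : σ lt ≠ lt := h lt hl.ne'
    have hinv : σ⁻¹ lt ≠ lt := fun hc => hσl (by simpa using (congrArg σ hc).symm)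
    have hset : {j : {x // x ∈ X} | EdgeOnPath F s(v, l) j (σ j)} = {lt, σ⁻¹ lt} := by
      ext j
      rw [Set.mem_setOf_eq, star_edgeOnPath_iff hF hstar hl]
      simp only [Set.mem_insert_iff, Set.mem_singleton_iff]
      constructor
      · rintro (⟨h1, h2⟩ | ⟨h1, h2⟩)
        · exact Or.inl (Subtype.ext h1)
        · refine Or.inr ?_
          have : σ j = lt := Subtype.ext h2
          rw [← this]; simp
      · rintro (rfl | rfl)
        · exact Or.inl ⟨rfl, fun hc => hσl (Subtype.ext hc)⟩
        · refine Or.inr ⟨fun hc => hinv (Subtype.ext hc), ?_⟩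
          show ((σ (σ⁻¹ lt) : {x // x ∈ X}) : V) = l
          rw [Equiv.Perm.coe_inv, Equiv.apply_symm_apply]
    rw [hset]
    exact Set.ncard_pair (fun hc => hinv hc.symm)

/-- **The star case**: if `F` is a finite star with center `v` (a tree all of
whose edges are incident to `v`) spanned by `X`, then
`⟨Π_{F,X}⟩ = (−1)^{|X|+1}` if `v ∈ X`, and
`⟨Π_{F,X}⟩ = (−1)^{|X|+1} (deg_F v − 1)` if `v ∉ X`. -/
theorem piFXSum_star (V : Type*) [Fintype V] (F : SimpleGraph V) (hF : F.IsTree)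
    (v : V) (hstar : ∀ a b : V, F.Adj a b → a = v ∨ b = v)
    (X : Finset V) (hX : ∀ u : V, (F.neighborSet u).ncard ≤ 1 → u ∈ X) :
    (v ∈ X → piFXSum F X = (-1 : ℤ) ^ (X.card + 1)) ∧
    (v ∉ X → piFXSum F X =
      (-1 : ℤ) ^ (X.card + 1) * (((F.neighborSet v).ncard : ℤ) - 1)) := by
  constructor
  · intro hv
    have hfil : Finset.univ.filter (fun σ => PiFX F X σ)
        = Finset.univ.filter
            (fun σ : Equiv.Perm {x // x ∈ X} => ∀ i, i ≠ (⟨v, hv⟩ : {x // x ∈ X}) → σ i ≠ i) := by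
      refine Finset.filter_congr (fun σ _ => ?_)
      rw [piFX_iff F hF v hstar X hX σ]
      constructor
      · intro h i hi
        exact h i (fun hc => hi (Subtype.ext hc))
      · intro h i hi
        exact h i (fun hc => hi (congrArg Subtype.val hc))
    rw [piFXSum, hfil, sum_sign_fix_single (⟨v, hv⟩ : {x // x ∈ X}), Fintype.card_coe]
  · intro hv
    have hXset : (X : Set V) = {u | u ≠ v} := by
      ext u
      simp only [Finset.coe_mem, Set.mem_setOf_eq, Finset.mem_coe]
      constructor
      · rintro hu rfl; exact hv hu
      · intro hu
        apply hX
        rw [star_nbhd hF hstar hu]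
        simp
    have hnb : F.neighborSet v = (X : Set V) := by
      rw [hXset]
      ext u
      simp only [SimpleGraph.mem_neighborSet, Set.mem_setOf_eq]
      constructor
      · intro h; exact h.ne'
      · intro h; exact (star_adj hF hstar h).symm
    have hcard : (F.neighborSet v).ncard = X.card := by
      rw [hnb, Set.ncard_coe_finset]
    have hfil : Finset.univ.filter (fun σ => PiFX F X σ)
        = Finset.univ.filter
            (fun σ : Equiv.Perm {x // x ∈ X} => ∀ i, σ i ≠ i) := by
      refine Finset.filter_congr (fun σ _ => ?_)
      rw [piFX_iff F hF v hstar X hX σ]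
      constructor
      · intro h i
        refine h i (fun hc => hv ?_)
        rw [← hc]
        exact i.2
      · intro h i _
        exact h i
    rw [piFXSum, hfil, sum_sign_derangements, Fintype.card_coe, hcard]
end
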